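/- arXiv:2506.20797 — 7 statements merged into one kernel-verified Lean document; each statement's English description precedes it below -/
import Mathlib

section
/- Let μ be an S-valued measure on the countable atomless Boolean algebra 𝔹 satisfying the 4 elements property (4EP). Then μ is ultrahomogeneous: every partial μ-isomorphism defined on a finite Boolean subalgebra of 𝔹 extends to a μ-automorphism of 𝔹. -/
variable {B : Type*} [BooleanAlgebra B] {S : Type*} [AddCommMonoid S]

/-- An `S`-valued finitely additive measure on the Boolean algebra `B`. -/
def IsBAMeasure (μ : B → S) : Prop :=
  μ ⊥ = 0 ∧ ∀ a b : B, Disjoint a b → μ (a ⊔ b) = μ a + μ b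

/-- An element is proper if it differs from `⊥` and `⊤`. -/
def IsProperElem (a : B) : Prop := a ≠ ⊥ ∧ a ≠ ⊤

/-- `{a, b, c}` is a partition of `B` into three nonzero pairwise disjoint pieces. -/
def IsPartition3 (a b c : B) : Prop :=
  a ≠ ⊥ ∧ b ≠ ⊥ ∧ c ≠ ⊥ ∧ Disjoint a b ∧ Disjoint a c ∧ Disjoint b c ∧ a ⊔ b ⊔ c = ⊤

/-- A Boolean automorphism `φ` preserves the measure `μ`. -/
def PreservesMeas (μ : B → S) (φ : B ≃o B) : Prop := ∀ x : B, μ (φ x) = μ x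

/-- `μ` is homogeneous: every partial `μ`-isomorphism on a 4-element subalgebra
(equivalently, determined by proper `a ↦ b` with `μ a = μ b`, `μ aᶜ = μ bᶜ`)
extends to a `μ`-automorphism. -/
def MeasHomogeneous (μ : B → S) : Prop :=
  ∀ a b : B, IsProperElem a → IsProperElem b → μ a = μ b → μ aᶜ = μ bᶜ →
    ∃ φ : B ≃o B, PreservesMeas μ φ ∧ φ a = b

/-- The 4 elements property (4EP). -/
def MeasHas4EP (μ : B → S) : Prop :=
  ∀ a b c d : B, IsPartition3 a b c → μ a + μ b = μ d → μ c = μ dᶜ →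
    ∃ p q : B, IsProperElem p ∧ IsProperElem q ∧ Disjoint p q ∧
      μ p = μ a ∧ μ q = μ b ∧ p ⊔ q = d

/-- The trinary spectrum of a measure. -/
def TrinarySpectrum (μ : B → S) : Set (S × S × S) :=
  {t | ∃ a b c : B, IsPartition3 a b c ∧ t = (μ a, μ b, μ c)}

/-- `A` is a Boolean subalgebra of `B`. -/
structure IsBoolSubalg (A : Set B) : Prop where
  bot_mem : ⊥ ∈ A
  top_mem : ⊤ ∈ A
  sup_mem : ∀ {x y : B}, x ∈ A → y ∈ A → x ⊔ y ∈ A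
  inf_mem : ∀ {x y : B}, x ∈ A → y ∈ A → x ⊓ y ∈ A
  compl_mem : ∀ {x : B}, x ∈ A → xᶜ ∈ A

/-- `h` is a partial `μ`-isomorphism defined on the Boolean subalgebra `A`:
an injective Boolean algebra homomorphism on `A` preserving `μ`. -/
structure IsPartialMeasIso (μ : B → S) (A : Set B) (h : B → B) : Prop where
  subalg : IsBoolSubalg A
  injOn : Set.InjOn h A
  map_bot : h ⊥ = ⊥
  map_top : h ⊤ = ⊤
  map_sup : ∀ {x y : B}, x ∈ A → y ∈ A → h (x ⊔ y) = h x ⊔ h y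
  map_inf : ∀ {x y : B}, x ∈ A → y ∈ A → h (x ⊓ y) = h x ⊓ h y
  map_compl : ∀ {x : B}, x ∈ A → h xᶜ = (h x)ᶜ
  meas_eq : ∀ {x : B}, x ∈ A → μ (h x) = μ x

section AuxPartitionPairs

open Finset

attribute [local instance] Classical.propDecidable

/-- Auxiliary: additivity of a measure over a finite pairwise-disjoint family. -/
theorem IsBAMeasure.finset_sup {μ : B → S} (hμ : IsBAMeasure μ) {ι : Type*}
    (t : Finset ι) (f : ι → B)
    (hd : ∀ i ∈ t, ∀ j ∈ t, i ≠ j → Disjoint (f i) (f j)) :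
    μ (t.sup f) = ∑ i ∈ t, μ (f i) := by
  induction t using Finset.cons_induction with
  | empty => simpa using hμ.1
  | cons a t ha ih =>
    have hdis : Disjoint (f a) (t.sup f) :=
      Finset.disjoint_sup_right.2 fun i hi =>
        hd a (Finset.mem_cons_self _ _) i (Finset.mem_cons.2 (Or.inr hi))
          (by rintro rfl; exact ha hi)
    rw [Finset.sup_cons, Finset.sum_cons, hμ.2 _ _ hdis,
      ih fun i hi j hj hij => hd i (Finset.mem_cons.2 (Or.inr hi)) j
        (Finset.mem_cons.2 (Or.inr hj)) hij]

/-- A matched pair of finite partitions of `⊤`, piecewise of equal measure. -/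
structure BAPart (μ : B → S) where
  s : Finset (B × B)
  nb1 : ∀ p ∈ s, p.1 ≠ (⊥ : B)
  nb2 : ∀ p ∈ s, p.2 ≠ (⊥ : B)
  dj1 : ∀ p ∈ s, ∀ q ∈ s, p ≠ q → Disjoint p.1 q.1
  dj2 : ∀ p ∈ s, ∀ q ∈ s, p ≠ q → Disjoint p.2 q.2
  sup1 : s.sup Prod.fst = (⊤ : B)
  sup2 : s.sup Prod.snd = (⊤ : B)
  meas : ∀ p ∈ s, μ p.1 = μ p.2

namespace BAPart

variable {μ : B → S}

theorem ext' {P Q : BAPart μ} (h : P.s = Q.s) : P = Q := by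
  cases P; cases Q; simp only at h; subst h; rfl

/-- The symmetric (inverse) partition pair. -/
noncomputable def symm (P : BAPart μ) : BAPart μ where
  s := P.s.image Prod.swap
  nb1 := by
    intro p hp
    obtain ⟨q, hq, rfl⟩ := Finset.mem_image.1 hp
    exact P.nb2 q hq
  nb2 := by
    intro p hp
    obtain ⟨q, hq, rfl⟩ := Finset.mem_image.1 hp
    exact P.nb1 q hq
  dj1 := by
    intro p hp q hq hpq
    obtain ⟨p', hp', rfl⟩ := Finset.mem_image.1 hp
    obtain ⟨q', hq', rfl⟩ := Finset.mem_image.1 hq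
    exact P.dj2 p' hp' q' hq' (fun h => hpq (by rw [h]))
  dj2 := by
    intro p hp q hq hpq
    obtain ⟨p', hp', rfl⟩ := Finset.mem_image.1 hp
    obtain ⟨q', hq', rfl⟩ := Finset.mem_image.1 hq
    exact P.dj1 p' hp' q' hq' (fun h => hpq (by rw [h]))
  sup1 := by rw [Finset.sup_image]; exact P.sup2
  sup2 := by rw [Finset.sup_image]; exact P.sup1
  meas := by
    intro p hp
    obtain ⟨q, hq, rfl⟩ := Finset.mem_image.1 hp
    exact (P.meas q hq).symm

theorem symm_symm (P : BAPart μ) : P.symm.symm = P := by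
  apply ext'
  show (P.s.image Prod.swap).image Prod.swap = P.s
  rw [Finset.image_image]
  have : Prod.swap ∘ Prod.swap = (id : B × B → B × B) := by
    funext p; simp
  rw [this, Finset.image_id]

/-- `x` is a union of blocks of the left partition. -/
def capt (P : BAPart μ) (x : B) : Prop := ∀ p ∈ P.s, p.1 ≤ x ∨ Disjoint p.1 x

/-- The image of a captured element. -/
noncomputable def fwd (P : BAPart μ) (x : B) : B :=
  (P.s.filter (fun p => p.1 ≤ x)).sup Prod.snd

theorem sup_filter_fst {P : BAPart μ} {x : B} (h : P.capt x) :
    (P.s.filter (fun p => p.1 ≤ x)).sup Prod.fst = x := by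
  apply le_antisymm
  · exact Finset.sup_le fun p hp => (Finset.mem_filter.1 hp).2
  · have hx2 : x = P.s.sup (fun p => x ⊓ p.1) := by
      rw [← Finset.sup_inf_distrib_left, P.sup1, inf_top_eq]
    conv_lhs => rw [hx2]
    apply Finset.sup_le
    intro p hp
    rcases h p hp with h1 | h1
    · exact le_trans inf_le_right
        (Finset.le_sup (f := Prod.fst) (Finset.mem_filter.2 ⟨hp, h1⟩))
    · rw [inf_comm, disjoint_iff.1 h1]
      exact bot_le

theorem meas_fwd (hμ : IsBAMeasure μ) {P : BAPart μ} {x : B} (h : P.capt x) :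
    μ (P.fwd x) = μ x := by
  have hsub : ∀ p ∈ P.s.filter (fun p => p.1 ≤ x), p ∈ P.s :=
    fun p hp => (Finset.mem_filter.1 hp).1
  have h1 : μ (P.fwd x) = ∑ p ∈ P.s.filter (fun p => p.1 ≤ x), μ p.2 :=
    hμ.finset_sup _ _ (fun p hp q hq hpq => P.dj2 p (hsub p hp) q (hsub q hq) hpq)
  have h2 : μ x = ∑ p ∈ P.s.filter (fun p => p.1 ≤ x), μ p.1 := by
    conv_lhs => rw [← sup_filter_fst h]
    exact hμ.finset_sup _ _ (fun p hp q hq hpq => P.dj1 p (hsub p hp) q (hsub q hq) hpq)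
  rw [h1, h2]
  exact Finset.sum_congr rfl fun p hp => (P.meas p (hsub p hp)).symm

theorem capt_sup {P : BAPart μ} {x y : B} (hx : P.capt x) (hy : P.capt y) :
    P.capt (x ⊔ y) := by
  intro p hp
  rcases hx p hp with h1 | h1
  · exact Or.inl (le_trans h1 le_sup_left)
  rcases hy p hp with h2 | h2
  · exact Or.inl (le_trans h2 le_sup_right)
  · exact Or.inr (disjoint_sup_right.2 ⟨h1, h2⟩)

theorem fwd_sup {P : BAPart μ} {x y : B} (hx : P.capt x) (hy : P.capt y) :
    P.fwd (x ⊔ y) = P.fwd x ⊔ P.fwd y := by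
  have hset : P.s.filter (fun p => p.1 ≤ x ⊔ y)
      = P.s.filter (fun p => p.1 ≤ x) ∪ P.s.filter (fun p => p.1 ≤ y) := by
    ext p
    simp only [Finset.mem_filter, Finset.mem_union]
    constructor
    · rintro ⟨hp, hle⟩
      rcases hx p hp with h1 | h1
      · exact Or.inl ⟨hp, h1⟩
      · refine Or.inr ⟨hp, ?_⟩
        have : p.1 = p.1 ⊓ (x ⊔ y) := (inf_eq_left.2 hle).symm
        rw [inf_sup_left, disjoint_iff.1 h1, bot_sup_eq] at this
        rw [this]; exact inf_le_right
    · rintro (⟨hp, hle⟩ | ⟨hp, hle⟩)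
      · exact ⟨hp, le_trans hle le_sup_left⟩
      · exact ⟨hp, le_trans hle le_sup_right⟩
  rw [fwd, hset, Finset.sup_union]; rfl

theorem capt_symm_fwd {P : BAPart μ} {x : B} (h : P.capt x) :
    P.symm.capt (P.fwd x) := by
  intro q hq
  obtain ⟨p, hp, rfl⟩ := Finset.mem_image.1 hq
  by_cases hple : p.1 ≤ x
  · exact Or.inl (Finset.le_sup (f := Prod.snd) (Finset.mem_filter.2 ⟨hp, hple⟩))
  · refine Or.inr (Finset.disjoint_sup_right.2 fun q' hq' => ?_)
    have hq's := (Finset.mem_filter.1 hq').1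
    refine P.dj2 p hp q' hq's fun hEq => ?_
    exact hple (hEq ▸ (Finset.mem_filter.1 hq').2)

theorem fwd_symm_fwd {P : BAPart μ} {x : B} (h : P.capt x) :
    P.symm.fwd (P.fwd x) = x := by
  have hfilter : P.symm.s.filter (fun q => q.1 ≤ P.fwd x)
      = (P.s.filter (fun p => p.1 ≤ x)).image Prod.swap := by
    show (P.s.image Prod.swap).filter _ = _
    rw [Finset.filter_image]
    congr 1
    ext p
    simp only [Finset.mem_filter]
    constructor
    · rintro ⟨hp, hle⟩
      refine ⟨hp, ?_⟩
      by_cases hple : p.1 ≤ x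
      · exact hple
      · exfalso
        have hdis : Disjoint p.2 (P.fwd x) := by
          refine Finset.disjoint_sup_right.2 fun q' hq' => ?_
          have hq's := (Finset.mem_filter.1 hq').1
          refine P.dj2 p hp q' hq's fun hEq => hple (hEq ▸ (Finset.mem_filter.1 hq').2)
        exact P.nb2 p hp (le_bot_iff.1 (hdis le_rfl hle))
    · rintro ⟨hp, hle⟩
      exact ⟨hp, Finset.le_sup (f := Prod.snd) (Finset.mem_filter.2 ⟨hp, hle⟩)⟩
  rw [fwd, hfilter, Finset.sup_image]
  exact sup_filter_fst h
/-- `Q` refines `P`. -/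
def Ref (Q P : BAPart μ) : Prop :=
  ∀ q ∈ Q.s, ∃ p ∈ P.s, q.1 ≤ p.1 ∧ q.2 ≤ p.2

theorem Ref.refl (P : BAPart μ) : Ref P P :=
  fun q hq => ⟨q, hq, le_rfl, le_rfl⟩

theorem Ref.trans {R Q P : BAPart μ} (h1 : Ref R Q) (h2 : Ref Q P) : Ref R P := by
  intro r hr
  obtain ⟨q, hq, hq1, hq2⟩ := h1 r hr
  obtain ⟨p, hp, hp1, hp2⟩ := h2 q hq
  exact ⟨p, hp, le_trans hq1 hp1, le_trans hq2 hp2⟩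

theorem Ref.symm' {Q P : BAPart μ} (h : Ref Q P) : Ref Q.symm P.symm := by
  intro q hq
  obtain ⟨q', hq', rfl⟩ := Finset.mem_image.1 hq
  obtain ⟨p, hp, hp1, hp2⟩ := h q' hq'
  exact ⟨p.swap, Finset.mem_image.2 ⟨p, hp, rfl⟩, hp2, hp1⟩

theorem capt_of_ref {Q P : BAPart μ} (hr : Ref Q P) {x : B} (h : P.capt x) :
    Q.capt x := by
  intro q hq
  obtain ⟨p, hp, hp1, _⟩ := hr q hq
  rcases h p hp with h1 | h1
  · exact Or.inl (le_trans hp1 h1)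
  · exact Or.inr (h1.mono_left hp1)

theorem fwd_of_ref {Q P : BAPart μ} (hr : Ref Q P) {x : B} (h : P.capt x) :
    Q.fwd x = P.fwd x := by
  apply le_antisymm
  · apply Finset.sup_le
    intro q hq
    obtain ⟨hqs, hqle⟩ := Finset.mem_filter.1 hq
    obtain ⟨p, hp, hp1, hp2⟩ := hr q hqs
    have hpx : p.1 ≤ x := by
      rcases h p hp with h1 | h1
      · exact h1
      · exact absurd (le_bot_iff.1 (h1 hp1 hqle)) (Q.nb1 q hqs)
    exact le_trans hp2 (Finset.le_sup (f := Prod.snd) (Finset.mem_filter.2 ⟨hp, hpx⟩))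
  · apply Finset.sup_le
    intro p hp
    obtain ⟨hps, hple⟩ := Finset.mem_filter.1 hp
    have hp2 : p.2 = Q.s.sup (fun q => p.2 ⊓ q.2) := by
      rw [← Finset.sup_inf_distrib_left, Q.sup2, inf_top_eq]
    conv_lhs => rw [hp2]
    apply Finset.sup_le
    intro q hq
    obtain ⟨p', hp', hp'1, hp'2⟩ := hr q hq
    by_cases hpp : p' = p
    · subst hpp
      refine le_trans inf_le_right
        (Finset.le_sup (f := Prod.snd) (Finset.mem_filter.2 ⟨hq, le_trans hp'1 hple⟩))
    · have hd : Disjoint p.2 q.2 := (P.dj2 p' hp' p hps hpp).symm.mono_right hp'2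
      rw [disjoint_iff.1 hd]
      exact bot_le
theorem key (hμ : IsBAMeasure μ)
    (hat : ∀ a : B, a ≠ ⊥ → ∃ b : B, b ≠ ⊥ ∧ b < a)
    (h4 : MeasHas4EP μ) (x a b : B) (ha : a ≠ ⊥) (hb : b ≠ ⊥) (hab : μ a = μ b)
    (habc : μ aᶜ = μ bᶜ) (htop : a = ⊤ → b = ⊤) :
    ∃ T : Finset (B × B),
      (∀ q ∈ T, q.1 ≠ ⊥ ∧ q.2 ≠ ⊥ ∧ q.1 ≤ a ∧ q.2 ≤ b ∧ μ q.1 = μ q.2 ∧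
        (q.1 ≤ x ∨ Disjoint q.1 x)) ∧
      (∀ q ∈ T, ∀ q' ∈ T, q ≠ q' → Disjoint q.1 q'.1 ∧ Disjoint q.2 q'.2) ∧
      T.sup Prod.fst = a ∧ T.sup Prod.snd = b := by
  by_cases hxc : a ≤ x ∨ Disjoint a x
  · refine ⟨{(a, b)}, ?_, ?_, by simp, by simp⟩
    · intro q hq
      rw [Finset.mem_singleton] at hq
      subst hq
      exact ⟨ha, hb, le_rfl, le_rfl, hab, hxc⟩
    · intro q hq q' hq' hne
      rw [Finset.mem_singleton] at hq hq'
      exact absurd (hq.trans hq'.symm) hne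
  push_neg at hxc
  obtain ⟨hnle, hndis⟩ := hxc
  set u := a ⊓ x with hu
  set v := a \ x with hv
  have hu0 : u ≠ ⊥ := fun h => hndis (disjoint_iff.2 h)
  have hv0 : v ≠ ⊥ := fun h => hnle (sdiff_eq_bot_iff.1 h)
  have huv : Disjoint u v := by
    have : Disjoint x (a \ x) := disjoint_sdiff_self_right
    exact this.mono_left inf_le_right
  have huvsup : u ⊔ v = a := sup_inf_sdiff a x
  have hux : u ≤ x := inf_le_right
  have hvx : Disjoint v x := disjoint_sdiff_self_left
  by_cases hac : aᶜ = ⊥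
  · -- a = ⊤, hence b = ⊤ : use atomlessness to create a third piece
    have haT : a = ⊤ := compl_eq_bot.1 hac
    have hbT : b = ⊤ := htop haT
    obtain ⟨w, hw0, hwlt⟩ := hat v hv0
    set w' := v \ w with hw'
    have hw'0 : w' ≠ ⊥ := fun h => hwlt.ne' (le_antisymm (sdiff_eq_bot_iff.1 h) hwlt.le)
    have hww' : w ⊔ w' = v := sup_sdiff_cancel' le_rfl hwlt.le
    have hdisww' : Disjoint w w' := disjoint_sdiff_self_right
    have hpart : IsPartition3 u w w' := by
      refine ⟨hu0, hw0, hw'0, huv.mono_right hwlt.le, huv.mono_right (sdiff_le.trans le_rfl), hdisww', ?_⟩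
      rw [sup_assoc, hww', huvsup, haT]
    have hdisj_uw : Disjoint (u ⊔ w) w' := by
      refine disjoint_sup_left.2 ⟨huv.mono_right sdiff_le, hdisww'⟩
    have hcompl : (u ⊔ w)ᶜ = w' := by
      refine IsCompl.compl_eq ⟨hdisj_uw, codisjoint_iff.2 ?_⟩
      rw [sup_assoc, hww', huvsup, haT]
    obtain ⟨p, q, hp, hq, hpq, hμp, hμq, hpqd⟩ :=
      h4 u w w' (u ⊔ w) hpart (hμ.2 u w (huv.mono_right hwlt.le)).symm
        (by rw [hcompl])
    have hpc : pᶜ = q ⊔ w' := by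
      refine IsCompl.compl_eq ⟨disjoint_sup_right.2 ⟨hpq, ?_⟩, codisjoint_iff.2 ?_⟩
      · have : p ≤ u ⊔ w := hpqd ▸ le_sup_left
        exact (hdisj_uw.mono_left this)
      · rw [← sup_assoc, hpqd, ← hcompl, sup_compl_eq_top]
    have hqw' : Disjoint q w' := by
      have hqle : q ≤ u ⊔ w := hpqd ▸ le_sup_right
      exact hdisj_uw.mono_left hqle
    have hμpc : μ pᶜ = μ v := by
      rw [hpc, hμ.2 q w' hqw', hμq, ← hμ.2 w w' hdisww', hww']
    refine ⟨{(u, p), (v, pᶜ)}, ?_, ?_, ?_, ?_⟩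
    · intro r hr
      rcases Finset.mem_insert.1 hr with hr | hr
      · subst hr
        exact ⟨hu0, hp.1, haT ▸ le_top, hbT ▸ le_top, hμp.symm, Or.inl hux⟩
      · rw [Finset.mem_singleton] at hr
        subst hr
        refine ⟨hv0, ?_, haT ▸ le_top, hbT ▸ le_top, hμpc.symm, Or.inr hvx⟩
        simpa [compl_eq_bot] using hp.2
    · intro r hr r' hr' hne
      rcases Finset.mem_insert.1 hr with hr | hr <;>
        rcases Finset.mem_insert.1 hr' with hr' | hr'
      · exact absurd (hr.trans hr'.symm) hne
      · rw [Finset.mem_singleton] at hr'; subst hr; subst hr'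
        exact ⟨huv, disjoint_compl_right⟩
      · rw [Finset.mem_singleton] at hr; subst hr; subst hr'
        exact ⟨huv.symm, disjoint_compl_left⟩
      · rw [Finset.mem_singleton] at hr hr'
        exact absurd (hr.trans hr'.symm) hne
    · rw [Finset.sup_insert, Finset.sup_singleton]
      exact huvsup
    · rw [Finset.sup_insert, Finset.sup_singleton]
      show p ⊔ pᶜ = b
      rw [sup_compl_eq_top, hbT]
  · -- aᶜ ≠ ⊥ : standard 4EP application with partition (u, v, aᶜ)
    have hpart : IsPartition3 u v aᶜ := by
      refine ⟨hu0, hv0, hac, huv, ?_, ?_, ?_⟩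
      · exact disjoint_compl_right.mono_left inf_le_left
      · exact disjoint_compl_right.mono_left sdiff_le
      · rw [huvsup, sup_compl_eq_top]
    obtain ⟨p, q, hp, hq, hpq, hμp, hμq, hpqd⟩ :=
      h4 u v aᶜ b hpart (by rw [← hμ.2 u v huv, huvsup, hab]) habc
    refine ⟨{(u, p), (v, q)}, ?_, ?_, ?_, ?_⟩
    · intro r hr
      rcases Finset.mem_insert.1 hr with hr | hr
      · subst hr
        exact ⟨hu0, hp.1, inf_le_left, hpqd ▸ le_sup_left, hμp.symm, Or.inl hux⟩
      · rw [Finset.mem_singleton] at hr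
        subst hr
        exact ⟨hv0, hq.1, sdiff_le, hpqd ▸ le_sup_right, hμq.symm, Or.inr hvx⟩
    · intro r hr r' hr' hne
      rcases Finset.mem_insert.1 hr with hr | hr <;>
        rcases Finset.mem_insert.1 hr' with hr' | hr'
      · exact absurd (hr.trans hr'.symm) hne
      · rw [Finset.mem_singleton] at hr'; subst hr; subst hr'
        exact ⟨huv, hpq⟩
      · rw [Finset.mem_singleton] at hr; subst hr; subst hr'
        exact ⟨huv.symm, hpq.symm⟩
      · rw [Finset.mem_singleton] at hr hr'
        exact absurd (hr.trans hr'.symm) hne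
    · rw [Finset.sup_insert, Finset.sup_singleton]
      exact huvsup
    · rw [Finset.sup_insert, Finset.sup_singleton]
      exact hpqd
theorem compl_meas_eq (hμ : IsBAMeasure μ) (P : BAPart μ) {p : B × B} (hp : p ∈ P.s) :
    μ p.1ᶜ = μ p.2ᶜ := by
  have hdis1 : Disjoint p.1 ((P.s.erase p).sup Prod.fst) :=
    Finset.disjoint_sup_right.2 fun q hq =>
      P.dj1 p hp q (Finset.mem_of_mem_erase hq) (Finset.ne_of_mem_erase hq).symm
  have hdis2 : Disjoint p.2 ((P.s.erase p).sup Prod.snd) :=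
    Finset.disjoint_sup_right.2 fun q hq =>
      P.dj2 p hp q (Finset.mem_of_mem_erase hq) (Finset.ne_of_mem_erase hq).symm
  have hc1 : p.1ᶜ = (P.s.erase p).sup Prod.fst := by
    refine IsCompl.compl_eq ⟨hdis1, codisjoint_iff.2 ?_⟩
    rw [← Finset.sup_insert, Finset.insert_erase hp, P.sup1]
  have hc2 : p.2ᶜ = (P.s.erase p).sup Prod.snd := by
    refine IsCompl.compl_eq ⟨hdis2, codisjoint_iff.2 ?_⟩
    rw [← Finset.sup_insert, Finset.insert_erase hp, P.sup2]
  rw [hc1, hc2,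
    hμ.finset_sup _ _ (fun i hi j hj hij =>
      P.dj1 i (Finset.mem_of_mem_erase hi) j (Finset.mem_of_mem_erase hj) hij),
    hμ.finset_sup _ _ (fun i hi j hj hij =>
      P.dj2 i (Finset.mem_of_mem_erase hi) j (Finset.mem_of_mem_erase hj) hij)]
  exact Finset.sum_congr rfl fun q hq => P.meas q (Finset.mem_of_mem_erase hq)

theorem top_of_top (P : BAPart μ) {p : B × B} (hp : p ∈ P.s) (h1 : p.1 = ⊤) :
    p.2 = ⊤ := by
  have herase : P.s.erase p = ∅ := by
    rw [Finset.eq_empty_iff_forall_notMem]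
    intro q hq
    have := P.dj1 p hp q (Finset.mem_of_mem_erase hq) (Finset.ne_of_mem_erase hq).symm
    rw [h1] at this
    exact P.nb1 q (Finset.mem_of_mem_erase hq) (by simpa using this.symm)
  have : (⊤ : B) = p.2 ⊔ (P.s.erase p).sup Prod.snd := by
    rw [← Finset.sup_insert, Finset.insert_erase hp, P.sup2]
  rw [herase, Finset.sup_empty, sup_bot_eq] at this
  exact this.symm

theorem exists_ref_capt (hμ : IsBAMeasure μ)
    (hat : ∀ a : B, a ≠ ⊥ → ∃ b : B, b ≠ ⊥ ∧ b < a)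
    (h4 : MeasHas4EP μ) (P : BAPart μ) (x : B) :
    ∃ Q : BAPart μ, Ref Q P ∧ Q.capt x := by
  have hkey : ∀ p : {p : B × B // p ∈ P.s}, ∃ T : Finset (B × B),
      (∀ q ∈ T, q.1 ≠ ⊥ ∧ q.2 ≠ ⊥ ∧ q.1 ≤ (p : B × B).1 ∧ q.2 ≤ (p : B × B).2 ∧
        μ q.1 = μ q.2 ∧ (q.1 ≤ x ∨ Disjoint q.1 x)) ∧
      (∀ q ∈ T, ∀ q' ∈ T, q ≠ q' → Disjoint q.1 q'.1 ∧ Disjoint q.2 q'.2) ∧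
      T.sup Prod.fst = (p : B × B).1 ∧ T.sup Prod.snd = (p : B × B).2 := by
    rintro ⟨p, hp⟩
    exact key hμ hat h4 x p.1 p.2 (P.nb1 p hp) (P.nb2 p hp) (P.meas p hp)
      (compl_meas_eq hμ P hp) (top_of_top P hp)
  choose T hT1 hT2 hT3 hT4 using hkey
  refine ⟨⟨P.s.attach.biUnion T, ?_, ?_, ?_, ?_, ?_, ?_, ?_⟩, ?_, ?_⟩
  · intro q hq
    obtain ⟨p, _, hqT⟩ := Finset.mem_biUnion.1 hq
    exact (hT1 p q hqT).1
  · intro q hq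
    obtain ⟨p, _, hqT⟩ := Finset.mem_biUnion.1 hq
    exact (hT1 p q hqT).2.1
  · intro q hq q' hq' hne
    obtain ⟨p, _, hqT⟩ := Finset.mem_biUnion.1 hq
    obtain ⟨p', _, hq'T⟩ := Finset.mem_biUnion.1 hq'
    by_cases hpp : p = p'
    · subst hpp
      exact (hT2 p q hqT q' hq'T hne).1
    · exact ((P.dj1 p p.2 p' p'.2 (fun h => hpp (Subtype.ext h))).mono
        (hT1 p q hqT).2.2.1 (hT1 p' q' hq'T).2.2.1)
  · intro q hq q' hq' hne
    obtain ⟨p, _, hqT⟩ := Finset.mem_biUnion.1 hq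
    obtain ⟨p', _, hq'T⟩ := Finset.mem_biUnion.1 hq'
    by_cases hpp : p = p'
    · subst hpp
      exact (hT2 p q hqT q' hq'T hne).2
    · exact ((P.dj2 p p.2 p' p'.2 (fun h => hpp (Subtype.ext h))).mono
        (hT1 p q hqT).2.2.2.1 (hT1 p' q' hq'T).2.2.2.1)
  · rw [Finset.sup_biUnion]
    rw [show P.s.attach.sup (fun p => (T p).sup Prod.fst)
        = P.s.attach.sup (fun p => (p : B × B).1) from
      Finset.sup_congr rfl fun p _ => hT3 p]
    rw [Finset.sup_attach]
    exact P.sup1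
  · rw [Finset.sup_biUnion]
    rw [show P.s.attach.sup (fun p => (T p).sup Prod.snd)
        = P.s.attach.sup (fun p => (p : B × B).2) from
      Finset.sup_congr rfl fun p _ => hT4 p]
    rw [Finset.sup_attach]
    exact P.sup2
  · intro q hq
    obtain ⟨p, _, hqT⟩ := Finset.mem_biUnion.1 hq
    exact (hT1 p q hqT).2.2.2.2.1
  · intro q hq
    obtain ⟨p, _, hqT⟩ := Finset.mem_biUnion.1 hq
    exact ⟨p, p.2, (hT1 p q hqT).2.2.1, (hT1 p q hqT).2.2.2.1⟩
  · intro q hq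
    obtain ⟨p, _, hqT⟩ := Finset.mem_biUnion.1 hq
    exact (hT1 p q hqT).2.2.2.2.2

theorem exists_ref_capt2 (hμ : IsBAMeasure μ)
    (hat : ∀ a : B, a ≠ ⊥ → ∃ b : B, b ≠ ⊥ ∧ b < a)
    (h4 : MeasHas4EP μ) (P : BAPart μ) (x : B) :
    ∃ Q : BAPart μ, Ref Q P ∧ Q.capt x ∧ Q.symm.capt x := by
  obtain ⟨Q₁, hQ₁ref, hQ₁c⟩ := exists_ref_capt hμ hat h4 P x
  obtain ⟨Q₂, hQ₂ref, hQ₂c⟩ := exists_ref_capt hμ hat h4 Q₁.symm x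
  refine ⟨Q₂.symm, ?_, ?_, ?_⟩
  · have := hQ₂ref.symm'
    rw [symm_symm] at this
    exact this.trans hQ₁ref
  · have := hQ₂ref.symm'
    rw [symm_symm] at this
    exact capt_of_ref this hQ₁c
  · rw [symm_symm]
    exact hQ₂c

end BAPart

end AuxPartitionPairs

/-- a measure with (4EP) is ultrahomogeneous: every partial
`μ`-isomorphism defined on a finite Boolean subalgebra extends to a
`μ`-automorphism. -/
theorem has4EP_implies_ultrahomogeneous [Countable B] [Nontrivial B]
    (hatomless : ∀ a : B, a ≠ ⊥ → ∃ b : B, b ≠ ⊥ ∧ b < a)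
    (μ : B → S) (hμ : IsBAMeasure μ) (h4 : MeasHas4EP μ) :
    ∀ (A : Set B) (h : B → B), A.Finite → IsPartialMeasIso μ A h →
      ∃ φ : B ≃o B, PreservesMeas μ φ ∧ ∀ x ∈ A, φ x = h x := by
  classical
  intro A h hAfin hiso
  -- the finite set of atoms of the finite subalgebra A
  set Af : Finset B := hAfin.toFinset with hAfdef
  have hmemAf : ∀ {y : B}, y ∈ Af ↔ y ∈ A := fun {y} => hAfin.mem_toFinset
  set At : Finset B := Af.filter
    (fun y => y ≠ ⊥ ∧ ∀ z ∈ A, z ≤ y → z = ⊥ ∨ z = y) with hAtdef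
  have hAt_memA : ∀ a ∈ At, a ∈ A := fun a ha => hmemAf.1 (Finset.mem_filter.1 ha).1
  have hAt_ne : ∀ a ∈ At, a ≠ ⊥ := fun a ha => (Finset.mem_filter.1 ha).2.1
  have hAt_min : ∀ a ∈ At, ∀ z ∈ A, z ≤ a → z = ⊥ ∨ z = a :=
    fun a ha => (Finset.mem_filter.1 ha).2.2
  have hatom_le : ∀ x ∈ A, x ≠ ⊥ → ∃ a ∈ At, a ≤ x := by
    intro x hx hx0
    obtain ⟨m, hm, hmin⟩ : ∃ m ∈ Af.filter (fun y => y ≤ x ∧ y ≠ ⊥),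
        ∀ y ∈ Af.filter (fun y => y ≤ x ∧ y ≠ ⊥), ¬ y < m := by
      obtain ⟨m, hm⟩ := Finset.exists_minimal (s := Af.filter (fun y => y ≤ x ∧ y ≠ ⊥))
        ⟨x, Finset.mem_filter.2 ⟨hmemAf.2 hx, le_rfl, hx0⟩⟩
      exact ⟨m, hm.1, fun y hy hlt => hlt.not_ge (hm.2 hy hlt.le)⟩
    have hm' := Finset.mem_filter.1 hm
    obtain ⟨hmAf, hmx, hm0⟩ : m ∈ Af ∧ m ≤ x ∧ m ≠ ⊥ := ⟨hm'.1, hm'.2.1, hm'.2.2⟩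
    refine ⟨m, Finset.mem_filter.2 ⟨hmAf, hm0, ?_⟩, hmx⟩
    intro z hz hzm
    by_cases hz0 : z = ⊥
    · exact Or.inl hz0
    · refine Or.inr ?_
      have hzmem : z ∈ Af.filter (fun y => y ≤ x ∧ y ≠ ⊥) :=
        Finset.mem_filter.2 ⟨hmemAf.2 hz, le_trans hzm hmx, hz0⟩
      by_contra hne
      exact hmin z hzmem (lt_of_le_of_ne hzm hne)
  have hAt_disj : ∀ a ∈ At, ∀ a' ∈ At, a ≠ a' → Disjoint a a' := by
    intro a ha a' ha' hne
    have hinfA : a ⊓ a' ∈ A := hiso.subalg.inf_mem (hAt_memA a ha) (hAt_memA a' ha')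
    rcases hAt_min a' ha' (a ⊓ a') hinfA inf_le_right with h0 | h0
    · exact disjoint_iff.2 h0
    · exfalso
      have ha'_le : a' ≤ a := h0 ▸ inf_le_left
      rcases hAt_min a ha a' (hAt_memA a' ha') ha'_le with h1 | h1
      · exact hAt_ne a' ha' h1
      · exact hne h1.symm
  have hsup_mem : ∀ t : Finset B, (∀ y ∈ t, y ∈ A) → t.sup id ∈ A := by
    intro t
    induction t using Finset.cons_induction with
    | empty => intro _; simpa using hiso.subalg.bot_mem
    | cons a t ha ih =>
      intro hmem
      rw [Finset.sup_cons]
      exact hiso.subalg.sup_mem (hmem a (Finset.mem_cons_self _ _))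
        (ih fun y hy => hmem y (Finset.mem_cons.2 (Or.inr hy)))
  have hmap_sup : ∀ t : Finset B, (∀ y ∈ t, y ∈ A) → h (t.sup id) = t.sup h := by
    intro t
    induction t using Finset.cons_induction with
    | empty => intro _; simpa using hiso.map_bot
    | cons a t ha ih =>
      intro hmem
      rw [Finset.sup_cons, Finset.sup_cons]
      simp only [id_eq]
      rw [hiso.map_sup (hmem a (Finset.mem_cons_self _ _))
          (hsup_mem t fun y hy => hmem y (Finset.mem_cons.2 (Or.inr hy))),
        ih fun y hy => hmem y (Finset.mem_cons.2 (Or.inr hy))]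
  have hAt_top : At.sup id = ⊤ := by
    by_contra hne
    have hAtsupA : At.sup id ∈ A := hsup_mem At hAt_memA
    have h0 : (At.sup id)ᶜ ≠ ⊥ := fun hc => hne (compl_eq_bot.1 hc)
    obtain ⟨a, haAt, hale⟩ := hatom_le _ (hiso.subalg.compl_mem hAtsupA) h0
    have h1 : a ≤ At.sup id := Finset.le_sup (f := id) haAt
    have : a ≤ ⊥ := by
      have := le_inf h1 hale
      rwa [inf_compl_eq_bot] at this
    exact hAt_ne a haAt (le_bot_iff.1 this)
  -- the base partition pair
  have hinj_pair : ∀ a ∈ At, ∀ a' ∈ At, (a, h a) = (a', h a') → a = a' :=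
    fun a _ a' _ hEq => congrArg Prod.fst hEq
  have hh_ne_bot : ∀ a ∈ At, h a ≠ ⊥ := by
    intro a ha hc
    refine hAt_ne a ha ?_
    have : h a = h ⊥ := by rw [hc, hiso.map_bot]
    exact hiso.injOn (hAt_memA a ha) hiso.subalg.bot_mem this
  have hh_disj : ∀ a ∈ At, ∀ a' ∈ At, a ≠ a' → Disjoint (h a) (h a') := by
    intro a ha a' ha' hne
    rw [disjoint_iff, ← hiso.map_inf (hAt_memA a ha) (hAt_memA a' ha'),
      disjoint_iff.1 (hAt_disj a ha a' ha' hne), hiso.map_bot]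
  set P₀ : BAPart μ :=
    { s := At.image (fun a => (a, h a))
      nb1 := by
        intro p hp
        obtain ⟨a, ha, rfl⟩ := Finset.mem_image.1 hp
        exact hAt_ne a ha
      nb2 := by
        intro p hp
        obtain ⟨a, ha, rfl⟩ := Finset.mem_image.1 hp
        exact hh_ne_bot a ha
      dj1 := by
        intro p hp q hq hne
        obtain ⟨a, ha, rfl⟩ := Finset.mem_image.1 hp
        obtain ⟨a', ha', rfl⟩ := Finset.mem_image.1 hq
        exact hAt_disj a ha a' ha' (fun hEq => hne (by rw [hEq]))
      dj2 := by
        intro p hp q hq hne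
        obtain ⟨a, ha, rfl⟩ := Finset.mem_image.1 hp
        obtain ⟨a', ha', rfl⟩ := Finset.mem_image.1 hq
        exact hh_disj a ha a' ha' (fun hEq => hne (by rw [hEq]))
      sup1 := by rw [Finset.sup_image]; exact hAt_top
      sup2 := by
        rw [Finset.sup_image]
        show At.sup h = ⊤
        rw [← hmap_sup At hAt_memA, hAt_top, hiso.map_top]
      meas := by
        intro p hp
        obtain ⟨a, ha, rfl⟩ := Finset.mem_image.1 hp
        exact (hiso.meas_eq (hAt_memA a ha)).symm } with hP₀def
  have hcapt0 : ∀ x ∈ A, P₀.capt x := by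
    intro x hx p hp
    obtain ⟨a, ha, rfl⟩ := Finset.mem_image.1 hp
    have hinfA : a ⊓ x ∈ A := hiso.subalg.inf_mem (hAt_memA a ha) hx
    rcases hAt_min a ha (a ⊓ x) hinfA inf_le_left with h0 | h0
    · exact Or.inr (disjoint_iff.2 h0)
    · exact Or.inl (h0 ▸ inf_le_right)
  have hfwd0 : ∀ x ∈ A, P₀.fwd x = h x := by
    intro x hx
    have hfe : P₀.s.filter (fun p => p.1 ≤ x)
        = (At.filter (fun a => a ≤ x)).image (fun a => (a, h a)) := by
      show (At.image (fun a => (a, h a))).filter (fun p => p.1 ≤ x) = _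
      rw [Finset.filter_image]
    have hsupx : (At.filter (fun a => a ≤ x)).sup id = x := by
      have := BAPart.sup_filter_fst (hcapt0 x hx)
      rw [hfe] at this
      rw [Finset.sup_image] at this
      exact this
    rw [BAPart.fwd, hfe, Finset.sup_image]
    show (At.filter (fun a => a ≤ x)).sup h = h x
    rw [← hmap_sup _ fun y hy => hAt_memA y (Finset.mem_filter.1 hy).1, hsupx]
  -- enumeration and the chain of partition pairs
  obtain ⟨e, he⟩ := exists_surjective_nat B
  choose nxt hn1 hn2 hn3 using BAPart.exists_ref_capt2 hμ hatomless h4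
  set F : ℕ → BAPart μ := fun n => Nat.rec P₀ (fun n P => nxt P (e n)) n with hFdef
  have hFsucc : ∀ n, F (n + 1) = nxt (F n) (e n) := fun n => rfl
  have hRefSucc : ∀ n, BAPart.Ref (F (n + 1)) (F n) := fun n => hn1 (F n) (e n)
  have hRefLe : ∀ m n : ℕ, m ≤ n → BAPart.Ref (F n) (F m) := by
    intro m n hmn
    induction n, hmn using Nat.le_induction with
    | base => exact BAPart.Ref.refl _
    | succ n hmn ih => exact (hRefSucc n).trans ih
  choose idx hidx using he
  have hcapt_idx : ∀ y : B, (F (idx y + 1)).capt y := by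
    intro y
    have h1 : (F (idx y + 1)).capt (e (idx y)) := hn2 (F (idx y)) (e (idx y))
    rwa [hidx y] at h1
  have hcapt_idx' : ∀ y : B, (F (idx y + 1)).symm.capt y := by
    intro y
    have h1 : (F (idx y + 1)).symm.capt (e (idx y)) := hn3 (F (idx y)) (e (idx y))
    rwa [hidx y] at h1
  have hcapt_ge : ∀ (y : B) (n : ℕ), idx y + 1 ≤ n → (F n).capt y :=
    fun y n hn => BAPart.capt_of_ref (hRefLe _ _ hn) (hcapt_idx y)
  have hcapt_ge' : ∀ (y : B) (n : ℕ), idx y + 1 ≤ n → (F n).symm.capt y :=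
    fun y n hn => BAPart.capt_of_ref (hRefLe _ _ hn).symm' (hcapt_idx' y)
  set H : B → B := fun y => (F (idx y + 1)).fwd y with hHdef
  set G : B → B := fun y => (F (idx y + 1)).symm.fwd y with hGdef
  have Hspec : ∀ (y : B) (n : ℕ), (F n).capt y → H y = (F n).fwd y := by
    intro y n hc
    have h1 : (F (max n (idx y + 1))).fwd y = (F n).fwd y :=
      BAPart.fwd_of_ref (hRefLe _ _ (le_max_left _ _)) hc
    have h2 : (F (max n (idx y + 1))).fwd y = (F (idx y + 1)).fwd y :=
      BAPart.fwd_of_ref (hRefLe _ _ (le_max_right _ _)) (hcapt_idx y)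
    rw [hHdef]
    simp only
    rw [← h2, h1]
  have Gspec : ∀ (y : B) (n : ℕ), (F n).symm.capt y → G y = (F n).symm.fwd y := by
    intro y n hc
    have h1 : (F (max n (idx y + 1))).symm.fwd y = (F n).symm.fwd y :=
      BAPart.fwd_of_ref (hRefLe _ _ (le_max_left _ _)).symm' hc
    have h2 : (F (max n (idx y + 1))).symm.fwd y = (F (idx y + 1)).symm.fwd y :=
      BAPart.fwd_of_ref (hRefLe _ _ (le_max_right _ _)).symm' (hcapt_idx' y)
    rw [hGdef]
    simp only
    rw [← h2, h1]
  have hGH : ∀ y : B, G (H y) = y := by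
    intro y
    have hc := hcapt_idx y
    have hcB : (F (idx y + 1)).symm.capt (H y) := BAPart.capt_symm_fwd hc
    rw [Gspec (H y) (idx y + 1) hcB]
    exact BAPart.fwd_symm_fwd hc
  have hHG : ∀ y : B, H (G y) = y := by
    intro y
    have hc := hcapt_idx' y
    have hcB : (F (idx y + 1)).symm.symm.capt ((F (idx y + 1)).symm.fwd y) :=
      BAPart.capt_symm_fwd hc
    rw [BAPart.symm_symm] at hcB
    have hfix : G y = (F (idx y + 1)).symm.fwd y := rfl
    rw [hfix, Hspec _ (idx y + 1) hcB]
    have := BAPart.fwd_symm_fwd hc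
    rwa [BAPart.symm_symm] at this
  have hHsup : ∀ y z : B, H (y ⊔ z) = H y ⊔ H z := by
    intro y z
    set n := max (idx y + 1) (idx z + 1) with hn
    have hcy : (F n).capt y := hcapt_ge y n (le_max_left _ _)
    have hcz : (F n).capt z := hcapt_ge z n (le_max_right _ _)
    rw [Hspec _ n (BAPart.capt_sup hcy hcz), BAPart.fwd_sup hcy hcz,
      ← Hspec _ n hcy, ← Hspec _ n hcz]
  have hGsup : ∀ y z : B, G (y ⊔ z) = G y ⊔ G z := by
    intro y z
    set n := max (idx y + 1) (idx z + 1) with hn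
    have hcy : (F n).symm.capt y := hcapt_ge' y n (le_max_left _ _)
    have hcz : (F n).symm.capt z := hcapt_ge' z n (le_max_right _ _)
    rw [Gspec _ n (BAPart.capt_sup hcy hcz), BAPart.fwd_sup hcy hcz,
      ← Gspec _ n hcy, ← Gspec _ n hcz]
  have hHmono : ∀ {y z : B}, y ≤ z → H y ≤ H z := by
    intro y z hyz
    have : H z = H y ⊔ H z := by rw [← hHsup, sup_eq_right.2 hyz]
    rw [this]
    exact le_sup_left
  have hGmono : ∀ {y z : B}, y ≤ z → G y ≤ G z := by
    intro y z hyz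
    have : G z = G y ⊔ G z := by rw [← hGsup, sup_eq_right.2 hyz]
    rw [this]
    exact le_sup_left
  refine ⟨⟨⟨H, G, hGH, hHG⟩, ?_⟩, ?_, ?_⟩
  · intro y z
    show H y ≤ H z ↔ y ≤ z
    constructor
    · intro hle
      have := hGmono hle
      rwa [hGH, hGH] at this
    · exact hHmono
  · intro y
    exact BAPart.meas_fwd hμ (hcapt_idx y)
  · intro x hx
    show H x = h x
    rw [Hspec x 0 (hcapt0 x hx)]
    exact hfwd0 x hx
end

section
/- Let μ and λ be two S-valued measures on the countable atomless Boolean algebra 𝔹, both satisfying (4EP). Then there exists a Boolean algebra automorphism Φ of 𝔹 with λ(b) = μ(Φ(b)) for all b ∈ 𝔹 if and only if Σ(λ) = Σ(μ), where Σ(ν) denotes the trinary spectrum {(ν(a),ν(b),ν(c)) : {a,b,c} is a partition of 𝔹}. -/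
variable {B : Type*} [BooleanAlgebra B] {S : Type*} [AddCommMonoid S]

set_option linter.unusedSectionVars false
namespace ConjBA

open Finset
open scoped Classical

/-- A good partial isomorphism state: matched finite partitions. -/
structure Good (μ lam : B → S) (s : Finset (B × B)) : Prop where
  nb1 : ∀ p ∈ s, p.1 ≠ ⊥
  nb2 : ∀ p ∈ s, p.2 ≠ ⊥
  meas : ∀ p ∈ s, μ p.2 = lam p.1
  dis1 : ∀ p ∈ s, ∀ q ∈ s, p ≠ q → Disjoint p.1 q.1
  dis2 : ∀ p ∈ s, ∀ q ∈ s, p ≠ q → Disjoint p.2 q.2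
  top1 : s.sup Prod.fst = ⊤
  top2 : s.sup Prod.snd = ⊤

def Ref (s t : Finset (B × B)) : Prop :=
  ∀ q ∈ t, ∃ p ∈ s, q.1 ≤ p.1 ∧ q.2 ≤ p.2

def Splits (s : Finset (B × B)) (c : B) : Prop :=
  ∀ p ∈ s, p.1 ≤ c ∨ Disjoint p.1 c

def SplitsSnd (s : Finset (B × B)) (c : B) : Prop :=
  ∀ p ∈ s, p.2 ≤ c ∨ Disjoint p.2 c

noncomputable def val (s : Finset (B × B)) (c : B) : B :=
  (s.filter (fun p => p.1 ≤ c)).sup Prod.snd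

noncomputable def coval (s : Finset (B × B)) (c : B) : B :=
  (s.filter (fun p => p.2 ≤ c)).sup Prod.fst

theorem Ref.refl (s : Finset (B × B)) : Ref s s :=
  fun q hq => ⟨q, hq, le_rfl, le_rfl⟩

theorem Ref.trans {s t u : Finset (B × B)} (h1 : Ref s t) (h2 : Ref t u) : Ref s u := by
  intro q hq
  obtain ⟨p, hp, h1q, h2q⟩ := h2 q hq
  obtain ⟨r, hr, h1p, h2p⟩ := h1 p hp
  exact ⟨r, hr, h1q.trans h1p, h2q.trans h2p⟩

theorem Splits.mono {s t : Finset (B × B)} {c : B} (hs : Splits s c) (h : Ref s t) :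
    Splits t c := by
  intro q hq
  obtain ⟨p, hp, h1, _⟩ := h q hq
  rcases hs p hp with h' | h'
  · exact Or.inl (h1.trans h')
  · exact Or.inr (h'.mono_left h1)

/-- additivity over a finite disjoint family -/
theorem sup_measure {ι : Type*} {ν : B → S} (hν : IsBAMeasure ν) (F : Finset ι) (f : ι → B)
    (hd : ∀ i ∈ F, ∀ j ∈ F, i ≠ j → Disjoint (f i) (f j)) :
    ν (F.sup f) = ∑ i ∈ F, ν (f i) := by
  classical
  induction F using Finset.cons_induction with
  | empty => simpa using hν.1
  | cons a F ha ih =>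
    have hdis : Disjoint (f a) (F.sup f) := by
      rw [Finset.disjoint_sup_right]
      intro i hi
      exact hd a (mem_cons_self a F) i (mem_cons_of_mem hi) (by rintro rfl; exact ha hi)
    rw [Finset.sup_cons, Finset.sum_cons, hν.2 _ _ hdis,
      ih (fun i hi j hj hij => hd i (mem_cons_of_mem hi) j (mem_cons_of_mem hj) hij)]

theorem mem_of_le_sup {f : B × B → B} {G F : Finset (B × B)} (hGF : G ⊆ F)
    (hd : ∀ p ∈ F, ∀ q ∈ F, p ≠ q → Disjoint (f p) (f q)) {p : B × B} (hp : p ∈ F)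
    (hne : f p ≠ ⊥) (hle : f p ≤ G.sup f) : p ∈ G := by
  by_contra hpG
  apply hne
  have : f p = f p ⊓ G.sup f := (inf_eq_left.mpr hle).symm
  rw [this, Finset.sup_inf_distrib_left]
  refine le_bot_iff.mp (Finset.sup_le fun q hq => ?_)
  have hqp : q ≠ p := fun h => hpG (h ▸ hq)
  exact le_bot_iff.mpr (disjoint_iff.mp ((hd p hp q (hGF hq) hqp.symm)))

theorem sup_filter_eq {f : B × B → B} {F : Finset (B × B)} {c : B}
    (htop : F.sup f = ⊤) (hsp : ∀ p ∈ F, f p ≤ c ∨ Disjoint (f p) c) :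
    (F.filter (fun p => f p ≤ c)).sup f = c := by
  refine le_antisymm (Finset.sup_le fun p hp => (Finset.mem_filter.mp hp).2) ?_
  calc c = c ⊓ F.sup f := by rw [htop, inf_top_eq]
  _ = F.sup (fun p => c ⊓ f p) := Finset.sup_inf_distrib_left _ _ _
  _ ≤ (F.filter (fun p => f p ≤ c)).sup f := by
      refine Finset.sup_le fun p hp => ?_
      rcases hsp p hp with h | h
      · exact le_trans inf_le_right (Finset.le_sup (Finset.mem_filter.mpr ⟨hp, h⟩))
      · rw [disjoint_iff.mp h.symm]; exact bot_le


theorem mem_swap {s : Finset (B × B)} {q : B × B} :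
    q ∈ s.image Prod.swap ↔ q.swap ∈ s := by
  constructor
  · rintro h
    obtain ⟨p, hp, rfl⟩ := Finset.mem_image.mp h
    simpa using hp
  · intro h
    refine Finset.mem_image.mpr ⟨q.swap, h, ?_⟩
    simp

theorem Good.swap {μ lam : B → S} {s : Finset (B × B)} (hs : Good μ lam s) :
    Good lam μ (s.image Prod.swap) := by
  constructor
  · intro p hp; exact hs.nb2 p.swap (mem_swap.mp hp)
  · intro p hp; exact hs.nb1 p.swap (mem_swap.mp hp)
  · intro p hp; exact (hs.meas p.swap (mem_swap.mp hp)).symm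
  · intro p hp q hq hne
    exact hs.dis2 p.swap (mem_swap.mp hp) q.swap (mem_swap.mp hq)
      (fun h => hne (Prod.swap_injective h))
  · intro p hp q hq hne
    exact hs.dis1 p.swap (mem_swap.mp hp) q.swap (mem_swap.mp hq)
      (fun h => hne (Prod.swap_injective h))
  · rw [Finset.sup_image]; exact hs.top2
  · rw [Finset.sup_image]; exact hs.top1

theorem Ref.swap {s t : Finset (B × B)} (h : Ref s t) :
    Ref (s.image Prod.swap) (t.image Prod.swap) := by
  intro q hq
  obtain ⟨p, hp, h1, h2⟩ := h q.swap (mem_swap.mp hq)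
  exact ⟨p.swap, mem_swap.mpr (by simpa using hp), h2, h1⟩

theorem Splits.swap {s : Finset (B × B)} {c : B} (h : Splits s c) :
    SplitsSnd (s.image Prod.swap) c := fun p hp => h p.swap (mem_swap.mp hp)

theorem SplitsSnd.swap {s : Finset (B × B)} {c : B} (h : SplitsSnd s c) :
    Splits (s.image Prod.swap) c := fun p hp => h p.swap (mem_swap.mp hp)

theorem swap_swap_image (s : Finset (B × B)) :
    (s.image Prod.swap).image Prod.swap = s := by
  rw [Finset.image_image]
  simp [Function.comp_def]

theorem compl_piece {μ lam : B → S} (hμ : IsBAMeasure μ) (hlam : IsBAMeasure lam)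
    {s : Finset (B × B)} (hs : Good μ lam s) {p : B × B} (hp : p ∈ s) :
    p.1ᶜ = (s.erase p).sup Prod.fst ∧ p.2ᶜ = (s.erase p).sup Prod.snd ∧
      μ p.2ᶜ = lam p.1ᶜ := by
  have h1 : p.1ᶜ = (s.erase p).sup Prod.fst := by
    refine IsCompl.compl_eq ⟨?_, ?_⟩
    · rw [Finset.disjoint_sup_right]
      intro q hq
      exact hs.dis1 p hp q (Finset.mem_of_mem_erase hq) (Finset.ne_of_mem_erase hq).symm
    · rw [codisjoint_iff, ← Finset.sup_insert, Finset.insert_erase hp]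
      exact hs.top1
  have h2 : p.2ᶜ = (s.erase p).sup Prod.snd := by
    refine IsCompl.compl_eq ⟨?_, ?_⟩
    · rw [Finset.disjoint_sup_right]
      intro q hq
      exact hs.dis2 p hp q (Finset.mem_of_mem_erase hq) (Finset.ne_of_mem_erase hq).symm
    · rw [codisjoint_iff, ← Finset.sup_insert, Finset.insert_erase hp]
      exact hs.top2
  refine ⟨h1, h2, ?_⟩
  rw [h1, h2]
  rw [sup_measure hμ _ _ (fun i hi j hj hij =>
      hs.dis2 i (Finset.mem_of_mem_erase hi) j (Finset.mem_of_mem_erase hj) hij),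
    sup_measure hlam _ _ (fun i hi j hj hij =>
      hs.dis1 i (Finset.mem_of_mem_erase hi) j (Finset.mem_of_mem_erase hj) hij)]
  exact Finset.sum_congr rfl fun q hq => hs.meas q (Finset.mem_of_mem_erase hq)

theorem top_piece {μ lam : B → S} (hμ : IsBAMeasure μ) (hlam : IsBAMeasure lam)
    {s : Finset (B × B)} (hs : Good μ lam s) {p : B × B} (hp : p ∈ s) (h1 : p.1 = ⊤) :
    p.2 = ⊤ := by
  obtain ⟨e1, e2, _⟩ := compl_piece hμ hlam hs hp
  have herase : s.erase p = ∅ := by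
    rw [Finset.eq_empty_iff_forall_notMem]
    intro q hq
    refine hs.nb1 q (Finset.mem_of_mem_erase hq) (le_bot_iff.mp ?_)
    calc q.1 ≤ (s.erase p).sup Prod.fst := Finset.le_sup hq
    _ = p.1ᶜ := e1.symm
    _ = ⊥ := by rw [h1, compl_top]
  have : p.2ᶜ = ⊥ := by rw [e2, herase]; simp
  simpa using congrArg compl this

theorem val_stable {μ lam : B → S} {s t : Finset (B × B)} {c : B}
    (hs : Good μ lam s) (ht : Good μ lam t) (hr : Ref s t) (hc : Splits s c) :
    val t c = val s c := by
  refine le_antisymm (Finset.sup_le fun q hq => ?_) (Finset.sup_le fun p hp => ?_)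
  · obtain ⟨hqt, hqc⟩ := Finset.mem_filter.mp hq
    obtain ⟨p, hp, h1, h2⟩ := hr q hqt
    rcases hc p hp with h | h
    · exact le_trans h2 (Finset.le_sup (Finset.mem_filter.mpr ⟨hp, h⟩))
    · exact absurd (le_bot_iff.mp (le_inf h1 hqc |>.trans (disjoint_iff.mp h).le))
        (ht.nb1 q hqt)
  · obtain ⟨hps, hpc⟩ := Finset.mem_filter.mp hp
    calc p.2 = p.2 ⊓ t.sup Prod.snd := by rw [ht.top2, inf_top_eq]
    _ = t.sup (fun q => p.2 ⊓ q.2) := Finset.sup_inf_distrib_left _ _ _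
    _ ≤ val t c := by
        refine Finset.sup_le fun q hq => ?_
        by_cases hqc : q.1 ≤ c
        · exact le_trans inf_le_right (Finset.le_sup (Finset.mem_filter.mpr ⟨hq, hqc⟩))
        · obtain ⟨p', hp', h1, h2⟩ := hr q hq
          have hne : p' ≠ p := by rintro rfl; exact hqc (h1.trans hpc)
          rw [disjoint_iff.mp (((hs.dis2 p' hp' p hps hne).mono_left h2).symm)]
          exact bot_le

theorem val_le_val_iff {μ lam : B → S} {s : Finset (B × B)} {c d : B}
    (hs : Good μ lam s) (hc : Splits s c) (hd : Splits s d) :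
    val s c ≤ val s d ↔ c ≤ d := by
  constructor
  · intro h
    have hcov : (s.filter (fun p => p.1 ≤ c)).sup Prod.fst = c :=
      sup_filter_eq hs.top1 hc
    rw [← hcov]
    refine Finset.sup_le fun p hp => ?_
    obtain ⟨hps, _⟩ := Finset.mem_filter.mp hp
    have hle : p.2 ≤ (s.filter (fun p => p.1 ≤ d)).sup Prod.snd :=
      le_trans (Finset.le_sup hp) h
    have hmem := mem_of_le_sup (f := Prod.snd) (Finset.filter_subset _ _)
      hs.dis2 hps (hs.nb2 p hps) hle
    exact (Finset.mem_filter.mp hmem).2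
  · intro h
    refine Finset.sup_mono (fun p hp => ?_)
    obtain ⟨hps, hpc⟩ := Finset.mem_filter.mp hp
    exact Finset.mem_filter.mpr ⟨hps, hpc.trans h⟩

theorem val_coval {μ lam : B → S} {s : Finset (B × B)} {y : B}
    (hs : Good μ lam s) (hy : SplitsSnd s y) :
    Splits s (coval s y) ∧ val s (coval s y) = y := by
  have hsp : Splits s (coval s y) := by
    intro p hp
    by_cases h : p.2 ≤ y
    · exact Or.inl (Finset.le_sup (Finset.mem_filter.mpr ⟨hp, h⟩))
    · refine Or.inr ?_
      rw [coval, Finset.disjoint_sup_right]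
      intro q hq
      obtain ⟨hqs, hqy⟩ := Finset.mem_filter.mp hq
      exact hs.dis1 p hp q hqs (by rintro rfl; exact h hqy)
  refine ⟨hsp, ?_⟩
  have hfil : s.filter (fun p => p.1 ≤ coval s y) = s.filter (fun p => p.2 ≤ y) := by
    apply Finset.Subset.antisymm
    · intro p hp
      obtain ⟨hps, hpc⟩ := Finset.mem_filter.mp hp
      exact mem_of_le_sup (f := Prod.fst) (Finset.filter_subset _ _)
        hs.dis1 hps (hs.nb1 p hps) hpc
    · intro p hp
      obtain ⟨hps, hpy⟩ := Finset.mem_filter.mp hp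
      exact Finset.mem_filter.mpr ⟨hps, Finset.le_sup (Finset.mem_filter.mpr ⟨hps, hpy⟩)⟩
  rw [val, hfil]
  exact sup_filter_eq hs.top2 hy

theorem val_measure {μ lam : B → S} (hμ : IsBAMeasure μ) (hlam : IsBAMeasure lam)
    {s : Finset (B × B)} {c : B} (hs : Good μ lam s) (hc : Splits s c) :
    lam c = μ (val s c) := by
  have hcov : (s.filter (fun p => p.1 ≤ c)).sup Prod.fst = c :=
    sup_filter_eq hs.top1 hc
  have h1 : μ (val s c) = ∑ p ∈ s.filter (fun p => p.1 ≤ c), μ p.2 :=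
    sup_measure hμ _ _ (fun i hi j hj hij =>
      hs.dis2 i (Finset.filter_subset _ _ hi) j (Finset.filter_subset _ _ hj) hij)
  have h2 : lam c = ∑ p ∈ s.filter (fun p => p.1 ≤ c), lam p.1 := by
    conv_lhs => rw [← hcov]
    exact sup_measure hlam _ _ (fun i hi j hj hij =>
      hs.dis1 i (Finset.filter_subset _ _ hi) j (Finset.filter_subset _ _ hj) hij)
  rw [h1, h2]
  exact Finset.sum_congr rfl fun q hq => (hs.meas q (Finset.filter_subset _ _ hq)).symm


theorem two_split (hat : ∀ a : B, a ≠ ⊥ → ∃ b : B, b ≠ ⊥ ∧ b < a) (a : B) (ha : a ≠ ⊥) :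
    ∃ y z : B, y ≠ ⊥ ∧ z ≠ ⊥ ∧ Disjoint y z ∧ y ⊔ z = a := by
  obtain ⟨y, hy, hlt⟩ := hat a ha
  refine ⟨y, a ⊓ yᶜ, hy, ?_, ?_, ?_⟩
  · intro h
    have : a \ y = ⊥ := by rwa [sdiff_eq]
    exact absurd (le_antisymm hlt.le (sdiff_eq_bot_iff.mp this)) hlt.ne
  · exact disjoint_compl_right.mono_right inf_le_right
  · rw [sup_inf_left, sup_compl_eq_top, inf_top_eq, sup_eq_right.mpr hlt.le]

theorem measure_top_partition {ν : B → S} (hν : IsBAMeasure ν) {a b c : B}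
    (h : IsPartition3 a b c) : ν ⊤ = ν a + ν b + ν c := by
  obtain ⟨_, _, _, hab, hac, hbc, htop⟩ := h
  rw [← htop, hν.2 _ _ (hac.sup_left hbc), hν.2 _ _ hab]

theorem split_piece {μ lam : B → S} (hμ : IsBAMeasure μ) (hlam : IsBAMeasure lam)
    (h4μ : MeasHas4EP μ) (hSp : TrinarySpectrum lam ⊆ TrinarySpectrum μ)
    (hat : ∀ a : B, a ≠ ⊥ → ∃ b : B, b ≠ ⊥ ∧ b < a)
    {s : Finset (B × B)} (hs : Good μ lam s) {p : B × B} (hp : p ∈ s)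
    {x y : B} (hx : x ≠ ⊥) (hy : y ≠ ⊥) (hdxy : Disjoint x y) (hsup : x ⊔ y = p.1) :
    ∃ u v : B, u ≠ ⊥ ∧ v ≠ ⊥ ∧ Disjoint u v ∧ u ⊔ v = p.2 ∧ μ u = lam x ∧ μ v = lam y := by
  have hmeas : lam p.1 = lam x + lam y := by rw [← hsup, hlam.2 x y hdxy]
  by_cases hP : p.1 = ⊤
  · have h2 : p.2 = ⊤ := top_piece hμ hlam hs hp hP
    obtain ⟨y1, y2, hy1, hy2, hd12, hs12⟩ := two_split hat y hy
    have hy1y : y1 ≤ y := hs12 ▸ le_sup_left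
    have hy2y : y2 ≤ y := hs12 ▸ le_sup_right
    have hpart : IsPartition3 x y1 y2 :=
      ⟨hx, hy1, hy2, hdxy.mono_right hy1y, hdxy.mono_right hy2y, hd12, by
        rw [sup_assoc, hs12, hsup, hP]⟩
    obtain ⟨a', b', c', hp3, heq⟩ := hSp ⟨x, y1, y2, hpart, rfl⟩
    simp only [Prod.mk.injEq] at heq
    obtain ⟨e1, e2, e3⟩ := heq
    refine ⟨a', b' ⊔ c', hp3.1, ?_, hp3.2.2.2.1.sup_right hp3.2.2.2.2.1, ?_, e1.symm, ?_⟩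
    · intro h
      exact hp3.2.1 (le_bot_iff.mp (h ▸ le_sup_left))
    · rw [← sup_assoc, hp3.2.2.2.2.2.2, h2]
    · rw [hμ.2 _ _ hp3.2.2.2.2.2.1, ← e2, ← e3, ← hlam.2 _ _ hd12, hs12]
  · have hz : p.1ᶜ ≠ ⊥ := fun h => hP (by simpa using congrArg compl h)
    have hxp : x ≤ p.1 := hsup ▸ le_sup_left
    have hyp : y ≤ p.1 := hsup ▸ le_sup_right
    have hpart : IsPartition3 x y p.1ᶜ :=
      ⟨hx, hy, hz, hdxy, disjoint_compl_right.mono_left hxp,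
        disjoint_compl_right.mono_left hyp, by rw [hsup, sup_compl_eq_top]⟩
    obtain ⟨a', b', c', hp3, heq⟩ := hSp ⟨x, y, p.1ᶜ, hpart, rfl⟩
    simp only [Prod.mk.injEq] at heq
    obtain ⟨e1, e2, e3⟩ := heq
    obtain ⟨_, _, hcm⟩ := compl_piece hμ hlam hs hp
    obtain ⟨u, v, hu, hv, hduv, hmu, hmv, hsupuv⟩ :=
      h4μ a' b' c' p.2 hp3
        (by rw [← e1, ← e2, ← hmeas, hs.meas p hp])
        (by rw [← e3, hcm])
    exact ⟨u, v, hu.1, hv.1, hduv, hsupuv, by rw [hmu, ← e1], by rw [hmv, ← e2]⟩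


theorem extend {μ lam : B → S} (hμ : IsBAMeasure μ) (hlam : IsBAMeasure lam)
    (h4μ : MeasHas4EP μ) (hSp : TrinarySpectrum lam ⊆ TrinarySpectrum μ)
    (hat : ∀ a : B, a ≠ ⊥ → ∃ b : B, b ≠ ⊥ ∧ b < a)
    {s : Finset (B × B)} (hs : Good μ lam s) (c : B) :
    ∃ t, Good μ lam t ∧ Ref s t ∧ Splits t c := by
  have key : ∀ p : B × B, ∃ uv : B × B, p ∈ s → ¬(Disjoint p.1 c ∨ p.1 ≤ c) →
      uv.1 ≠ ⊥ ∧ uv.2 ≠ ⊥ ∧ Disjoint uv.1 uv.2 ∧ uv.1 ⊔ uv.2 = p.2 ∧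
      μ uv.1 = lam (p.1 ⊓ c) ∧ μ uv.2 = lam (p.1 ⊓ cᶜ) := by
    intro p
    by_cases h : p ∈ s ∧ ¬(Disjoint p.1 c ∨ p.1 ≤ c)
    · obtain ⟨hp, hnd⟩ := h
      push_neg at hnd
      obtain ⟨hnd1, hnd2⟩ := hnd
      have hx : p.1 ⊓ c ≠ ⊥ := fun h' => hnd1 (disjoint_iff.mpr h')
      have hy : p.1 ⊓ cᶜ ≠ ⊥ := by
        intro h'
        exact hnd2 (sdiff_eq_bot_iff.mp (by rwa [sdiff_eq]))
      have hd : Disjoint (p.1 ⊓ c) (p.1 ⊓ cᶜ) :=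
        (disjoint_compl_right.mono_left inf_le_right).mono_right inf_le_right
      have hsup : (p.1 ⊓ c) ⊔ (p.1 ⊓ cᶜ) = p.1 := by
        rw [← inf_sup_left, sup_compl_eq_top, inf_top_eq]
      obtain ⟨u, v, h1, h2, h3, h4, h5, h6⟩ :=
        split_piece hμ hlam h4μ hSp hat hs hp hx hy hd hsup
      exact ⟨(u, v), fun _ _ => ⟨h1, h2, h3, h4, h5, h6⟩⟩
    · exact ⟨(⊥, ⊥), fun hp hnd => absurd ⟨hp, hnd⟩ h⟩
  choose uv huv using key
  set F : B × B → Finset (B × B) := fun p =>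
    if Disjoint p.1 c ∨ p.1 ≤ c then {p}
    else {(p.1 ⊓ c, (uv p).1), (p.1 ⊓ cᶜ, (uv p).2)} with hF
  have hFmem : ∀ p ∈ s, ∀ q ∈ F p,
      q.1 ≠ ⊥ ∧ q.2 ≠ ⊥ ∧ μ q.2 = lam q.1 ∧ q.1 ≤ p.1 ∧ q.2 ≤ p.2 ∧
        (q.1 ≤ c ∨ Disjoint q.1 c) := by
    intro p hp q hq
    by_cases h : Disjoint p.1 c ∨ p.1 ≤ c
    · simp only [hF, if_pos h, Finset.mem_singleton] at hq
      subst hq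
      exact ⟨hs.nb1 q hp, hs.nb2 q hp, hs.meas q hp, le_rfl, le_rfl, h.symm⟩
    · obtain ⟨h1, h2, h3, h4, h5, h6⟩ := huv p hp h
      push_neg at h
      simp only [hF, if_neg (by push_neg; exact h : ¬(Disjoint p.1 c ∨ p.1 ≤ c)),
        Finset.mem_insert, Finset.mem_singleton] at hq
      rcases hq with rfl | rfl
      · exact ⟨fun h' => h.1 (disjoint_iff.mpr h'), h1, h5, inf_le_left,
          h4 ▸ le_sup_left, Or.inl inf_le_right⟩
      · refine ⟨fun h' => h.2 (sdiff_eq_bot_iff.mp (by rwa [sdiff_eq])), h2, h6,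
          inf_le_left, h4 ▸ le_sup_right, Or.inr (disjoint_compl_left.mono_left inf_le_right)⟩
  have hFdis : ∀ p ∈ s, ∀ q ∈ F p, ∀ q' ∈ F p, q ≠ q' →
      Disjoint q.1 q'.1 ∧ Disjoint q.2 q'.2 := by
    intro p hp q hq q' hq' hne
    by_cases h : Disjoint p.1 c ∨ p.1 ≤ c
    · simp only [hF, if_pos h, Finset.mem_singleton] at hq hq'
      exact absurd (hq.trans hq'.symm) hne
    · obtain ⟨h1, h2, h3, h4, h5, h6⟩ := huv p hp h
      have hd : Disjoint (p.1 ⊓ c) (p.1 ⊓ cᶜ) :=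
        (disjoint_compl_right.mono_left inf_le_right).mono_right inf_le_right
      simp only [hF, if_neg h, Finset.mem_insert, Finset.mem_singleton] at hq hq'
      rcases hq with rfl | rfl <;> rcases hq' with rfl | rfl
      · exact absurd rfl hne
      · exact ⟨hd, h3⟩
      · exact ⟨hd.symm, h3.symm⟩
      · exact absurd rfl hne
  have hFsup1 : ∀ p ∈ s, (F p).sup Prod.fst = p.1 := by
    intro p hp
    by_cases h : Disjoint p.1 c ∨ p.1 ≤ c
    · simp [hF, if_pos h]
    · simp only [hF, if_neg h, Finset.sup_insert, Finset.sup_singleton]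
      rw [← inf_sup_left, sup_compl_eq_top, inf_top_eq]
  have hFsup2 : ∀ p ∈ s, (F p).sup Prod.snd = p.2 := by
    intro p hp
    by_cases h : Disjoint p.1 c ∨ p.1 ≤ c
    · simp [hF, if_pos h]
    · obtain ⟨h1, h2, h3, h4, h5, h6⟩ := huv p hp h
      simp only [hF, if_neg h, Finset.sup_insert, Finset.sup_singleton]
      exact h4
  refine ⟨s.biUnion F, ?_, ?_, ?_⟩
  · constructor
    · intro q hq
      obtain ⟨p, hp, hqF⟩ := Finset.mem_biUnion.mp hq
      exact (hFmem p hp q hqF).1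
    · intro q hq
      obtain ⟨p, hp, hqF⟩ := Finset.mem_biUnion.mp hq
      exact (hFmem p hp q hqF).2.1
    · intro q hq
      obtain ⟨p, hp, hqF⟩ := Finset.mem_biUnion.mp hq
      exact (hFmem p hp q hqF).2.2.1
    · intro q hq q' hq' hne
      obtain ⟨p, hp, hqF⟩ := Finset.mem_biUnion.mp hq
      obtain ⟨p', hp', hqF'⟩ := Finset.mem_biUnion.mp hq'
      by_cases hpp : p = p'
      · subst hpp
        exact (hFdis p hp q hqF q' hqF' hne).1
      · exact (hs.dis1 p hp p' hp' hpp).mono (hFmem p hp q hqF).2.2.2.1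
          (hFmem p' hp' q' hqF').2.2.2.1
    · intro q hq q' hq' hne
      obtain ⟨p, hp, hqF⟩ := Finset.mem_biUnion.mp hq
      obtain ⟨p', hp', hqF'⟩ := Finset.mem_biUnion.mp hq'
      by_cases hpp : p = p'
      · subst hpp
        exact (hFdis p hp q hqF q' hqF' hne).2
      · exact (hs.dis2 p hp p' hp' hpp).mono (hFmem p hp q hqF).2.2.2.2.1
          (hFmem p' hp' q' hqF').2.2.2.2.1
    · rw [Finset.sup_biUnion, Finset.sup_congr rfl hFsup1]
      exact hs.top1
    · rw [Finset.sup_biUnion, Finset.sup_congr rfl hFsup2]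
      exact hs.top2
  · intro q hq
    obtain ⟨p, hp, hqF⟩ := Finset.mem_biUnion.mp hq
    exact ⟨p, hp, (hFmem p hp q hqF).2.2.2.1, (hFmem p hp q hqF).2.2.2.2.1⟩
  · intro q hq
    obtain ⟨p, hp, hqF⟩ := Finset.mem_biUnion.mp hq
    exact (hFmem p hp q hqF).2.2.2.2.2


theorem exists_partition3 [Nontrivial B]
    (hat : ∀ a : B, a ≠ ⊥ → ∃ b : B, b ≠ ⊥ ∧ b < a) :
    ∃ a b c : B, IsPartition3 a b c := by
  obtain ⟨a, b0, ha, hb0, hd, hs0⟩ := two_split hat ⊤ top_ne_bot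
  obtain ⟨y, z, hy, hz, hdyz, hsyz⟩ := two_split hat b0 hb0
  exact ⟨a, y, z, ha, hy, hz, hd.mono_right (hsyz ▸ le_sup_left),
    hd.mono_right (hsyz ▸ le_sup_right), hdyz, by rw [sup_assoc, hsyz, hs0]⟩

theorem top_meas_eq [Nontrivial B] {μ lam : B → S} (hμ : IsBAMeasure μ)
    (hlam : IsBAMeasure lam) (hSp : TrinarySpectrum lam ⊆ TrinarySpectrum μ)
    (hat : ∀ a : B, a ≠ ⊥ → ∃ b : B, b ≠ ⊥ ∧ b < a) : μ ⊤ = lam ⊤ := by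
  obtain ⟨a, b, c, h3⟩ := exists_partition3 hat
  obtain ⟨a', b', c', h3', heq⟩ := hSp ⟨a, b, c, h3, rfl⟩
  simp only [Prod.mk.injEq] at heq
  obtain ⟨e1, e2, e3⟩ := heq
  rw [measure_top_partition hμ h3', measure_top_partition hlam h3, e1, e2, e3]

theorem map_partition3 {a b c : B} (e : B ≃o B) (h : IsPartition3 a b c) :
    IsPartition3 (e a) (e b) (e c) := by
  obtain ⟨ha, hb, hc, hab, hac, hbc, htop⟩ := h
  have hbot : ∀ x : B, e x ≠ ⊥ → True := fun _ _ => trivial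
  have hne : ∀ x : B, x ≠ ⊥ → e x ≠ ⊥ := by
    intro x hx h'
    apply hx
    have := congrArg e.symm h'
    rwa [e.symm_apply_apply, map_bot] at this
  have hdis : ∀ x y : B, Disjoint x y → Disjoint (e x) (e y) := by
    intro x y hxy
    rw [disjoint_iff, ← map_inf, disjoint_iff.mp hxy, map_bot]
  exact ⟨hne a ha, hne b hb, hne c hc, hdis _ _ hab, hdis _ _ hac, hdis _ _ hbc, by
    rw [← map_sup, ← map_sup, htop, map_top]⟩

theorem spectrum_subset_of_iso {μ lam : B → S} (e : B ≃o B)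
    (h : ∀ b : B, lam b = μ (e b)) :
    TrinarySpectrum lam ⊆ TrinarySpectrum μ := by
  rintro t ⟨a, b, c, h3, rfl⟩
  exact ⟨e a, e b, e c, map_partition3 e h3, by rw [h a, h b, h c]⟩

end ConjBA

/-- two measures with (4EP) are conjugate by a Boolean algebra
automorphism iff their trinary spectra coincide. -/
theorem conjugate_iff_spectrum_eq [Countable B] [Nontrivial B]
    (hatomless : ∀ a : B, a ≠ ⊥ → ∃ b : B, b ≠ ⊥ ∧ b < a)
    (μ lam : B → S) (hμ : IsBAMeasure μ) (hlam : IsBAMeasure lam)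
    (h4μ : MeasHas4EP μ) (h4lam : MeasHas4EP lam) :
    (∃ Φ : B ≃o B, ∀ b : B, lam b = μ (Φ b)) ↔
      TrinarySpectrum lam = TrinarySpectrum μ := by
  classical
  constructor
  · rintro ⟨Φ, hΦ⟩
    refine Set.Subset.antisymm (ConjBA.spectrum_subset_of_iso Φ hΦ) ?_
    refine ConjBA.spectrum_subset_of_iso Φ.symm (fun b => ?_)
    rw [hΦ (Φ.symm b), Φ.apply_symm_apply]
  · intro hSpEq
    have hSp1 : TrinarySpectrum lam ⊆ TrinarySpectrum μ := hSpEq.le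
    have hSp2 : TrinarySpectrum μ ⊆ TrinarySpectrum lam := hSpEq.ge
    obtain ⟨e, he⟩ := exists_surjective_nat B
    have hbase : ConjBA.Good μ lam {((⊤ : B), (⊤ : B))} := by
      constructor
      · intro p hp; rw [Finset.mem_singleton] at hp; subst hp; exact top_ne_bot
      · intro p hp; rw [Finset.mem_singleton] at hp; subst hp; exact top_ne_bot
      · intro p hp; rw [Finset.mem_singleton] at hp; subst hp
        exact ConjBA.top_meas_eq hμ hlam hSp1 hatomless
      · intro p hp q hq hne
        rw [Finset.mem_singleton] at hp hq
        exact absurd (hp.trans hq.symm) hne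
      · intro p hp q hq hne
        rw [Finset.mem_singleton] at hp hq
        exact absurd (hp.trans hq.symm) hne
      · simp
      · simp
    have step : ∀ c : B, ∀ s : {s : Finset (B × B) // ConjBA.Good μ lam s},
        ∃ t : {s : Finset (B × B) // ConjBA.Good μ lam s},
          ConjBA.Ref s.1 t.1 ∧ ConjBA.Splits t.1 c ∧ ConjBA.SplitsSnd t.1 c := by
      rintro c ⟨s, hs⟩
      obtain ⟨t1, ht1g, ht1r, ht1s⟩ := ConjBA.extend hμ hlam h4μ hSp1 hatomless hs c
      obtain ⟨t2, ht2g, ht2r, ht2s⟩ :=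
        ConjBA.extend hlam hμ h4lam hSp2 hatomless ht1g.swap c
      have hr12 : ConjBA.Ref t1 (t2.image Prod.swap) := by
        have := ht2r.swap
        rwa [ConjBA.swap_swap_image] at this
      exact ⟨⟨t2.image Prod.swap, ht2g.swap⟩, ht1r.trans hr12, ht1s.mono hr12, ht2s.swap⟩
    choose next hnext1 hnext2 hnext3 using step
    let G : ℕ → {s : Finset (B × B) // ConjBA.Good μ lam s} :=
      fun n => Nat.rec ⟨{((⊤ : B), (⊤ : B))}, hbase⟩ (fun n ih => next (e n) ih) n
    have hchain : ∀ m n, m ≤ n → ConjBA.Ref (G m).1 (G n).1 := by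
      intro m n h
      induction n, h using Nat.le_induction with
      | base => exact ConjBA.Ref.refl _
      | succ n hmn ih => exact ih.trans (hnext1 (e n) (G n))
    choose idx hidx using he
    have key2 : ∀ n : ℕ, ConjBA.Splits (G (n + 1)).1 (e n) := fun n =>
      hnext2 (e n) (G n)
    have key3 : ∀ n : ℕ, ConjBA.SplitsSnd (G (n + 1)).1 (e n) := fun n =>
      hnext3 (e n) (G n)
    have hsplitc : ∀ c : B, ConjBA.Splits (G (idx c + 1)).1 c := by
      intro c
      have := key2 (idx c)
      rwa [hidx c] at this
    have hsplitsndc : ∀ c : B, ConjBA.SplitsSnd (G (idx c + 1)).1 c := by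
      intro c
      have := key3 (idx c)
      rwa [hidx c] at this
    set Φ : B → B := fun c => ConjBA.val (G (idx c + 1)).1 c with hΦdef
    have hstable : ∀ (c : B) (n : ℕ), idx c + 1 ≤ n → ConjBA.val (G n).1 c = Φ c :=
      fun c n h =>
        ConjBA.val_stable (G (idx c + 1)).2 (G n).2 (hchain _ _ h) (hsplitc c)
    have hiff : ∀ c d : B, Φ c ≤ Φ d ↔ c ≤ d := by
      intro c d
      rw [← hstable c (max (idx c + 1) (idx d + 1)) (le_max_left _ _),
        ← hstable d (max (idx c + 1) (idx d + 1)) (le_max_right _ _)]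
      exact ConjBA.val_le_val_iff (G _).2
        ((hsplitc c).mono (hchain _ _ (le_max_left _ _)))
        ((hsplitc d).mono (hchain _ _ (le_max_right _ _)))
    have hmeas : ∀ c : B, lam c = μ (Φ c) := fun c =>
      ConjBA.val_measure hμ hlam (G (idx c + 1)).2 (hsplitc c)
    have hsurj : Function.Surjective Φ := by
      intro y
      obtain ⟨hspl, hval⟩ := ConjBA.val_coval (G (idx y + 1)).2 (hsplitsndc y)
      refine ⟨ConjBA.coval (G (idx y + 1)).1 y, ?_⟩
      set c := ConjBA.coval (G (idx y + 1)).1 y with hc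
      have h1 : ConjBA.val (G (max (idx y + 1) (idx c + 1))).1 c = Φ c :=
        hstable c _ (le_max_right _ _)
      have h2 : ConjBA.val (G (max (idx y + 1) (idx c + 1))).1 c
          = ConjBA.val (G (idx y + 1)).1 c :=
        ConjBA.val_stable (G (idx y + 1)).2 (G _).2 (hchain _ _ (le_max_left _ _)) hspl
      rw [← h1, h2, hval]
    have hinj : Function.Injective Φ := fun c d h =>
      le_antisymm ((hiff c d).mp h.le) ((hiff d c).mp h.ge)
    exact ⟨{ toEquiv := Equiv.ofBijective Φ ⟨hinj, hsurj⟩,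
             map_rel_iff' := fun {a b} => hiff a b }, fun b => hmeas b⟩
end

section
/- Let μ be a homogeneous S-valued measure on 𝔹 with trinary spectrum Σ = Σ(μ). Then Σ satisfies: (Sp1) Σ is invariant under all permutations of the three coordinates; (Sp2) a+b+c = p+q+r for all (a,b,c),(p,q,r) ∈ Σ; (Sp3) if (a,b,c+d) ∈ Σ and (a+b,c,d) ∈ Σ then (a,b+c,d) ∈ Σ; and (Sp4a) for any (a,b,c) ∈ Σ there exists (x,y,z) ∈ Σ with a = x+y and z = b+c. -/
variable {B : Type*} [BooleanAlgebra B] {S : Type*} [AddCommMonoid S]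

lemma part3_swap12 {a b c : B} (h : IsPartition3 a b c) : IsPartition3 b a c := by
  obtain ⟨ha, hb, hc, hab, hac, hbc, htop⟩ := h
  exact ⟨hb, ha, hc, hab.symm, hbc, hac, by rwa [sup_comm b a]⟩

lemma part3_swap23 {a b c : B} (h : IsPartition3 a b c) : IsPartition3 a c b := by
  obtain ⟨ha, hb, hc, hab, hac, hbc, htop⟩ := h
  refine ⟨ha, hc, hb, hac, hab, hbc.symm, ?_⟩
  rwa [sup_assoc, sup_comm c b, ← sup_assoc]

lemma meas_top_eq {μ : B → S} (hμ : IsBAMeasure μ) {a b c : B}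
    (h : IsPartition3 a b c) : μ ⊤ = μ a + μ b + μ c := by
  obtain ⟨_, _, _, hab, hac, hbc, htop⟩ := h
  rw [← htop, hμ.2 _ _ (hac.sup_left hbc), hμ.2 _ _ hab]

lemma iso_ne_bot (φ : B ≃o B) {a : B} (ha : a ≠ ⊥) : φ a ≠ ⊥ := by
  intro h
  exact ha (φ.injective (h.trans φ.map_bot.symm))

lemma iso_disjoint (φ : B ≃o B) {a b : B} (h : Disjoint a b) :
    Disjoint (φ a) (φ b) := by
  rw [disjoint_iff, ← φ.map_inf, disjoint_iff.mp h, φ.map_bot]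

/-- the trinary spectrum of a homogeneous measure satisfies
(Sp1), (Sp2), (Sp3) and (Sp4a). -/
theorem spectrum_axioms [Countable B] [Nontrivial B]
    (hatomless : ∀ a : B, a ≠ ⊥ → ∃ b : B, b ≠ ⊥ ∧ b < a)
    (μ : B → S) (hμ : IsBAMeasure μ) (hhom : MeasHomogeneous μ) :
    (∀ a b c : S, (a, b, c) ∈ TrinarySpectrum μ →
      (b, a, c) ∈ TrinarySpectrum μ ∧ (a, c, b) ∈ TrinarySpectrum μ ∧
      (c, b, a) ∈ TrinarySpectrum μ ∧ (b, c, a) ∈ TrinarySpectrum μ ∧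
      (c, a, b) ∈ TrinarySpectrum μ) ∧
    (∀ a b c p q r : S, (a, b, c) ∈ TrinarySpectrum μ →
      (p, q, r) ∈ TrinarySpectrum μ → a + b + c = p + q + r) ∧
    (∀ a b c d : S, (a, b, c + d) ∈ TrinarySpectrum μ →
      (a + b, c, d) ∈ TrinarySpectrum μ → (a, b + c, d) ∈ TrinarySpectrum μ) ∧
    (∀ a b c : S, (a, b, c) ∈ TrinarySpectrum μ →
      ∃ x y z : S, (x, y, z) ∈ TrinarySpectrum μ ∧ a = x + y ∧ z = b + c) := by
  refine ⟨?_, ?_, ?_, ?_⟩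
  · -- Sp1
    rintro a b c ⟨x, y, z, hp, heq⟩
    obtain ⟨ha, hb, hc⟩ : a = μ x ∧ b = μ y ∧ c = μ z := by
      simpa [Prod.ext_iff] using heq
    subst ha; subst hb; subst hc
    exact ⟨⟨y, x, z, part3_swap12 hp, rfl⟩,
      ⟨x, z, y, part3_swap23 hp, rfl⟩,
      ⟨z, y, x, part3_swap12 (part3_swap23 (part3_swap12 hp)), rfl⟩,
      ⟨y, z, x, part3_swap23 (part3_swap12 hp), rfl⟩,
      ⟨z, x, y, part3_swap12 (part3_swap23 hp), rfl⟩⟩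
  · -- Sp2
    rintro a b c p q r ⟨x, y, z, hp, heq⟩ ⟨u, v, w, hq, heq'⟩
    obtain ⟨ha, hb, hc⟩ : a = μ x ∧ b = μ y ∧ c = μ z := by
      simpa [Prod.ext_iff] using heq
    obtain ⟨hp', hq', hr'⟩ : p = μ u ∧ q = μ v ∧ r = μ w := by
      simpa [Prod.ext_iff] using heq'
    subst ha; subst hb; subst hc; subst hp'; subst hq'; subst hr'
    rw [← meas_top_eq hμ hp, ← meas_top_eq hμ hq]
  · -- Sp3
    rintro a b c d ⟨a₁, b₁, e₁, hp1, heq1⟩ ⟨f₂, c₂, d₂, hp2, heq2⟩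
    obtain ⟨ha, hb, he⟩ : a = μ a₁ ∧ b = μ b₁ ∧ c + d = μ e₁ := by
      simpa [Prod.ext_iff] using heq1
    obtain ⟨hf, hc, hd⟩ : a + b = μ f₂ ∧ c = μ c₂ ∧ d = μ d₂ := by
      simpa [Prod.ext_iff] using heq2
    obtain ⟨ha₁, hb₁, he₁, hab₁, hae₁, hbe₁, htop₁⟩ := hp1
    obtain ⟨hf₂, hc₂, hd₂, hfc₂, hfd₂, hcd₂, htop₂⟩ := hp2
    -- complements
    have hcompl1 : (a₁ ⊔ b₁)ᶜ = e₁ :=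
      (IsCompl.of_eq (disjoint_iff.mp (hae₁.sup_left hbe₁)) htop₁).compl_eq
    have hcompl2 : f₂ᶜ = c₂ ⊔ d₂ :=
      (IsCompl.of_eq (disjoint_iff.mp (hfc₂.sup_right hfd₂))
        (by rwa [← sup_assoc])).compl_eq
    -- properness
    have hprop1 : IsProperElem (a₁ ⊔ b₁) := by
      constructor
      · intro h; exact ha₁ (by simpa using (sup_eq_bot_iff.mp h).1)
      · intro h
        exact he₁ (disjoint_iff.mp ((hae₁.sup_left hbe₁).symm.mono_right h.ge) |>.symm ▸
          (by simpa [h] using disjoint_iff.mp (hae₁.sup_left hbe₁).symm))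
    have hprop2 : IsProperElem f₂ := by
      refine ⟨hf₂, fun h => hc₂ ?_⟩
      have := hfc₂.symm.mono_right h.ge
      simpa [disjoint_iff] using (by simpa [h] using disjoint_iff.mp hfc₂ : ⊤ ⊓ c₂ = ⊥)
    -- measures
    have hmab : μ (a₁ ⊔ b₁) = μ f₂ := by rw [hμ.2 _ _ hab₁, ← ha, ← hb, hf]
    have hmcompl : μ (a₁ ⊔ b₁)ᶜ = μ f₂ᶜ := by
      rw [hcompl1, hcompl2, hμ.2 _ _ hcd₂, ← he, ← hc, ← hd]
    obtain ⟨φ, hφμ, hφ⟩ := hhom _ _ hprop1 hprop2 hmab hmcompl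
    have hφsup : φ a₁ ⊔ φ b₁ = f₂ := by rw [← φ.map_sup, hφ]
    have hφa_le : φ a₁ ≤ f₂ := hφsup ▸ le_sup_left
    have hφb_le : φ b₁ ≤ f₂ := hφsup ▸ le_sup_right
    refine ⟨φ a₁, φ b₁ ⊔ c₂, d₂, ⟨iso_ne_bot φ ha₁, ?_, hd₂, ?_, ?_, ?_, ?_⟩, ?_⟩
    · intro h; exact hc₂ (sup_eq_bot_iff.mp h).2
    · exact (iso_disjoint φ hab₁).sup_right (hfc₂.mono_left hφa_le)
    · exact hfd₂.mono_left hφa_le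
    · exact (hfd₂.mono_left hφb_le).sup_left hcd₂
    · rw [← sup_assoc (φ a₁), hφsup]; exact htop₂
    · have hbc : μ (φ b₁ ⊔ c₂) = b + c := by
        rw [hμ.2 _ _ ((hfc₂.mono_left hφb_le)), hφμ, ← hb, ← hc]
      rw [Prod.ext_iff, Prod.ext_iff]
      exact ⟨by rw [hφμ, ha], by rw [hbc], hd⟩
  · -- Sp4a
    rintro a b c ⟨x, y, z, hp, heq⟩
    obtain ⟨ha, hb, hc⟩ : a = μ x ∧ b = μ y ∧ c = μ z := by
      simpa [Prod.ext_iff] using heq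
    obtain ⟨hx, hy, hz, hxy, hxz, hyz, htop⟩ := hp
    obtain ⟨u, hu, hult⟩ := hatomless x hx
    have hvne : x \ u ≠ ⊥ := fun h => (not_le_of_gt hult) (sdiff_eq_bot_iff.mp h)
    have huv : u ⊔ x \ u = x := sup_sdiff_cancel_right hult.le
    refine ⟨μ u, μ (x \ u), μ (y ⊔ z), ⟨u, x \ u, y ⊔ z, ⟨hu, hvne, ?_, disjoint_sdiff_self_right, ?_, ?_, ?_⟩, rfl⟩, ?_, ?_⟩
    · intro h; exact hy (sup_eq_bot_iff.mp h).1
    · exact (hxy.mono_left hult.le).sup_right (hxz.mono_left hult.le)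
    · exact (hxy.mono_left sdiff_le).sup_right (hxz.mono_left sdiff_le)
    · rw [huv, ← sup_assoc]; exact htop
    · conv_lhs => rw [ha, ← huv]
      exact hμ.2 _ _ disjoint_sdiff_self_right
    · rw [hμ.2 _ _ hyz, hb, hc]
end

section
/- Let μ be a homogeneous S-valued measure on 𝔹, let j ∈ 𝔹 be proper, and let d = μ(1∖j). Then the restriction μ↾j to the relative Boolean algebra 𝔹↾j = {x∧j : x ∈ 𝔹} is homogeneous, and its trinary spectrum equals {(a,b,c) : a+b+c = μ(j), (a,b,c+d) ∈ Σ(μ), and (a+b,c,d) ∈ Σ(μ)}. -/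
variable {B : Type*} [BooleanAlgebra B] {S : Type*} [AddCommMonoid S]

/-- A partition of the relative algebra `B ↾ j` into three nonzero disjoint pieces. -/
def IsPartition3On (j a b c : B) : Prop :=
  a ≠ ⊥ ∧ b ≠ ⊥ ∧ c ≠ ⊥ ∧ Disjoint a b ∧ Disjoint a c ∧ Disjoint b c ∧ a ⊔ b ⊔ c = j

/-- The trinary spectrum of the restriction `μ ↾ j`. -/
def TrinarySpectrumOn (μ : B → S) (j : B) : Set (S × S × S) :=
  {t | ∃ a b c : B, IsPartition3On j a b c ∧ t = (μ a, μ b, μ c)}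

/-- Homogeneity of the restriction `μ ↾ j` (automorphisms of the relative
algebra `B ↾ j` are identified with automorphisms of `B` fixing `j`). -/
def MeasHomogeneousOn (μ : B → S) (j : B) : Prop :=
  ∀ a b : B, a ≤ j → b ≤ j → a ≠ ⊥ → a ≠ j → b ≠ ⊥ → b ≠ j →
    μ a = μ b → μ (j \ a) = μ (j \ b) →
    ∃ φ : B ≃o B, (∀ x : B, x ≤ j → μ (φ x) = μ x) ∧ φ j = j ∧ φ a = b


set_option linter.unusedSectionVars false

namespace BFaux

/-- supremum of a list -/
def supl (l : List B) : B := l.foldr (· ⊔ ·) ⊥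

@[simp] lemma supl_nil : supl ([] : List B) = ⊥ := rfl
@[simp] lemma supl_cons (a : B) (l : List B) : supl (a :: l) = a ⊔ supl l := rfl

lemma supl_append (l₁ l₂ : List B) : supl (l₁ ++ l₂) = supl l₁ ⊔ supl l₂ := by
  induction l₁ with
  | nil => simp
  | cons a l ih => simp [ih, sup_assoc]

lemma le_supl {l : List B} {a : B} (h : a ∈ l) : a ≤ supl l := by
  induction l with
  | nil => cases h
  | cons b l ih =>
    rcases List.mem_cons.1 h with rfl | h
    · exact le_sup_left
    · exact le_sup_of_le_right (ih h)

lemma supl_le {l : List B} {x : B} (h : ∀ a ∈ l, a ≤ x) : supl l ≤ x := by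
  induction l with
  | nil => exact bot_le
  | cons b l ih => exact sup_le (h b (.head _)) (ih fun a ha => h a (.tail _ ha))

lemma supl_perm {l₁ l₂ : List B} (h : l₁.Perm l₂) : supl l₁ = supl l₂ := by
  induction h with
  | nil => rfl
  | cons a _ ih => simp [ih]
  | swap a b l => simp [← sup_assoc, sup_comm b a]
  | trans _ _ ih₁ ih₂ => rw [ih₁, ih₂]

lemma disjoint_supl {l : List B} {x : B} (h : ∀ a ∈ l, Disjoint x a) : Disjoint x (supl l) := by
  induction l with
  | nil => simp
  | cons b l ih =>
    simp only [supl_cons, disjoint_sup_right]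
    exact ⟨h b (.head _), ih fun a ha => h a (.tail _ ha)⟩

lemma inf_supl (x : B) (l : List B) : x ⊓ supl l = supl (l.map (x ⊓ ·)) := by
  induction l with
  | nil => simp
  | cons a l ih => simp [inf_sup_left, ih]

lemma meas_supl {μ : B → S} (hμ : IsBAMeasure μ) : ∀ {l : List B}, l.Pairwise Disjoint →
    μ (supl l) = (l.map μ).sum := by
  intro l hd
  induction l with
  | nil => simpa using hμ.1
  | cons a l ih =>
    obtain ⟨h1, h2⟩ := List.pairwise_cons.1 hd
    have hdis : Disjoint a (supl l) := disjoint_supl h1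
    simp only [supl_cons, List.map_cons, List.sum_cons]
    rw [hμ.2 a (supl l) hdis, ih h2]



/-- matched pair of partitions -/
structure Good (μ : B → S) (P : List (B × B)) : Prop where
  nb : ∀ p ∈ P, p.1 ≠ ⊥ ∧ p.2 ≠ ⊥
  meq : ∀ p ∈ P, μ p.1 = μ p.2
  ds : P.Pairwise fun p q => Disjoint p.1 q.1
  dt : P.Pairwise fun p q => Disjoint p.2 q.2
  ss : supl (P.map Prod.fst) = ⊤
  st : supl (P.map Prod.snd) = ⊤
  len : 2 ≤ P.length

lemma Good.swap {μ : B → S} {P : List (B × B)} (h : Good μ P) : Good μ (P.map Prod.swap) where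
  nb := by intro p hp; obtain ⟨q, hq, rfl⟩ := List.mem_map.1 hp; exact ⟨(h.nb q hq).2, (h.nb q hq).1⟩
  meq := by intro p hp; obtain ⟨q, hq, rfl⟩ := List.mem_map.1 hp; exact (h.meq q hq).symm
  ds := by rw [List.pairwise_map]; exact h.dt
  dt := by rw [List.pairwise_map]; exact h.ds
  ss := by rw [List.map_map]; exact h.st
  st := by rw [List.map_map]; exact h.ss
  len := by rw [List.length_map]; exact h.len

lemma swap_swap (P : List (B × B)) : (P.map Prod.swap).map Prod.swap = P := by
  rw [List.map_map]; simp

lemma exists_other {P : List (B × B)} (hlen : 2 ≤ P.length) {p : B × B} (hp : p ∈ P)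
    {R : (B × B) → (B × B) → Prop} (hR : Symmetric R) (hPw : P.Pairwise R) :
    ∃ q ∈ P, R p q := by
  match P, hlen with
  | a :: b :: t, _ =>
    obtain ⟨h1, h2⟩ := List.pairwise_cons.1 hPw
    rcases List.mem_cons.1 hp with rfl | hp'
    · exact ⟨b, List.mem_cons_of_mem _ (.head _), h1 b (.head _)⟩
    · exact ⟨a, .head _, hR (h1 p hp')⟩

lemma Good.src_ne_top {μ : B → S} {P : List (B × B)} (h : Good μ P) {p : B × B} (hp : p ∈ P) :
    p.1 ≠ ⊤ := by
  obtain ⟨q, hq, hdis⟩ := exists_other h.len hp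
    (fun _ _ hab => Disjoint.symm hab) h.ds
  intro htop
  exact (h.nb q hq).1 (by simpa [htop, disjoint_iff] using hdis)

lemma Good.tgt_ne_top {μ : B → S} {P : List (B × B)} (h : Good μ P) {p : B × B} (hp : p ∈ P) :
    p.2 ≠ ⊤ :=
  h.swap.src_ne_top (List.mem_map_of_mem (f := Prod.swap) hp)

lemma Good.compl_eq_src {μ : B → S} {P : List (B × B)} (h : Good μ P) {p : B × B} (hp : p ∈ P)
    {Q : List (B × B)} (hQ : P.Perm (p :: Q)) : p.1ᶜ = supl (Q.map Prod.fst) := by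
  have hperm : (P.map Prod.fst).Perm (p.1 :: Q.map Prod.fst) := hQ.map Prod.fst
  have hsup : p.1 ⊔ supl (Q.map Prod.fst) = ⊤ := by
    rw [← supl_cons, ← supl_perm hperm, h.ss]
  have hpw : (p :: Q).Pairwise fun p q : B × B => Disjoint p.1 q.1 :=
    (hQ.pairwise_iff (fun hab => Disjoint.symm hab)).1 h.ds
  have hdis : Disjoint p.1 (supl (Q.map Prod.fst)) := by
    refine disjoint_supl ?_
    intro a ha
    obtain ⟨q, hq, rfl⟩ := List.mem_map.1 ha
    exact (List.pairwise_cons.1 hpw).1 q hq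
  exact (IsCompl.symm ⟨hdis.symm, codisjoint_iff.2 (by rwa [sup_comm])⟩).compl_eq
  -- IsCompl p.1 x → p.1ᶜ = x

lemma Good.meas_compl {μ : B → S} (hμ : IsBAMeasure μ) {P : List (B × B)} (h : Good μ P)
    {p : B × B} (hp : p ∈ P) : μ p.1ᶜ = μ p.2ᶜ := by
  obtain ⟨s, t, rfl⟩ := List.append_of_mem hp
  set Q := s ++ t with hQdef
  have hQ : (s ++ p :: t).Perm (p :: Q) := List.perm_middle
  have h1 := h.compl_eq_src hp hQ
  have h2 := h.swap.compl_eq_src (p := p.swap) (Q := Q.map Prod.swap)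
    (List.mem_map_of_mem (f := Prod.swap) hp) (by simpa using hQ.map Prod.swap)
  have h2' : p.2ᶜ = supl (Q.map Prod.snd) := by
    simpa [List.map_map, Function.comp_def] using h2
  have hpwtail : (p :: Q).Pairwise fun p q : B × B => Disjoint p.1 q.1 :=
    (hQ.pairwise_iff (fun hab => Disjoint.symm hab)).1 h.ds
  have hpwtail2 : (p.swap :: Q.map Prod.swap).Pairwise fun p q : B × B => Disjoint p.1 q.1 := by
    have : ((s ++ p :: t).map Prod.swap).Perm (p.swap :: Q.map Prod.swap) := by
      simpa using hQ.map Prod.swap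
    exact (this.pairwise_iff (fun hab => Disjoint.symm hab)).1 h.swap.ds
  have hpwQs : (Q.map Prod.fst).Pairwise Disjoint := by
    rw [List.pairwise_map]; exact (List.pairwise_cons.1 hpwtail).2
  have hpwQt : (Q.map Prod.snd).Pairwise Disjoint := by
    have := (List.pairwise_cons.1 hpwtail2).2
    rw [List.pairwise_map] at this ⊢
    simpa using this
  rw [h1, h2', meas_supl hμ hpwQs, meas_supl hμ hpwQt, List.map_map, List.map_map]
  refine congrArg List.sum (List.map_congr_left ?_)
  intro q hq
  exact h.meq q (hQ.symm.subset (List.mem_cons_of_mem _ hq))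

-- ### part C
def Refines (P Q : List (B × B)) : Prop := ∀ q ∈ Q, ∃ p ∈ P, q.1 ≤ p.1 ∧ q.2 ≤ p.2

lemma Refines.rfl {P : List (B × B)} : Refines P P := fun q hq => ⟨q, hq, le_rfl, le_rfl⟩

lemma Refines.trans {P Q R : List (B × B)} (h1 : Refines P Q) (h2 : Refines Q R) :
    Refines P R := by
  intro r hr
  obtain ⟨q, hq, h3, h4⟩ := h2 r hr
  obtain ⟨p, hp, h5, h6⟩ := h1 q hq
  exact ⟨p, hp, h3.trans h5, h4.trans h6⟩

lemma Refines.swap {P Q : List (B × B)} (h : Refines P Q) :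
    Refines (P.map Prod.swap) (Q.map Prod.swap) := by
  intro q hq
  obtain ⟨q', hq', rfl⟩ := List.mem_map.1 hq
  obtain ⟨p, hp, h1, h2⟩ := h q' hq'
  exact ⟨p.swap, List.mem_map_of_mem hp, h2, h1⟩

def Resolved (x : B) (P : List (B × B)) : Prop := ∀ p ∈ P, p.1 ≤ x ∨ Disjoint p.1 x

lemma Resolved.of_refines {P Q : List (B × B)} {x : B} (h : Refines P Q) (hx : Resolved x P) :
    Resolved x Q := by
  intro q hq
  obtain ⟨p, hp, h1, _⟩ := h q hq
  rcases hx p hp with h2 | h2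
  · exact Or.inl (h1.trans h2)
  · exact Or.inr (h2.mono_left h1)

open Classical in
noncomputable def flt (P : List (B × B)) (x : B) : List (B × B) :=
  P.filter fun p => decide (p.1 ≤ x)

open Classical in
lemma mem_flt {P : List (B × B)} {x : B} {p : B × B} : p ∈ flt P x ↔ p ∈ P ∧ p.1 ≤ x := by
  simp [flt, List.mem_filter]

noncomputable def T (P : List (B × B)) (x : B) : B := supl ((flt P x).map Prod.snd)

lemma le_T {P : List (B × B)} {x : B} {p : B × B} (hp : p ∈ P) (hle : p.1 ≤ x) : p.2 ≤ T P x :=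
  le_supl (List.mem_map_of_mem (mem_flt.2 ⟨hp, hle⟩))

lemma T_le {P : List (B × B)} {x y : B} (h : ∀ p ∈ P, p.1 ≤ x → p.2 ≤ y) : T P x ≤ y := by
  refine supl_le ?_
  intro a ha
  obtain ⟨p, hp, rfl⟩ := List.mem_map.1 ha
  exact h p (mem_flt.1 hp).1 (mem_flt.1 hp).2

lemma T_mono {P : List (B × B)} {x x' : B} (h : x ≤ x') : T P x ≤ T P x' :=
  T_le fun p hp hle => le_T hp (hle.trans h)

/-- two entries of a Good list with distinct first coordinates have disjoint coords -/
lemma Good.disj_of_fst_ne {μ : B → S} {P : List (B × B)} (h : Good μ P) {p q : B × B}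
    (hp : p ∈ P) (hq : q ∈ P) (hne : p.1 ≠ q.1) :
    Disjoint p.1 q.1 ∧ Disjoint p.2 q.2 := by
  have hpq : p ≠ q := fun e => hne (by rw [e])
  constructor
  · haveI : Std.Symm (fun p q : B × B => Disjoint p.1 q.1) := ⟨fun _ _ hab => Disjoint.symm hab⟩
    exact List.Pairwise.forall h.ds hp hq hpq
  · haveI : Std.Symm (fun p q : B × B => Disjoint p.2 q.2) := ⟨fun _ _ hab => Disjoint.symm hab⟩
    exact List.Pairwise.forall h.dt hp hq hpq

/-- a piece contained in x is never disjoint from x -/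
lemma not_both {μ : B → S} {P : List (B × B)} (h : Good μ P) {p : B × B} (hp : p ∈ P) {x : B}
    (h1 : p.1 ≤ x) (h2 : Disjoint p.1 x) : False :=
  (h.nb p hp).1 (le_bot_iff.1 (h2 le_rfl h1))

/-- L2: stability of T under refinement -/
lemma T_stable {μ : B → S} {P Q : List (B × B)} (hP : Good μ P) (hQ : Good μ Q)
    (hr : Refines P Q) {x : B} (hx : Resolved x P) : T Q x = T P x := by
  apply le_antisymm
  · refine T_le fun q hq hle => ?_
    obtain ⟨p, hp, h1, h2⟩ := hr q hq
    rcases hx p hp with h3 | h3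
    · exact h2.trans (le_T hp h3)
    · exact absurd (h3.mono_left h1) (fun hd => not_both hQ hq hle hd)
  · refine T_le fun p hp hle => ?_
    -- p.2 ≤ T Q x : decompose p.2 along targets of Q
    have : p.2 = p.2 ⊓ supl (Q.map Prod.snd) := by rw [hQ.st, inf_top_eq]
    rw [this, inf_supl]
    refine supl_le ?_
    intro a ha
    obtain ⟨b, hb, rfl⟩ := List.mem_map.1 ha
    obtain ⟨q, hq, rfl⟩ := List.mem_map.1 hb
    obtain ⟨p₀, hp₀, h1, h2⟩ := hr q hq
    rcases hx p₀ hp₀ with h3 | h3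
    · exact inf_le_right.trans (le_T hq (h1.trans h3))
    · -- p₀ disjoint from x, p.1 ≤ x nonbot ⇒ p.1 ≠ p₀.1 ⇒ targets disjoint
      have hne : p.1 ≠ p₀.1 := by
        intro e
        exact not_both hP hp hle (e ▸ h3)
      have hdt : Disjoint p.2 p₀.2 := (hP.disj_of_fst_ne hp hp₀ hne).2
      have hbot : p.2 ⊓ q.2 = ⊥ := disjoint_iff.1 (hdt.mono_right h2)
      rw [hbot]
      exact bot_le

/-- L4: on a resolved element, the sources of the filtered list sup to x. -/
lemma supl_flt_fst {μ : B → S} {P : List (B × B)} (hP : Good μ P) {x : B}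
    (hx : Resolved x P) : supl ((flt P x).map Prod.fst) = x := by
  apply le_antisymm
  · refine supl_le ?_
    intro a ha
    obtain ⟨p, hp, rfl⟩ := List.mem_map.1 ha
    exact (mem_flt.1 hp).2
  · have h0 : x ⊓ supl (P.map Prod.fst) ≤ supl ((flt P x).map Prod.fst) := by
      rw [inf_supl]
      refine supl_le ?_
      intro a ha
      obtain ⟨b, hb, rfl⟩ := List.mem_map.1 ha
      obtain ⟨p, hp, rfl⟩ := List.mem_map.1 hb
      rcases hx p hp with h1 | h1
      · exact inf_le_right.trans (le_supl (List.mem_map_of_mem (mem_flt.2 ⟨hp, h1⟩)))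
      · rw [inf_comm, disjoint_iff.1 h1]
        exact bot_le
    calc x = x ⊓ supl (P.map Prod.fst) := by rw [hP.ss, inf_top_eq]
    _ ≤ _ := h0

open Classical in
/-- flt of the swapped list at T P x equals the swap of flt P x. -/
lemma flt_swap_T {μ : B → S} {P : List (B × B)} (hP : Good μ P) {x : B} (hx : Resolved x P) :
    flt (P.map Prod.swap) (T P x) = (flt P x).map Prod.swap := by
  unfold flt
  rw [List.filter_map]
  refine congrArg _ (List.filter_congr ?_)
  intro p hp
  simp only [Function.comp_apply, Prod.fst_swap, decide_eq_decide]
  constructor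
  · intro h2
    rcases hx p hp with h1 | h1
    · exact h1
    · exfalso
      have hdis : Disjoint p.2 (T P x) := by
        refine disjoint_supl ?_
        intro a ha
        obtain ⟨q, hq, rfl⟩ := List.mem_map.1 ha
        obtain ⟨hqP, hqle⟩ := mem_flt.1 hq
        have hne : q.1 ≠ p.1 := fun e => not_both hP hqP hqle (e ▸ h1)
        exact ((hP.disj_of_fst_ne hqP hp hne).2).symm
      exact (hP.nb p hp).2 (le_bot_iff.1 (hdis le_rfl h2))
  · intro h1
    exact le_T hp h1

/-- L5 transfer: resolvedness moves to targets -/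
lemma T_transfer_resolved {μ : B → S} {P : List (B × B)} (hP : Good μ P) {x : B}
    (hx : Resolved x P) : Resolved (T P x) (P.map Prod.swap) := by
  intro q hq
  obtain ⟨p, hp, rfl⟩ := List.mem_map.1 hq
  simp only [Prod.fst_swap]
  rcases hx p hp with h1 | h1
  · exact Or.inl (le_T hp h1)
  · refine Or.inr (disjoint_supl ?_)
    intro a ha
    obtain ⟨q', hq', rfl⟩ := List.mem_map.1 ha
    obtain ⟨hq'P, hq'le⟩ := mem_flt.1 hq'
    have hne : p.1 ≠ q'.1 := fun e => not_both hP hq'P hq'le (e.symm ▸ h1)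
    exact (hP.disj_of_fst_ne hp hq'P hne).2

/-- L5 inverse: applying T backwards recovers x. -/
lemma T_swap_T {μ : B → S} {P : List (B × B)} (hP : Good μ P) {x : B} (hx : Resolved x P) :
    T (P.map Prod.swap) (T P x) = x := by
  show supl ((flt (P.map Prod.swap) (T P x)).map Prod.snd) = x
  rw [flt_swap_T hP hx, List.map_map]
  have he : (Prod.snd ∘ Prod.swap : B × B → B) = Prod.fst := rfl
  rw [he]
  exact supl_flt_fst hP hx

/-- L5 measure: T preserves the measure. -/
lemma meas_T {μ : B → S} (hμ : IsBAMeasure μ) {P : List (B × B)} (hP : Good μ P) {x : B}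
    (hx : Resolved x P) : μ (T P x) = μ x := by
  have hsub : List.Sublist (flt P x) P := List.filter_sublist
  have h1 : ((flt P x).map Prod.snd).Pairwise Disjoint := by
    rw [List.pairwise_map]; exact (hP.dt).sublist hsub
  have h2 : ((flt P x).map Prod.fst).Pairwise Disjoint := by
    rw [List.pairwise_map]; exact (hP.ds).sublist hsub
  have e1 : μ (T P x) = (((flt P x).map Prod.snd).map μ).sum := meas_supl hμ h1
  have e2 : μ x = (((flt P x).map Prod.fst).map μ).sum := by
    conv_lhs => rw [← supl_flt_fst hP hx]
    exact meas_supl hμ h2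
  rw [e1, e2, List.map_map, List.map_map]
  refine congrArg List.sum (List.map_congr_left ?_)
  intro p hp
  exact (hP.meq p (mem_flt.1 hp).1).symm

-- ### part D
lemma oi_disjoint (φ : B ≃o B) {a b : B} (h : Disjoint a b) : Disjoint (φ a) (φ b) := by
  rw [disjoint_iff] at h ⊢
  rw [← map_inf, h, map_bot]

lemma oi_ne_bot (φ : B ≃o B) {a : B} (h : a ≠ ⊥) : φ a ≠ ⊥ := by
  intro e
  exact h (φ.injective (by rw [e, map_bot]))

lemma pairwise_flatMap {α β : Type*} {R : β → β → Prop} {l : List α} {g : α → List β}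
    (h1 : ∀ a ∈ l, (g a).Pairwise R)
    (h2 : l.Pairwise fun a b => ∀ x ∈ g a, ∀ y ∈ g b, R x y) :
    (l.flatMap g).Pairwise R := by
  induction l with
  | nil => simp
  | cons a l ih =>
    rw [List.flatMap_cons, List.pairwise_append]
    obtain ⟨h3, h4⟩ := List.pairwise_cons.1 h2
    refine ⟨h1 a (.head _), ih (fun b hb => h1 b (.tail _ hb)) h4, ?_⟩
    intro x hx y hy
    obtain ⟨b, hb, hyb⟩ := List.mem_flatMap.1 hy
    exact h3 b hb x hx y hyb

lemma length_le_flatMap {α β : Type*} {l : List α} {g : α → List β}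
    (h : ∀ a ∈ l, g a ≠ []) : l.length ≤ (l.flatMap g).length := by
  induction l with
  | nil => simp
  | cons a l ih =>
    rw [List.flatMap_cons, List.length_append, List.length_cons]
    have h1 : 1 ≤ (g a).length := List.length_pos_iff.2 (h a (.head _))
    have h2 := ih (fun b hb => h b (.tail _ hb))
    omega

lemma supl_flatMap {α : Type*} (l : List α) (g : α → List B) :
    supl (l.flatMap g) = supl (l.map fun a => supl (g a)) := by
  induction l with
  | nil => rfl
  | cons a l ih => simp only [List.flatMap_cons, supl_append, List.map_cons, ih]; rfl

/-- splitting a single pair along x, using homogeneity -/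
lemma split_pair {μ : B → S} (hμ : IsBAMeasure μ) (hhom : MeasHomogeneous μ)
    {P : List (B × B)} (hP : Good μ P) {p : B × B} (hp : p ∈ P) (x : B) :
    ∃ l : List (B × B), l ≠ [] ∧
      (∀ q ∈ l, (q.1 ≠ ⊥ ∧ q.2 ≠ ⊥) ∧ μ q.1 = μ q.2 ∧ q.1 ≤ p.1 ∧ q.2 ≤ p.2 ∧
        (q.1 ≤ x ∨ Disjoint q.1 x)) ∧
      (l.Pairwise fun a b => Disjoint a.1 b.1) ∧ (l.Pairwise fun a b => Disjoint a.2 b.2) ∧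
      supl (l.map Prod.fst) = p.1 ∧ supl (l.map Prod.snd) = p.2 := by
  have hsingle : (p.1 ≤ x ∨ Disjoint p.1 x) →
      ([p] ≠ [] ∧
      (∀ q ∈ [p], (q.1 ≠ ⊥ ∧ q.2 ≠ ⊥) ∧ μ q.1 = μ q.2 ∧ q.1 ≤ p.1 ∧ q.2 ≤ p.2 ∧
        (q.1 ≤ x ∨ Disjoint q.1 x)) ∧
      ([p].Pairwise fun a b => Disjoint a.1 b.1) ∧ ([p].Pairwise fun a b => Disjoint a.2 b.2) ∧
      supl ([p].map Prod.fst) = p.1 ∧ supl ([p].map Prod.snd) = p.2) := by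
    intro h
    refine ⟨List.cons_ne_nil p [], ?_, List.pairwise_singleton _ _, List.pairwise_singleton _ _,
      by simp [supl], by simp [supl]⟩
    intro q hq
    rcases List.mem_singleton.1 hq with rfl
    exact ⟨hP.nb q hp, hP.meq q hp, le_rfl, le_rfl, h⟩
  by_cases h1 : p.1 ⊓ x = ⊥
  · exact ⟨[p], hsingle (Or.inr (disjoint_iff.2 h1))⟩
  by_cases h2 : p.1 \ x = ⊥
  · exact ⟨[p], hsingle (Or.inl (sdiff_eq_bot_iff.1 h2))⟩
  obtain ⟨φ, hφ, hφp⟩ := hhom p.1 p.2 ⟨(hP.nb p hp).1, hP.src_ne_top hp⟩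
    ⟨(hP.nb p hp).2, hP.tgt_ne_top hp⟩ (hP.meq p hp) (hP.meas_compl hμ hp)
  have hdisj : Disjoint (p.1 ⊓ x) (p.1 \ x) :=
    (disjoint_sdiff_self_left.mono_right inf_le_right).symm
  refine ⟨[(p.1 ⊓ x, φ (p.1 ⊓ x)), (p.1 \ x, φ (p.1 \ x))], List.cons_ne_nil _ _, ?_, ?_, ?_, ?_, ?_⟩
  · intro q hq
    rcases List.mem_cons.1 hq with rfl | hq
    · exact ⟨⟨h1, oi_ne_bot φ h1⟩, (hφ _).symm, inf_le_left,
        (φ.monotone inf_le_left).trans_eq hφp, Or.inl inf_le_right⟩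
    · rcases List.mem_singleton.1 hq with rfl
      exact ⟨⟨h2, oi_ne_bot φ h2⟩, (hφ _).symm, sdiff_le,
        (φ.monotone sdiff_le).trans_eq hφp, Or.inr disjoint_sdiff_self_left⟩
  · exact List.pairwise_pair.2 hdisj
  · exact List.pairwise_pair.2 (oi_disjoint φ hdisj)
  · show (p.1 ⊓ x) ⊔ ((p.1 \ x) ⊔ ⊥) = p.1
    rw [sup_bot_eq, sup_inf_sdiff]
  · show φ (p.1 ⊓ x) ⊔ (φ (p.1 \ x) ⊔ ⊥) = p.2
    rw [sup_bot_eq, ← map_sup, sup_inf_sdiff, hφp]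

/-- one refinement step resolving x on the source side -/
lemma step_src {μ : B → S} (hμ : IsBAMeasure μ) (hhom : MeasHomogeneous μ)
    {P : List (B × B)} (hP : Good μ P) (x : B) :
    ∃ Q, Good μ Q ∧ Refines P Q ∧ Resolved x Q := by
  choose! f hne hcond hpw1 hpw2 hs1 hs2 using
    fun (p : B × B) (hp : p ∈ P) => split_pair hμ hhom hP hp x
  classical
  refine ⟨P.attach.flatMap (fun z => f z.1), ?_, ?_, ?_⟩
  · constructor
    · intro q hq
      obtain ⟨z, _, hqz⟩ := List.mem_flatMap.1 hq
      exact (hcond z.1 z.2 q hqz).1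
    · intro q hq
      obtain ⟨z, _, hqz⟩ := List.mem_flatMap.1 hq
      exact (hcond z.1 z.2 q hqz).2.1
    · refine pairwise_flatMap (fun z _ => hpw1 z.1 z.2) ?_
      have hPds : P.attach.Pairwise fun z w : {a // a ∈ P} => Disjoint z.1.1 w.1.1 := by
        have h := hP.ds
        rw [← List.attach_map_subtype_val P] at h
        exact (List.pairwise_map.1 h).imp (fun hab => hab)
      refine hPds.imp ?_
      intro z w hzw q hq q' hq'
      exact hzw.mono ((hcond z.1 z.2 q hq).2.2.1) ((hcond w.1 w.2 q' hq').2.2.1)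
    · refine pairwise_flatMap (fun z _ => hpw2 z.1 z.2) ?_
      have hPdt : P.attach.Pairwise fun z w : {a // a ∈ P} => Disjoint z.1.2 w.1.2 := by
        have h := hP.dt
        rw [← List.attach_map_subtype_val P] at h
        exact (List.pairwise_map.1 h).imp (fun hab => hab)
      refine hPdt.imp ?_
      intro z w hzw q hq q' hq'
      exact hzw.mono ((hcond z.1 z.2 q hq).2.2.2.1) ((hcond w.1 w.2 q' hq').2.2.2.1)
    · rw [List.map_flatMap, supl_flatMap]
      have : (P.attach.map fun z => supl ((f z.1).map Prod.fst)) = P.map Prod.fst := by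
        conv_rhs => rw [← List.attach_map_subtype_val P, List.map_map]
        refine List.map_congr_left ?_
        intro z _
        exact hs1 z.1 z.2
      rw [this, hP.ss]
    · rw [List.map_flatMap, supl_flatMap]
      have : (P.attach.map fun z => supl ((f z.1).map Prod.snd)) = P.map Prod.snd := by
        conv_rhs => rw [← List.attach_map_subtype_val P, List.map_map]
        refine List.map_congr_left ?_
        intro z _
        exact hs2 z.1 z.2
      rw [this, hP.st]
    · calc 2 ≤ P.length := hP.len
      _ = P.attach.length := by simp
      _ ≤ _ := length_le_flatMap fun z _ => hne z.1 z.2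
  · intro q hq
    obtain ⟨z, _, hqz⟩ := List.mem_flatMap.1 hq
    exact ⟨z.1, z.2, (hcond z.1 z.2 q hqz).2.2.1, (hcond z.1 z.2 q hqz).2.2.2.1⟩
  · intro q hq
    obtain ⟨z, _, hqz⟩ := List.mem_flatMap.1 hq
    exact (hcond z.1 z.2 q hqz).2.2.2.2

/-- one refinement step resolving x on both sides -/
lemma step_both {μ : B → S} (hμ : IsBAMeasure μ) (hhom : MeasHomogeneous μ)
    {P : List (B × B)} (hP : Good μ P) (x : B) :
    ∃ Q, Good μ Q ∧ Refines P Q ∧ Resolved x Q ∧ Resolved x (Q.map Prod.swap) := by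
  obtain ⟨Q₁, hQ₁, hr₁, hres₁⟩ := step_src hμ hhom hP x
  obtain ⟨Q₂', hQ₂', hr₂', hres₂'⟩ := step_src hμ hhom hQ₁.swap x
  refine ⟨Q₂'.map Prod.swap, hQ₂'.swap, ?_, ?_, ?_⟩
  · refine hr₁.trans ?_
    have := hr₂'.swap
    rwa [swap_swap] at this
  · refine Resolved.of_refines ?_ hres₁
    have := hr₂'.swap
    rwa [swap_swap] at this
  · rwa [swap_swap]


lemma oi_compl (φ : B ≃o B) (x : B) : φ xᶜ = (φ x)ᶜ := by
  have h : IsCompl (φ x) (φ xᶜ) :=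
    ⟨oi_disjoint φ disjoint_compl_right,
     codisjoint_iff.2 (by rw [← map_sup, sup_compl_eq_top, map_top])⟩
  exact h.compl_eq.symm

-- ### part E : the main construction
theorem main_bf [Countable B] [Nontrivial B] {μ : B → S} (hμ : IsBAMeasure μ)
    (hhom : MeasHomogeneous μ) {P₀ : List (B × B)} (h₀ : Good μ P₀) :
    ∃ Φ : B ≃o B, PreservesMeas μ Φ ∧ ∀ p ∈ P₀, Φ p.1 = p.2 := by
  obtain ⟨f, hf⟩ := exists_surjective_nat B
  -- the step function
  choose stepQ hstep using fun (Pn : {P : List (B × B) // Good μ P}) (n : ℕ) =>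
    step_both hμ hhom Pn.2 (f n)
  -- the sequence of matched partitions
  let L : ℕ → {P : List (B × B) // Good μ P} := fun n =>
    Nat.rec ⟨P₀, h₀⟩ (fun n Pn => ⟨stepQ Pn n, (hstep Pn n).1⟩) n
  have hL0 : (L 0).1 = P₀ := rfl
  have hLs : ∀ n, (L (n + 1)).1 = stepQ (L n) n := fun n => rfl
  have hGood : ∀ n, Good μ (L n).1 := fun n => (L n).2
  have hchain1 : ∀ n, Refines (L n).1 (L (n + 1)).1 := fun n => (hstep (L n) n).2.1
  have hchain : ∀ m n, m ≤ n → Refines (L m).1 (L n).1 := by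
    intro m n h
    induction n, h using Nat.le_induction with
    | base => exact Refines.rfl
    | succ n _ ih => exact ih.trans (hchain1 n)
  have hres1 : ∀ n, Resolved (f n) (L (n + 1)).1 := fun n => (hstep (L n) n).2.2.1
  have hres2 : ∀ n, Resolved (f n) ((L (n + 1)).1.map Prod.swap) :=
    fun n => (hstep (L n) n).2.2.2
  -- index of resolution
  let N : B → ℕ := fun x => Classical.choose (hf x) + 1
  have hNs : ∀ x, Resolved x (L (N x)).1 := by
    intro x
    have := hres1 (Classical.choose (hf x))
    rwa [Classical.choose_spec (hf x)] at this
  have hNt : ∀ x, Resolved x ((L (N x)).1.map Prod.swap) := by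
    intro x
    have := hres2 (Classical.choose (hf x))
    rwa [Classical.choose_spec (hf x)] at this
  -- the forward and backward maps
  set Φf : B → B := fun x => T (L (N x)).1 x with hΦf
  set Ψf : B → B := fun y => T ((L (N y)).1.map Prod.swap) y with hΨf
  -- stage freedom
  have stageT : ∀ (x : B) (m : ℕ), Resolved x (L m).1 → T (L m).1 x = Φf x := by
    intro x m hm
    have h1 := T_stable (hGood m) (hGood (max m (N x))) (hchain _ _ (le_max_left _ _)) hm
    have h2 := T_stable (hGood (N x)) (hGood (max m (N x))) (hchain _ _ (le_max_right _ _)) (hNs x)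
    rw [← h1, h2]
  have stageS : ∀ (y : B) (m : ℕ), Resolved y ((L m).1.map Prod.swap) →
      T ((L m).1.map Prod.swap) y = Ψf y := by
    intro y m hm
    have hr1 : Refines ((L m).1.map Prod.swap) ((L (max m (N y))).1.map Prod.swap) :=
      (hchain _ _ (le_max_left _ _)).swap
    have hr2 : Refines ((L (N y)).1.map Prod.swap) ((L (max m (N y))).1.map Prod.swap) :=
      (hchain _ _ (le_max_right _ _)).swap
    have h1 := T_stable (hGood m).swap (hGood (max m (N y))).swap hr1 hm
    have h2 := T_stable (hGood (N y)).swap (hGood (max m (N y))).swap hr2 (hNt y)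
    rw [← h1, h2]
  -- left inverse
  have li : ∀ x, Ψf (Φf x) = x := by
    intro x
    have h1 : Resolved (Φf x) ((L (N x)).1.map Prod.swap) := T_transfer_resolved (hGood (N x)) (hNs x)
    rw [← stageS (Φf x) (N x) h1]
    exact T_swap_T (hGood (N x)) (hNs x)
  -- right inverse
  have ri : ∀ y, Φf (Ψf y) = y := by
    intro y
    have h1 : Resolved (Ψf y) (((L (N y)).1.map Prod.swap).map Prod.swap) :=
      T_transfer_resolved (hGood (N y)).swap (hNt y)
    rw [swap_swap] at h1
    rw [← stageT (Ψf y) (N y) h1]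
    have := T_swap_T (hGood (N y)).swap (hNt y)
    rwa [swap_swap] at this
  -- monotone
  have mono : ∀ x y : B, x ≤ y → Φf x ≤ Φf y := by
    intro x y hxy
    set k := max (N x) (N y) with hk
    have hrx : Resolved x (L k).1 := (hNs x).of_refines (hchain _ _ (le_max_left _ _))
    have hry : Resolved y (L k).1 := (hNs y).of_refines (hchain _ _ (le_max_right _ _))
    rw [← stageT x k hrx, ← stageT y k hry]
    exact T_mono hxy
  have monoPsi : ∀ x y : B, x ≤ y → Ψf x ≤ Ψf y := by
    intro x y hxy
    set k := max (N x) (N y) with hk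
    have hrx : Resolved x ((L k).1.map Prod.swap) :=
      (hNt x).of_refines (hchain _ _ (le_max_left _ _)).swap
    have hry : Resolved y ((L k).1.map Prod.swap) :=
      (hNt y).of_refines (hchain _ _ (le_max_right _ _)).swap
    rw [← stageS x k hrx, ← stageS y k hry]
    exact T_mono hxy
  -- assemble the order isomorphism
  refine ⟨{ toFun := Φf, invFun := Ψf, left_inv := li, right_inv := ri,
            map_rel_iff' := ?_ }, ?_, ?_⟩
  · intro a b
    constructor
    · intro h
      have h2 : Ψf (Φf a) ≤ Ψf (Φf b) := monoPsi _ _ h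
      rwa [li, li] at h2
    · exact mono a b
  · intro x
    show μ (Φf x) = μ x
    rw [← stageT x (N x) (hNs x)]
    exact meas_T hμ (hGood (N x)) (hNs x)
  · intro p hp
    have hres : Resolved p.1 P₀ := by
      intro q hq
      by_cases hqp : q = p
      · exact Or.inl (le_of_eq (by rw [hqp]))
      · exact Or.inr (by haveI : Std.Symm (fun p q : B × B => Disjoint p.1 q.1) := ⟨fun _ _ hab => Disjoint.symm hab⟩; exact List.Pairwise.forall h₀.ds hq hp hqp)
    have hTP : T P₀ p.1 = p.2 := by
      apply le_antisymm
      · refine T_le ?_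
        intro q hq hle
        by_cases hqp : q = p
        · rw [hqp]
        · exfalso
          exact not_both h₀ hq hle
            (by haveI : Std.Symm (fun p q : B × B => Disjoint p.1 q.1) := ⟨fun _ _ hab => Disjoint.symm hab⟩; exact List.Pairwise.forall h₀.ds hq hp hqp)
      · exact le_T hp le_rfl
    show Φf p.1 = p.2
    rw [← stageT p.1 0 (by rw [hL0]; exact hres)]
    rw [hL0, hTP]


end BFaux

/-- the restriction of a homogeneous measure to a proper element
is homogeneous, and its trinary spectrum is as described. -/
theorem restriction_homogeneous_and_spectrum [Countable B] [Nontrivial B]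
    (hatomless : ∀ a : B, a ≠ ⊥ → ∃ b : B, b ≠ ⊥ ∧ b < a)
    (μ : B → S) (hμ : IsBAMeasure μ) (hhom : MeasHomogeneous μ)
    (j : B) (hj : IsProperElem j) :
    MeasHomogeneousOn μ j ∧
    TrinarySpectrumOn μ j = {t : S × S × S |
      t.1 + t.2.1 + t.2.2 = μ j ∧
      (t.1, t.2.1, t.2.2 + μ jᶜ) ∈ TrinarySpectrum μ ∧
      (t.1 + t.2.1, t.2.2, μ jᶜ) ∈ TrinarySpectrum μ} := by
  classical
  constructor
  · -- homogeneity of the restriction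
    intro a b haj hbj habot hajne hbbot hbjne hm hmd
    have hja : j \ a ≠ ⊥ := fun h => hajne (le_antisymm haj (sdiff_eq_bot_iff.1 h))
    have hjb : j \ b ≠ ⊥ := fun h => hbjne (le_antisymm hbj (sdiff_eq_bot_iff.1 h))
    have hjc : (jᶜ : B) ≠ ⊥ := fun h => hj.2 (compl_eq_bot.1 h)
    have hsupa : a ⊔ j \ a = j := sup_sdiff_cancel' le_rfl haj
    have hsupb : b ⊔ j \ b = j := sup_sdiff_cancel' le_rfl hbj
    have hdaj : Disjoint a (j \ a) := disjoint_sdiff_self_right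
    have hdbj : Disjoint b (j \ b) := disjoint_sdiff_self_right
    have hdac : Disjoint a (jᶜ : B) := disjoint_compl_right.mono_left haj
    have hdbc : Disjoint b (jᶜ : B) := disjoint_compl_right.mono_left hbj
    have hdjac : Disjoint (j \ a) (jᶜ : B) := disjoint_compl_right.mono_left sdiff_le
    have hdjbc : Disjoint (j \ b) (jᶜ : B) := disjoint_compl_right.mono_left sdiff_le
    have hGood : BFaux.Good μ [(a, b), (j \ a, j \ b), (jᶜ, jᶜ)] := by
      refine ⟨?_, ?_, ?_, ?_, ?_, ?_, ?_⟩
      · intro p hp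
        simp only [List.mem_cons, List.mem_singleton, List.not_mem_nil, or_false] at hp
        rcases hp with rfl | rfl | rfl
        · exact ⟨habot, hbbot⟩
        · exact ⟨hja, hjb⟩
        · exact ⟨hjc, hjc⟩
      · intro p hp
        simp only [List.mem_cons, List.mem_singleton, List.not_mem_nil, or_false] at hp
        rcases hp with rfl | rfl | rfl
        · exact hm
        · exact hmd
        · rfl
      · refine List.Pairwise.cons ?_ (List.Pairwise.cons ?_ (List.pairwise_singleton _ _))
        · intro q hq
          simp only [List.mem_cons, List.mem_singleton, List.not_mem_nil, or_false] at hq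
          rcases hq with rfl | rfl
          · exact hdaj
          · exact hdac
        · intro q hq
          simp only [List.mem_singleton, List.mem_cons, List.not_mem_nil, or_false] at hq
          rcases hq with rfl
          exact hdjac
      · refine List.Pairwise.cons ?_ (List.Pairwise.cons ?_ (List.pairwise_singleton _ _))
        · intro q hq
          simp only [List.mem_cons, List.mem_singleton, List.not_mem_nil, or_false] at hq
          rcases hq with rfl | rfl
          · exact hdbj
          · exact hdbc
        · intro q hq
          simp only [List.mem_singleton, List.mem_cons, List.not_mem_nil, or_false] at hq
          rcases hq with rfl
          exact hdjbc
      · show a ⊔ (j \ a ⊔ ((jᶜ : B) ⊔ ⊥)) = ⊤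
        rw [sup_bot_eq, ← sup_assoc, hsupa, sup_compl_eq_top]
      · show b ⊔ (j \ b ⊔ ((jᶜ : B) ⊔ ⊥)) = ⊤
        rw [sup_bot_eq, ← sup_assoc, hsupb, sup_compl_eq_top]
      · simp
    obtain ⟨Φ, hpres, hmap⟩ := BFaux.main_bf hμ hhom hGood
    have hΦa : Φ a = b := hmap (a, b) (by simp)
    have hΦja : Φ (j \ a) = j \ b := hmap (j \ a, j \ b) (by simp)
    have hΦj : Φ j = j := by
      conv_lhs => rw [← hsupa]
      rw [map_sup, hΦa, hΦja, hsupb]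
    exact ⟨Φ, fun x _ => hpres x, hΦj, hΦa⟩
  · -- the spectrum
    ext t
    constructor
    · rintro ⟨x, y, z, ⟨hx, hy, hz, hxy, hxz, hyz, hsup⟩, rfl⟩
      have hxj : x ≤ j := by rw [← hsup]; exact le_sup_left.trans le_sup_left
      have hyj : y ≤ j := by rw [← hsup]; exact le_sup_right.trans le_sup_left
      have hzj : z ≤ j := by rw [← hsup]; exact le_sup_right
      have hjc : (jᶜ : B) ≠ ⊥ := fun h => hj.2 (compl_eq_bot.1 h)
      have hdxz : Disjoint (x ⊔ y) z := disjoint_sup_left.2 ⟨hxz, hyz⟩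
      refine ⟨?_, ?_, ?_⟩
      · show μ x + μ y + μ z = μ j
        rw [← hsup, hμ.2 _ _ hdxz, hμ.2 _ _ hxy]
      · refine ⟨x, y, z ⊔ jᶜ, ⟨hx, hy, ?_, hxy, ?_, ?_, ?_⟩, ?_⟩
        · intro h
          exact hz (by simpa using (sup_eq_bot_iff.1 h).1)
        · exact disjoint_sup_right.2 ⟨hxz, disjoint_compl_right.mono_left hxj⟩
        · exact disjoint_sup_right.2 ⟨hyz, disjoint_compl_right.mono_left hyj⟩
        · rw [← sup_assoc, hsup, sup_compl_eq_top]
        · show (μ x, μ y, μ z + μ jᶜ) = (μ x, μ y, μ (z ⊔ jᶜ))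
          rw [hμ.2 _ _ (disjoint_compl_right.mono_left hzj)]
      · refine ⟨x ⊔ y, z, jᶜ, ⟨?_, hz, hjc, hdxz, ?_, ?_, ?_⟩, ?_⟩
        · intro h
          exact hx (sup_eq_bot_iff.1 h).1
        · exact disjoint_compl_right.mono_left (sup_le hxj hyj)
        · exact disjoint_compl_right.mono_left hzj
        · rw [hsup, sup_compl_eq_top]
        · show (μ x + μ y, μ z, μ jᶜ) = (μ (x ⊔ y), μ z, μ jᶜ)
          rw [hμ.2 _ _ hxy]
    · rintro ⟨hsum, ⟨x, y, z, ⟨hx, hy, hz, hxy, hxz, hyz, hsup1⟩, ht1⟩,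
        ⟨u, v, w, ⟨hu, hv, hw, huv, huw, hvw, hsup2⟩, ht2⟩⟩
      simp only [Prod.mk.injEq] at ht1 ht2
      obtain ⟨e1, e2, e3⟩ := ht1
      obtain ⟨f1, f2, f3⟩ := ht2
      have hjc : (jᶜ : B) ≠ ⊥ := fun h => hj.2 (compl_eq_bot.1 h)
      -- first automorphism: maps w to jᶜ
      have hwtop : w ≠ ⊤ := by
        intro h
        rw [h] at huw
        exact hu (disjoint_top.1 huw)
      have hwc : wᶜ = u ⊔ v := by
        refine IsCompl.compl_eq ⟨disjoint_sup_right.2 ⟨huw.symm, hvw.symm⟩, codisjoint_iff.2 ?_⟩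
        rw [sup_comm, hsup2]
      have hμwc : μ wᶜ = μ ((jᶜ : B)ᶜ) := by
        rw [hwc, compl_compl, hμ.2 _ _ huv, ← f1, ← f2, hsum]
      obtain ⟨φ, hφm, hφw⟩ := hhom w jᶜ ⟨hw, hwtop⟩
        ⟨hjc, fun h => hj.1 (compl_eq_top.1 h)⟩ f3.symm hμwc
      have huv' : φ u ⊔ φ v = j := by
        rw [← map_sup, ← hwc, BFaux.oi_compl, hφw, compl_compl]
      have huj' : φ u ≤ j := by rw [← huv']; exact le_sup_left
      have hvj' : φ v ≤ j := by rw [← huv']; exact le_sup_right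
      -- second automorphism: maps x ⊔ y to φ u
      have hxy_ne_top : x ⊔ y ≠ ⊤ := by
        intro h
        have : Disjoint (x ⊔ y) z := disjoint_sup_left.2 ⟨hxz, hyz⟩
        rw [h] at this
        exact hz (disjoint_top.1 this.symm |>.symm ▸ rfl) -- fix below
      have hxyc : (x ⊔ y)ᶜ = z := by
        refine IsCompl.compl_eq ⟨disjoint_sup_left.2 ⟨hxz, hyz⟩, codisjoint_iff.2 hsup1⟩
      have hu'top : φ u ≠ ⊤ := by
        intro h
        exact hj.2 (top_le_iff.1 (h ▸ huj'))
      have hu'c : (φ u)ᶜ = φ v ⊔ jᶜ := by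
        refine IsCompl.compl_eq ⟨disjoint_sup_right.2
          ⟨BFaux.oi_disjoint φ huv, disjoint_compl_right.mono_left huj'⟩,
          codisjoint_iff.2 ?_⟩
        rw [← sup_assoc, huv', sup_compl_eq_top]
      have hμxy : μ (x ⊔ y) = μ (φ u) := by
        rw [hμ.2 _ _ hxy, hφm u, ← e1, ← e2, f1]
      have hμxyc : μ ((x ⊔ y)ᶜ) = μ ((φ u)ᶜ) := by
        rw [hxyc, hu'c, hμ.2 _ _ (disjoint_compl_right.mono_left hvj'), hφm v, ← e3, ← f2]
      obtain ⟨ψ, hψm, hψxy⟩ := hhom (x ⊔ y) (φ u)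
        ⟨fun h => hx (sup_eq_bot_iff.1 h).1, hxy_ne_top⟩
        ⟨BFaux.oi_ne_bot φ hu, hu'top⟩ hμxy hμxyc
      -- assemble the partition of j
      have hψxu : ψ x ≤ φ u := by rw [← hψxy]; exact ψ.monotone le_sup_left
      have hψyu : ψ y ≤ φ u := by rw [← hψxy]; exact ψ.monotone le_sup_right
      refine ⟨ψ x, ψ y, φ v, ⟨BFaux.oi_ne_bot ψ hx, BFaux.oi_ne_bot ψ hy,
        BFaux.oi_ne_bot φ hv, BFaux.oi_disjoint ψ hxy,
        (BFaux.oi_disjoint φ huv).mono_left hψxu,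
        (BFaux.oi_disjoint φ huv).mono_left hψyu, ?_⟩, ?_⟩
      · rw [← map_sup, hψxy, huv']
      · rw [hψm x, hψm y, hφm v, ← e1, ← e2, ← f2]
end

section
/- Let μ be a homogeneous S-valued measure on 𝔹 with trinary spectrum Σ, and for k ≥ 1 let Δ_k(μ) be the set of k-tuples (μ(a_1),…,μ(a_k)) over all partitions {a_1,…,a_k} of 𝔹 into k nonzero pieces. Then for N > 3, a tuple (b_1,…,b_N) ∈ S^N belongs to Δ_N(μ) if and only if (Σ_{j<k} b_j, b_k, Σ_{j>k} b_j) ∈ Σ for each k = 2,…,N−1. -/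
variable {B : Type*} [BooleanAlgebra B] {S : Type*} [AddCommMonoid S]

/-- `b ∈ Δ_N(μ)`: the tuple `b` is the tuple of measures of an `N`-element
partition of `B`. -/
def DeltaMem (μ : B → S) {N : ℕ} (b : Fin N → S) : Prop :=
  ∃ a : Fin N → B, (∀ i, a i ≠ ⊥) ∧ (∀ i j : Fin N, i ≠ j → Disjoint (a i) (a j)) ∧
    Finset.univ.sup a = ⊤ ∧ ∀ i, μ (a i) = b i

/-- Finite additivity over pairwise disjoint families. -/
lemma measSupSum (μ : B → S) (hμ : IsBAMeasure μ) {ι : Type*} (s : Finset ι) (f : ι → B)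
    (hd : ∀ i ∈ s, ∀ j ∈ s, i ≠ j → Disjoint (f i) (f j)) :
    μ (s.sup f) = ∑ i ∈ s, μ (f i) := by
  induction s using Finset.cons_induction with
  | empty => simpa using hμ.1
  | cons a s ha ih =>
    have hdisj : Disjoint (f a) (s.sup f) :=
      Finset.disjoint_sup_right.2 fun i hi =>
        hd a (Finset.mem_cons_self a s) i (Finset.mem_cons_of_mem hi)
          (fun h => ha (h ▸ hi))
    rw [Finset.sup_cons, Finset.sum_cons, hμ.2 _ _ hdisj,
      ih (fun i hi j hj hij =>
        hd i (Finset.mem_cons_of_mem hi) j (Finset.mem_cons_of_mem hj) hij)]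

lemma symm_ne_bot (φ : B ≃o B) {x : B} (hx : x ≠ ⊥) : φ.symm x ≠ ⊥ := by
  intro h
  apply hx
  have := congrArg φ h
  rwa [φ.apply_symm_apply, map_bot] at this

/-- for `N > 3`, a tuple `(b_1, …, b_N)` lies in `Δ_N(μ)` iff all
triples `(∑_{j<k} b_j, b_k, ∑_{j>k} b_j)` for `k = 2, …, N-1` lie in the
trinary spectrum (indices here are `0`-based: `1 ≤ k ≤ N-2`). -/
theorem deltaN_characterization [Countable B] [Nontrivial B]
    (hatomless : ∀ a : B, a ≠ ⊥ → ∃ b : B, b ≠ ⊥ ∧ b < a)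
    (μ : B → S) (hμ : IsBAMeasure μ) (hhom : MeasHomogeneous μ)
    {N : ℕ} (hN : 3 < N) (b : Fin N → S) :
    DeltaMem μ b ↔ ∀ k : Fin N, 1 ≤ (k : ℕ) → (k : ℕ) ≤ N - 2 →
      (∑ j ∈ Finset.univ.filter (fun j : Fin N => (j : ℕ) < (k : ℕ)), b j, b k,
       ∑ j ∈ Finset.univ.filter (fun j : Fin N => (k : ℕ) < (j : ℕ)), b j)
        ∈ TrinarySpectrum μ := by
  have hsumgt : ∀ n : ℕ, ∀ hn : n + 1 < N,
      ∑ j ∈ Finset.univ.filter (fun j : Fin N => n < (j : ℕ)), b j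
        = b ⟨n + 1, hn⟩ +
          ∑ j ∈ Finset.univ.filter (fun j : Fin N => n + 1 < (j : ℕ)), b j := by
    intro n hn
    have hins : Finset.univ.filter (fun j : Fin N => n < (j : ℕ))
        = insert (⟨n + 1, hn⟩ : Fin N)
            (Finset.univ.filter (fun j : Fin N => n + 1 < (j : ℕ))) := by
      ext j
      simp only [Finset.mem_filter, Finset.mem_univ, true_and, Finset.mem_insert, Fin.ext_iff]
      show n < (j:ℕ) ↔ (j:ℕ) = n+1 ∨ n+1 < (j:ℕ)
      omega
    rw [hins, Finset.sum_insert (by simp)]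
  constructor
  · rintro ⟨a, hne, hdisj, hsup, hmeas⟩ k hk1 hk2
    set A := (Finset.univ.filter fun j : Fin N => (j : ℕ) < (k : ℕ)).sup a with hA
    set C := (Finset.univ.filter fun j : Fin N => (k : ℕ) < (j : ℕ)).sup a with hC
    have h0mem : (⟨0, by omega⟩ : Fin N) ∈
        Finset.univ.filter fun j : Fin N => (j : ℕ) < (k : ℕ) :=
      Finset.mem_filter.2 ⟨Finset.mem_univ _, show 0 < (k : ℕ) from hk1⟩
    have hk1mem : (⟨(k : ℕ) + 1, by omega⟩ : Fin N) ∈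
        Finset.univ.filter fun j : Fin N => (k : ℕ) < (j : ℕ) :=
      Finset.mem_filter.2 ⟨Finset.mem_univ _, show (k : ℕ) < (k : ℕ) + 1 by omega⟩
    refine ⟨A, a k, C, ⟨?_, hne k, ?_, ?_, ?_, ?_, ?_⟩, ?_⟩
    · intro h
      exact hne _ (le_bot_iff.1 (le_trans (Finset.le_sup h0mem) h.le))
    · intro h
      exact hne _ (le_bot_iff.1 (le_trans (Finset.le_sup hk1mem) h.le))
    · refine Finset.disjoint_sup_left.2 fun j hj => hdisj j k ?_
      simp at hj
      exact fun h => by simp [h] at hj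
    · refine Finset.disjoint_sup_left.2 fun i hi =>
        Finset.disjoint_sup_right.2 fun j hj => hdisj i j ?_
      simp at hi hj
      intro h
      rw [h] at hi
      omega
    · refine Finset.disjoint_sup_right.2 fun j hj => hdisj k j ?_
      simp at hj
      exact fun h => by simp [← h] at hj
    · refine le_antisymm le_top ?_
      rw [← hsup]
      refine Finset.sup_le fun j _ => ?_
      rcases lt_trichotomy ((j : ℕ)) ((k : ℕ)) with h | h | h
      · exact le_trans (Finset.le_sup (Finset.mem_filter.2 ⟨Finset.mem_univ _, h⟩))
          (le_trans le_sup_left le_sup_left)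
      · have : j = k := Fin.ext h
        exact this ▸ le_trans le_sup_right le_sup_left
      · exact le_trans (Finset.le_sup (Finset.mem_filter.2 ⟨Finset.mem_univ _, h⟩)) le_sup_right
    · have hAm : μ A = ∑ j ∈ Finset.univ.filter (fun j : Fin N => (j : ℕ) < (k : ℕ)), b j := by
        rw [measSupSum μ hμ _ _ fun i _ j _ hij => hdisj i j hij]
        exact Finset.sum_congr rfl fun j _ => hmeas j
      have hCm : μ C = ∑ j ∈ Finset.univ.filter (fun j : Fin N => (k : ℕ) < (j : ℕ)), b j := by
        rw [measSupSum μ hμ _ _ fun i _ j _ hij => hdisj i j hij]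
        exact Finset.sum_congr rfl fun j _ => hmeas j
      rw [hAm, hCm, hmeas k]
  · intro hSig
    have key : ∀ n : ℕ, 1 ≤ n → n ≤ N - 2 →
        ∃ (p : Fin N → B) (q : B),
          (∀ i : Fin N, (i : ℕ) ≤ n → p i ≠ ⊥) ∧
          (∀ i j : Fin N, (i : ℕ) ≤ n → (j : ℕ) ≤ n → i ≠ j → Disjoint (p i) (p j)) ∧
          (∀ i : Fin N, (i : ℕ) ≤ n → Disjoint (p i) q) ∧ q ≠ ⊥ ∧
          (∀ i : Fin N, (i : ℕ) ≤ n → μ (p i) = b i) ∧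
          μ q = ∑ j ∈ Finset.univ.filter (fun j : Fin N => n < (j : ℕ)), b j ∧
          ((Finset.univ.filter fun i : Fin N => (i : ℕ) ≤ n).sup p) ⊔ q = ⊤ := by
      intro n
      induction n with
      | zero => omega
      | succ n ih =>
        intro _ hle
        rcases Nat.eq_zero_or_pos n with rfl | hn1
        · -- base case : n + 1 = 1
          obtain ⟨A, Bp, C, ⟨hA0, hB0, hC0, dAB, dAC, dBC, hsup3⟩, heq⟩ :=
            hSig ⟨1, by omega⟩ (le_refl 1) (show (1:ℕ) ≤ N - 2 by omega)
          simp only [Prod.mk.injEq] at heq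
          obtain ⟨h1, h2, h3⟩ := heq
          have hfil0 : Finset.univ.filter (fun j : Fin N => (j : ℕ) < 1)
              = {(⟨0, by omega⟩ : Fin N)} := by
            ext j
            simp only [Finset.mem_filter, Finset.mem_univ, true_and,
              Finset.mem_singleton, Fin.ext_iff]
            show (j:ℕ) < 1 ↔ (j:ℕ) = 0
            omega
          rw [hfil0, Finset.sum_singleton] at h1
          refine ⟨fun i => if (i : ℕ) = 0 then A else Bp, C, ?_, ?_, ?_, hC0, ?_, h3.symm, ?_⟩
          · intro i _
            by_cases h : (i : ℕ) = 0 <;> simp [h, hA0, hB0]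
          · intro i j hi hj hij
            by_cases h : (i : ℕ) = 0 <;> by_cases h' : (j : ℕ) = 0
            · exact absurd (Fin.ext (h.trans h'.symm)) hij
            · simp [h, h', dAB]
            · simp [h, h', dAB.symm]
            · exact absurd (Fin.ext (show (i:ℕ) = (j:ℕ) by omega)) hij
          · intro i _
            by_cases h : (i : ℕ) = 0 <;> simp [h, dAC, dBC]
          · intro i hi
            by_cases h : (i : ℕ) = 0
            · have hi0 : i = ⟨0, by omega⟩ := Fin.ext h
              show μ (if (i:ℕ) = 0 then A else Bp) = b i
              rw [if_pos h, ← h1]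
              exact congrArg b hi0.symm
            · have hi1 : i = ⟨1, by omega⟩ := Fin.ext (show (i:ℕ) = 1 by omega)
              show μ (if (i:ℕ) = 0 then A else Bp) = b i
              rw [if_neg h, ← h2]
              exact congrArg b hi1.symm
          · have hfil1 : Finset.univ.filter (fun i : Fin N => (i : ℕ) ≤ 1)
                = insert (⟨0, by omega⟩ : Fin N) {(⟨1, by omega⟩ : Fin N)} := by
              ext j
              simp only [Finset.mem_filter, Finset.mem_univ, true_and,
                Finset.mem_insert, Finset.mem_singleton, Fin.ext_iff]
              show (j:ℕ) ≤ 1 ↔ (j:ℕ) = 0 ∨ (j:ℕ) = 1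
              omega
            rw [hfil1, Finset.sup_insert, Finset.sup_singleton]
            simpa using hsup3
        · -- inductive step with n ≥ 1
          obtain ⟨p, q, hp0, hpd, hpq, hq0, hpm, hqm, hpt⟩ := ih hn1 (by omega)
          obtain ⟨A, Bp, C, ⟨hA0, hB0, hC0, dAB, dAC, dBC, hsup3⟩, heq⟩ :=
            hSig ⟨n + 1, by omega⟩ (Nat.succ_le_succ (Nat.zero_le n)) hle
          simp only [Prod.mk.injEq] at heq
          obtain ⟨h1, h2, h3⟩ := heq
          set D := (Finset.univ.filter fun i : Fin N => (i : ℕ) ≤ n).sup p with hD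
          have h0mem : (⟨0, by omega⟩ : Fin N) ∈
              Finset.univ.filter fun i : Fin N => (i : ℕ) ≤ n := by simp
          have hfil : Finset.univ.filter (fun j : Fin N => (j : ℕ) < n + 1)
              = Finset.univ.filter (fun i : Fin N => (i : ℕ) ≤ n) := by
            ext j; simp [Nat.lt_succ_iff]
          have hDm : μ D = μ A := by
            rw [hD, measSupSum μ hμ _ _ fun i hi j hj hij =>
              hpd i j (by simpa using hi) (by simpa using hj) hij, ← h1, hfil]
            exact (Finset.sum_congr rfl fun j hj => hpm j (by simpa using hj))
          have hDq : Disjoint D q :=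
            Finset.disjoint_sup_left.2 fun i hi => hpq i (by simpa using hi)
          have hcomplD : Dᶜ = q := IsCompl.compl_eq ⟨hDq, codisjoint_iff.2 hpt⟩
          have hD0 : D ≠ ⊥ := fun h =>
            hp0 ⟨0, by omega⟩ (Nat.zero_le n) (le_bot_iff.1 (le_trans (Finset.le_sup h0mem) h.le))
          have hDt : D ≠ ⊤ := fun h => hq0 (by rw [← hcomplD, h, compl_top])
          have hAt : A ≠ ⊤ := fun h => hB0 (disjoint_top.1 (h ▸ dAB.symm))
          have hcomplA : Aᶜ = Bp ⊔ C :=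
            IsCompl.compl_eq ⟨dAB.sup_right dAC, codisjoint_iff.2 (by rw [← sup_assoc]; exact hsup3)⟩
          have hmc : μ Dᶜ = μ Aᶜ := by
            rw [hcomplD, hcomplA, hμ.2 _ _ dBC, hqm, hsumgt n (by omega), h2, h3]
          obtain ⟨φ, hφ, hφD⟩ := hhom D A ⟨hD0, hDt⟩ ⟨hA0, hAt⟩ hDm hmc
          have hφs : ∀ x, μ (φ.symm x) = μ x := by
            intro x
            have := hφ (φ.symm x)
            rw [φ.apply_symm_apply] at this
            exact this.symm
          have hsymmA : φ.symm A = D := by rw [← hφD, φ.symm_apply_apply]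
          have dDB : Disjoint D (φ.symm Bp) := hsymmA ▸ dAB.map_orderIso φ.symm
          have dDC : Disjoint D (φ.symm C) := hsymmA ▸ dAC.map_orderIso φ.symm
          have dBC' : Disjoint (φ.symm Bp) (φ.symm C) := dBC.map_orderIso φ.symm
          have hpleD : ∀ i : Fin N, (i : ℕ) ≤ n → p i ≤ D :=
            fun i hi => Finset.le_sup (by simp [hi])
          refine ⟨fun i => if (i : ℕ) ≤ n then p i else φ.symm Bp, φ.symm C,
            ?_, ?_, ?_, symm_ne_bot φ hC0, ?_, (hφs C).trans h3.symm, ?_⟩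
          · intro i _
            by_cases h : (i : ℕ) ≤ n <;> simp [h, hp0 i, symm_ne_bot φ hB0]
          · intro i j hi hj hij
            have hij' : (i : ℕ) ≠ (j : ℕ) := fun h => hij (Fin.ext h)
            by_cases h : (i : ℕ) ≤ n <;> by_cases h' : (j : ℕ) ≤ n
            · simpa [h, h'] using hpd i j h h' hij
            · simpa [h, h'] using dDB.mono_left (hpleD i h)
            · simpa [h, h'] using (dDB.mono_left (hpleD j h')).symm
            · exact absurd (Fin.ext (show (i:ℕ) = (j:ℕ) by omega)) hij
          · intro i _
            by_cases h : (i : ℕ) ≤ n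
            · simpa [h] using dDC.mono_left (hpleD i h)
            · simpa [h] using dBC'
          · intro i hi
            by_cases h : (i : ℕ) ≤ n
            · simpa [h] using hpm i h
            · have hi1 : i = ⟨n + 1, by omega⟩ := Fin.ext (show (i:ℕ) = n + 1 by omega)
              show μ (if (i:ℕ) ≤ n then p i else φ.symm Bp) = b i
              rw [if_neg h, hφs Bp, ← h2]
              exact congrArg b hi1.symm
          · have hfil2 : Finset.univ.filter (fun i : Fin N => (i : ℕ) ≤ n + 1)
                = insert (⟨n + 1, by omega⟩ : Fin N)
                    (Finset.univ.filter fun i : Fin N => (i : ℕ) ≤ n) := by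
              ext j
              simp only [Finset.mem_filter, Finset.mem_univ, true_and,
                Finset.mem_insert, Fin.ext_iff]
              show (j:ℕ) ≤ n + 1 ↔ (j:ℕ) = n + 1 ∨ (j:ℕ) ≤ n
              omega
            rw [hfil2, Finset.sup_insert]
            have hcong : (Finset.univ.filter fun i : Fin N => (i : ℕ) ≤ n).sup
                (fun i => if (i : ℕ) ≤ n then p i else φ.symm Bp) = D := by
              exact Finset.sup_congr rfl fun i hi => if_pos (by simpa using hi)
            rw [hcong]
            simp only [Fin.val_mk]
            rw [if_neg (Nat.not_succ_le_self n)]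
            rw [← hsymmA, ← map_sup, ← map_sup,
              show Bp ⊔ A ⊔ C = ⊤ from by rw [sup_comm Bp A]; exact hsup3, map_top]
    obtain ⟨p, q, hp0, hpd, hpq, hq0, hpm, hqm, hpt⟩ := key (N - 2) (by omega) le_rfl
    have hlast : Finset.univ.filter (fun j : Fin N => N - 2 < (j : ℕ))
        = {(⟨N - 1, by omega⟩ : Fin N)} := by
      ext j
      simp only [Finset.mem_filter, Finset.mem_univ, true_and,
        Finset.mem_singleton, Fin.ext_iff]
      have := j.isLt
      show N - 2 < (j:ℕ) ↔ (j:ℕ) = N - 1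
      omega
    rw [hlast, Finset.sum_singleton] at hqm
    refine ⟨fun i => if (i : ℕ) ≤ N - 2 then p i else q, ?_, ?_, ?_, ?_⟩
    · intro i
      by_cases h : (i : ℕ) ≤ N - 2 <;> simp [h, hp0 i, hq0]
    · intro i j hij
      by_cases h : (i : ℕ) ≤ N - 2 <;> by_cases h' : (j : ℕ) ≤ N - 2
      · simpa [h, h'] using hpd i j h h' hij
      · simpa [h, h'] using hpq i h
      · simpa [h, h'] using (hpq j h').symm
      · exact absurd (Fin.ext (show (i:ℕ) = (j:ℕ) by
          have := i.isLt; have := j.isLt; omega)) hij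
    · refine le_antisymm le_top ?_
      rw [← hpt]
      refine sup_le (Finset.sup_le fun i hi => ?_) ?_
      · have hi' : (i : ℕ) ≤ N - 2 := by simpa using hi
        have hle' := Finset.le_sup (f := fun i : Fin N => if (i : ℕ) ≤ N - 2 then p i else q)
          (Finset.mem_univ i)
        simpa [hi'] using hle'
      · have hle' := Finset.le_sup (f := fun i : Fin N => if (i : ℕ) ≤ N - 2 then p i else q)
          (Finset.mem_univ (⟨N - 1, by omega⟩ : Fin N))
        simpa [Fin.val_mk, show ¬ (N - 1 ≤ N - 2) from by omega] using hle'
    · intro i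
      by_cases h : (i : ℕ) ≤ N - 2
      · simpa [h] using hpm i h
      · have hi1 : i = ⟨N - 1, by omega⟩ := Fin.ext (show (i:ℕ) = N - 1 by
          have := i.isLt; omega)
        show μ (if (i : ℕ) ≤ N - 2 then p i else q) = b i
        rw [if_neg h, hqm]
        exact congrArg b hi1.symm
end

section
/- For a semigroup-valued measure μ: 𝔹 → S, the action of H = Aut(μ) on 𝔹 is transitive (respectively, minimal) if and only if for every proper j ∈ 𝔹, the action of Aut(μ↾j) on 𝔹↾j is transitive (respectively, minimal). -/
variable {B : Type*} [BooleanAlgebra B] {S : Type*} [AddCommMonoid S]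

/-- The group `Aut(μ)` acts transitively on `B`. -/
def ActsTransitively (μ : B → S) : Prop :=
  ∀ a b : B, IsProperElem a → IsProperElem b →
    ∃ φ : B ≃o B, PreservesMeas μ φ ∧ φ a ⊓ b ≠ ⊥

/-- The action of `Aut(μ)` on `B` is minimal. -/
def ActsMinimally (μ : B → S) : Prop :=
  ∀ a : B, IsProperElem a → ∃ (n : ℕ) (φ : Fin n → B ≃o B),
    (∀ i, PreservesMeas μ (φ i)) ∧ Finset.univ.sup (fun i => φ i a) = ⊤

/-- The group `Aut(μ ↾ j)` acts transitively on `B ↾ j` (automorphisms of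
`B ↾ j` preserving `μ ↾ j` are identified with automorphisms of `B` fixing `j`
and preserving `μ` below `j`). -/
def ActsTransitivelyOn (μ : B → S) (j : B) : Prop :=
  ∀ a b : B, a ≤ j → b ≤ j → a ≠ ⊥ → a ≠ j → b ≠ ⊥ → b ≠ j →
    ∃ φ : B ≃o B, (∀ x : B, x ≤ j → μ (φ x) = μ x) ∧ φ j = j ∧ φ a ⊓ b ≠ ⊥

/-- The action of `Aut(μ ↾ j)` on `B ↾ j` is minimal. -/
def ActsMinimallyOn (μ : B → S) (j : B) : Prop :=
  ∀ a : B, a ≤ j → a ≠ ⊥ → a ≠ j →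
    ∃ (n : ℕ) (φ : Fin n → B ≃o B),
      (∀ i, (∀ x : B, x ≤ j → μ (φ i x) = μ x) ∧ φ i j = j) ∧
      Finset.univ.sup (fun i => φ i a) = j

section HereditaryAux

variable {μ : B → S}

private lemma measSplit (hμ : IsBAMeasure μ) (j x : B) : μ x = μ (x ⊓ j) + μ (x ⊓ jᶜ) := by
  have hd : Disjoint (x ⊓ j) (x ⊓ jᶜ) :=
    disjoint_compl_right.mono inf_le_right inf_le_right
  calc μ x = μ ((x ⊓ j) ⊔ (x ⊓ jᶜ)) := by rw [← inf_sup_left, sup_compl_eq_top, inf_top_eq]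
    _ = μ (x ⊓ j) + μ (x ⊓ jᶜ) := hμ.2 _ _ hd

private lemma measSup3 (hμ : IsBAMeasure μ) {u v w : B} (huv : Disjoint u v)
    (huw : Disjoint u w) (hvw : Disjoint v w) :
    μ (u ⊔ v ⊔ w) = μ u + μ v + μ w := by
  rw [hμ.2 _ _ (huw.sup_left hvw), hμ.2 _ _ huv]

private lemma preserves_symm {ψ : B ≃o B} (h : PreservesMeas μ ψ) (x : B) :
    μ (ψ.symm x) = μ x := by
  conv_rhs => rw [← ψ.apply_symm_apply x]
  exact (h _).symm

private lemma sup3_inf {u v w c : B} (hu : Disjoint u c) (hv : Disjoint v c) (hw : w ≤ c) :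
    (u ⊔ v ⊔ w) ⊓ c = w := by
  rw [inf_sup_right, inf_sup_right, disjoint_iff.mp hu, disjoint_iff.mp hv, inf_eq_left.mpr hw, bot_sup_eq,
    bot_sup_eq]

/-- Gluing an automorphism fixing `j` with the identity outside `j`. -/
private lemma glue_exists (φ : B ≃o B) (j : B) (hj : φ j = j) :
    ∃ g : B ≃o B, ∀ x, g x = φ (x ⊓ j) ⊔ (x ⊓ jᶜ) := by
  have hj' : φ.symm j = j := (OrderIso.symm_apply_eq φ).mpr hj.symm
  have key : ∀ (θ : B ≃o B), θ j = j → ∀ x : B,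
      θ.symm ((θ (x ⊓ j) ⊔ (x ⊓ jᶜ)) ⊓ j) ⊔ ((θ (x ⊓ j) ⊔ (x ⊓ jᶜ)) ⊓ jᶜ) = x := by
    intro θ hθ x
    have h1 : θ (x ⊓ j) ≤ j := le_of_le_of_eq (θ.monotone inf_le_right) hθ
    have h2 : (θ (x ⊓ j) ⊔ (x ⊓ jᶜ)) ⊓ j = θ (x ⊓ j) := by
      rw [inf_sup_right, inf_eq_left.mpr h1]
      simp [inf_assoc]
    have h3 : (θ (x ⊓ j) ⊔ (x ⊓ jᶜ)) ⊓ jᶜ = x ⊓ jᶜ := by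
      rw [inf_sup_right, disjoint_iff.mp (disjoint_compl_right.mono_left h1), bot_sup_eq,
        inf_assoc, inf_idem]
    rw [h2, h3, θ.symm_apply_apply, ← inf_sup_left, sup_compl_eq_top, inf_top_eq]
  have hmono : ∀ (θ : B ≃o B), Monotone (fun x : B => θ (x ⊓ j) ⊔ (x ⊓ jᶜ)) := by
    intro θ x y hxy
    exact sup_le_sup (θ.monotone (inf_le_inf_right _ hxy)) (inf_le_inf_right _ hxy)
  refine ⟨Equiv.toOrderIso
    ⟨fun x => φ (x ⊓ j) ⊔ (x ⊓ jᶜ), fun x => φ.symm (x ⊓ j) ⊔ (x ⊓ jᶜ), ?_, ?_⟩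
    (hmono φ) (hmono φ.symm), fun x => rfl⟩
  · intro x
    exact key φ hj x
  · intro x
    have := key φ.symm hj' x
    simpa using this

end HereditaryAux

section HereditaryAux2

variable {μ : B → S}

/-- Glue an automorphism fixing `j` and preserving `μ` below `j` with the identity
outside `j`, obtaining a globally `μ`-preserving automorphism agreeing with `φ` below `j`. -/
private lemma glue_full (hμ : IsBAMeasure μ) (φ : B ≃o B) (j : B) (hj : φ j = j)
    (hpres : ∀ x ≤ j, μ (φ x) = μ x) :
    ∃ g : B ≃o B, PreservesMeas μ g ∧ ∀ x ≤ j, g x = φ x := by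
  obtain ⟨g, hg⟩ := glue_exists φ j hj
  refine ⟨g, ?_, ?_⟩
  · intro x
    rw [hg]
    have h1 : φ (x ⊓ j) ≤ j := le_of_le_of_eq (φ.monotone inf_le_right) hj
    have hd : Disjoint (φ (x ⊓ j)) (x ⊓ jᶜ) :=
      disjoint_compl_right.mono h1 inf_le_right
    rw [hμ.2 _ _ hd, hpres _ inf_le_right, ← measSplit hμ j x]
  · intro x hx
    rw [hg, inf_eq_left.mpr hx, disjoint_iff.mp (disjoint_compl_right.mono_left hx), sup_bot_eq]

/-- The swap automorphism: exchange `A` and `ψ A` along `ψ`, identity elsewhere. -/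
private lemma swap_exists (hμ : IsBAMeasure μ) (ψ : B ≃o B) (hψ : PreservesMeas μ ψ)
    (A j : B) (hd : Disjoint A (ψ A)) (hAj : A ≤ j) (hDj : ψ A ≤ j) :
    ∃ σ : B ≃o B, PreservesMeas μ σ ∧ σ j = j ∧
      ∀ x, σ x = (x ⊓ (A ⊔ ψ A)ᶜ) ⊔ ψ (x ⊓ A) ⊔ ψ.symm (x ⊓ ψ A) := by
  set D := ψ A with hD
  have hsymmD : ψ.symm D = A := ψ.symm_apply_apply A
  set T : B → B := fun x => (x ⊓ (A ⊔ D)ᶜ) ⊔ ψ (x ⊓ A) ⊔ ψ.symm (x ⊓ D) with hT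
  -- basic bounds for the three pieces
  have hr : ∀ x, x ⊓ (A ⊔ D)ᶜ ≤ (A ⊔ D)ᶜ := fun x => inf_le_right
  have hp : ∀ x, ψ (x ⊓ A) ≤ D := fun x => ψ.monotone inf_le_right
  have hq : ∀ x, ψ.symm (x ⊓ D) ≤ A := fun x =>
    le_of_le_of_eq (ψ.symm.monotone inf_le_right) hsymmD
  have hcA : Disjoint ((A ⊔ D)ᶜ) A := disjoint_compl_left.mono_right le_sup_left
  have hcD : Disjoint ((A ⊔ D)ᶜ) D := disjoint_compl_left.mono_right le_sup_right
  -- projections of `T x`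
  have projA : ∀ x, T x ⊓ A = ψ.symm (x ⊓ D) := fun x =>
    sup3_inf (hcA.mono_left (hr x)) (hd.symm.mono_left (hp x)) (hq x)
  have projD : ∀ x, T x ⊓ D = ψ (x ⊓ A) := by
    intro x
    have : (x ⊓ (A ⊔ D)ᶜ) ⊔ ψ (x ⊓ A) ⊔ ψ.symm (x ⊓ D) =
        (x ⊓ (A ⊔ D)ᶜ) ⊔ ψ.symm (x ⊓ D) ⊔ ψ (x ⊓ A) := by ac_rfl
    rw [hT]
    simp only
    rw [this]
    exact sup3_inf (hcD.mono_left (hr x)) (hd.mono_left (hq x)) (hp x)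
  have projC : ∀ x, T x ⊓ (A ⊔ D)ᶜ = x ⊓ (A ⊔ D)ᶜ := by
    intro x
    have : (x ⊓ (A ⊔ D)ᶜ) ⊔ ψ (x ⊓ A) ⊔ ψ.symm (x ⊓ D) =
        ψ (x ⊓ A) ⊔ ψ.symm (x ⊓ D) ⊔ (x ⊓ (A ⊔ D)ᶜ) := by ac_rfl
    rw [hT]
    simp only
    rw [this]
    exact sup3_inf (hcD.symm.mono_left (hp x)) (hcA.symm.mono_left (hq x)) (hr x)
  have htop : (A ⊔ D)ᶜ ⊔ D ⊔ A = ⊤ := by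
    rw [sup_assoc, sup_comm D A, compl_sup_eq_top]
  have hdecomp : ∀ x : B, (x ⊓ (A ⊔ D)ᶜ) ⊔ (x ⊓ D) ⊔ (x ⊓ A) = x := by
    intro x
    rw [← inf_sup_left, ← inf_sup_left, htop, inf_top_eq]
  have hinv : ∀ x, T (T x) = x := by
    intro x
    have : T (T x) = (T x ⊓ (A ⊔ D)ᶜ) ⊔ ψ (T x ⊓ A) ⊔ ψ.symm (T x ⊓ D) := rfl
    rw [this, projA, projD, projC, ψ.apply_symm_apply, ψ.symm_apply_apply, hdecomp]
  have hmono : Monotone T := by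
    intro x y hxy
    exact sup_le_sup (sup_le_sup (inf_le_inf_right _ hxy)
      (ψ.monotone (inf_le_inf_right _ hxy))) (ψ.symm.monotone (inf_le_inf_right _ hxy))
  refine ⟨Equiv.toOrderIso ⟨T, T, hinv, hinv⟩ hmono hmono, ?_, ?_, fun x => rfl⟩
  · -- measure preservation
    intro x
    have hTx : (Equiv.toOrderIso ⟨T, T, hinv, hinv⟩ hmono hmono) x = T x := rfl
    have d1 : Disjoint (x ⊓ (A ⊔ D)ᶜ) (ψ (x ⊓ A)) := hcD.mono (hr x) (hp x)
    have d2 : Disjoint (x ⊓ (A ⊔ D)ᶜ) (ψ.symm (x ⊓ D)) := hcA.mono (hr x) (hq x)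
    have d3 : Disjoint (ψ (x ⊓ A)) (ψ.symm (x ⊓ D)) := hd.symm.mono (hp x) (hq x)
    have e1 : Disjoint (x ⊓ (A ⊔ D)ᶜ) (x ⊓ D) := hcD.mono (hr x) inf_le_right
    have e2 : Disjoint (x ⊓ (A ⊔ D)ᶜ) (x ⊓ A) := hcA.mono (hr x) inf_le_right
    have e3 : Disjoint (x ⊓ D) (x ⊓ A) := hd.symm.mono inf_le_right inf_le_right
    rw [hTx, hT]
    simp only
    rw [measSup3 hμ d1 d2 d3, hψ, preserves_symm hψ]
    conv_rhs => rw [← hdecomp x, measSup3 hμ e1 e2 e3]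
    ac_rfl
  · -- fixes j
    have : T j = (j ⊓ (A ⊔ D)ᶜ) ⊔ ψ (j ⊓ A) ⊔ ψ.symm (j ⊓ D) := rfl
    have hjA : j ⊓ A = A := inf_eq_right.mpr hAj
    have hjD : j ⊓ D = D := inf_eq_right.mpr hDj
    show T j = j
    have h4 : j ⊓ (A ⊔ D)ᶜ ⊔ (A ⊔ D) = j := by
      rw [← sdiff_eq]
      exact sdiff_sup_cancel (sup_le hAj hDj)
    rw [this, hjA, hjD, hsymmD, ← hD, sup_assoc, sup_comm D A, h4]

end HereditaryAux2

/-- the action of `Aut(μ)` is transitive (resp. minimal) iff for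
every proper `j` the action of `Aut(μ ↾ j)` on `B ↾ j` is transitive
(resp. minimal). -/
theorem transitive_minimal_hereditary [Countable B] [Nontrivial B]
    (hatomless : ∀ a : B, a ≠ ⊥ → ∃ b : B, b ≠ ⊥ ∧ b < a)
    (μ : B → S) (hμ : IsBAMeasure μ) :
    (ActsTransitively μ ↔ ∀ j : B, IsProperElem j → ActsTransitivelyOn μ j) ∧
    (ActsMinimally μ ↔ ∀ j : B, IsProperElem j → ActsMinimallyOn μ j) := by
  constructor
  · constructor
    · -- transitivity is inherited by relative algebras
      intro htrans j hj a b haj hbj ha0 hanej hb0 hbnej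
      by_cases hab : a ⊓ b = ⊥
      · have hap : IsProperElem a := ⟨ha0, fun h => hj.2 (top_unique (h ▸ haj))⟩
        have hbp : IsProperElem b := ⟨hb0, fun h => hj.2 (top_unique (h ▸ hbj))⟩
        obtain ⟨ψ, hψ, hne⟩ := htrans a b hap hbp
        set c := ψ a ⊓ b with hc
        set A := ψ.symm c with hA
        have hca : c ≤ ψ a := inf_le_left
        have hcb : c ≤ b := inf_le_right
        have hAa : A ≤ a := by
          have := ψ.symm.monotone hca
          rwa [ψ.symm_apply_apply] at this
        have hψA : ψ A = c := ψ.apply_symm_apply c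
        have hdAc : Disjoint A (ψ A) := by
          rw [hψA]
          exact (disjoint_iff.mpr hab).mono hAa hcb
        obtain ⟨σ, hσpres, hσj, hσeq⟩ := swap_exists hμ ψ hψ A j hdAc (hAa.trans haj)
          (by rw [hψA]; exact hcb.trans hbj)
        refine ⟨σ, fun x _ => hσpres x, hσj, ?_⟩
        have h1 : c ≤ σ a := by
          have hc' : ψ (a ⊓ A) = c := by rw [inf_eq_right.mpr hAa, hψA]
          rw [hσeq a]
          calc c = ψ (a ⊓ A) := hc'.symm
            _ ≤ _ := le_sup_right.trans le_sup_left
        intro h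
        apply hne
        exact le_bot_iff.mp ((le_inf h1 hcb).trans h.le)
      · exact ⟨OrderIso.refl B, fun x _ => rfl, rfl, hab⟩
    · -- transitivity is implied by relative transitivity
      intro hloc a b hap hbp
      by_cases hab : a ⊓ b = ⊥
      · obtain ⟨e, he0, helt⟩ := hatomless b hbp.1
        have heb : e ≤ b := helt.le
        set j := a ⊔ e with hjdef
        have haj : a ≤ j := le_sup_left
        have hej : e ≤ j := le_sup_right
        have hj0 : j ≠ ⊥ := fun h => hap.1 (le_bot_iff.mp (haj.trans h.le))
        have hjtop : j ≠ ⊤ := by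
          intro h
          apply helt.ne
          have hb : b = b ⊓ j := (inf_eq_left.mpr (le_top.trans h.symm.le)).symm
          rw [hb, hjdef, inf_sup_left, inf_comm b a, hab, inf_eq_right.mpr heb, bot_sup_eq]
        have hanej : a ≠ j := by
          intro h
          apply he0
          have h1 : e ≤ a := by rw [h]; exact le_sup_right
          have h2 : e ≤ a ⊓ b := le_inf h1 heb
          rw [hab] at h2
          exact le_bot_iff.mp h2
        have henej : e ≠ j := by
          intro h
          apply hap.1
          have h1 : a ≤ e := by rw [h]; exact le_sup_left
          have h2 : a ≤ a ⊓ b := le_inf le_rfl (h1.trans heb)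
          rw [hab] at h2
          exact le_bot_iff.mp h2
        obtain ⟨φ, hφpres, hφj, hφne⟩ := hloc j ⟨hj0, hjtop⟩ a e haj hej hap.1 hanej he0 henej
        obtain ⟨g, hgpres, hgeq⟩ := glue_full hμ φ j hφj hφpres
        refine ⟨g, hgpres, ?_⟩
        rw [hgeq a haj]
        intro h
        apply hφne
        exact le_bot_iff.mp ((le_inf inf_le_left (inf_le_right.trans heb)).trans h.le)
      · exact ⟨OrderIso.refl B, fun x => rfl, hab⟩
  · constructor
    · -- minimality is inherited by relative algebras
      intro hmin j hj a haj ha0 hanej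
      have hap : IsProperElem a := ⟨ha0, fun h => hj.2 (top_unique (h ▸ haj))⟩
      obtain ⟨n, ψ, hψ, hsup⟩ := hmin a hap
      set D : Fin n → B := fun i => (ψ i a ⊓ j) ⊓ aᶜ with hDdef
      set A : Fin n → B := fun i => (ψ i).symm (D i) with hAdef
      have hDa : ∀ i, D i ≤ ψ i a := fun i => inf_le_left.trans inf_le_left
      have hDj : ∀ i, D i ≤ j := fun i => inf_le_left.trans inf_le_right
      have hDac : ∀ i, D i ≤ aᶜ := fun i => inf_le_right
      have hAa : ∀ i, A i ≤ a := by
        intro i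
        have := (ψ i).symm.monotone (hDa i)
        rwa [(ψ i).symm_apply_apply] at this
      have hψA : ∀ i, ψ i (A i) = D i := fun i => (ψ i).apply_symm_apply _
      have hdis : ∀ i, Disjoint (A i) (ψ i (A i)) := fun i => by
        rw [hψA i]; exact disjoint_compl_right.mono (hAa i) (hDac i)
      choose σ hσpres hσj hσeq using fun i =>
        swap_exists hμ (ψ i) (hψ i) (A i) j (hdis i) ((hAa i).trans haj)
          (by rw [hψA i]; exact hDj i)
      set Φ : Fin (n + 1) → B ≃o B := Fin.cons (OrderIso.refl B) σ with hΦdef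
      have hΦ0 : Φ 0 = OrderIso.refl B := rfl
      have hΦs : ∀ k : Fin n, Φ k.succ = σ k := fun k => Fin.cons_succ _ _ _
      refine ⟨n + 1, Φ, ?_, ?_⟩
      · intro i
        refine Fin.cases ?_ ?_ i
        · exact ⟨fun x _ => rfl, rfl⟩
        · intro k
          rw [hΦs k]
          exact ⟨fun x _ => hσpres k x, hσj k⟩
      · apply le_antisymm
        · apply Finset.sup_le
          intro i _
          refine Fin.cases ?_ ?_ i
          · rw [hΦ0]; simpa using haj
          · intro k
            rw [hΦs k, hσeq k a]
            have h1 : a ⊓ (A k ⊔ ψ k (A k))ᶜ ≤ j := inf_le_left.trans haj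
            have h2 : ψ k (a ⊓ A k) ≤ j := by
              refine le_trans ((ψ k).monotone inf_le_right) ?_
              rw [hψA k]; exact hDj k
            have h3 : (ψ k).symm (a ⊓ ψ k (A k)) ≤ j := by
              refine le_trans ((ψ k).symm.monotone inf_le_right) ?_
              rw [(ψ k).symm_apply_apply]
              exact (hAa k).trans haj
            exact sup_le (sup_le h1 h2) h3
        · have h0 : (j : B) = Finset.univ.sup (fun i => j ⊓ ψ i a) := by
            rw [← Finset.sup_inf_distrib_left, hsup, inf_top_eq]
          conv_lhs => rw [h0]
          apply Finset.sup_le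
          intro i _
          have hsplit : j ⊓ ψ i a ≤ a ⊔ D i := by
            have hx : j ⊓ ψ i a = ((j ⊓ ψ i a) ⊓ a) ⊔ ((j ⊓ ψ i a) ⊓ aᶜ) := by
              rw [← inf_sup_left, sup_compl_eq_top, inf_top_eq]
            rw [hx]
            refine sup_le_sup inf_le_right (le_of_eq ?_)
            rw [hDdef]
            simp only
            rw [inf_comm j (ψ i a)]
          refine hsplit.trans (sup_le ?_ ?_)
          · have h1 : Φ 0 a = a := rfl
            calc a = _ := h1.symm
              _ ≤ _ := Finset.le_sup (f := fun i => Φ i a) (Finset.mem_univ 0)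
          · have h1 : D i ≤ σ i a := by
              rw [hσeq i a]
              have hc' : ψ i (a ⊓ A i) = D i := by rw [inf_eq_right.mpr (hAa i), hψA i]
              calc D i = ψ i (a ⊓ A i) := hc'.symm
                _ ≤ _ := le_sup_right.trans le_sup_left
            have h2 : σ i a = Φ i.succ a := by rw [hΦs i]
            exact h1.trans (h2.le.trans (Finset.le_sup (f := fun k => Φ k a)
              (Finset.mem_univ i.succ)))
    · -- minimality is implied by relative minimality
      intro hloc a hap
      obtain ⟨e, he0, helt⟩ := hatomless aᶜ (fun h => hap.2 (compl_eq_bot.mp h))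
      have heac : e ≤ aᶜ := helt.le
      set j1 := a ⊔ e with hj1def
      have ha_j1 : a ≤ j1 := le_sup_left
      have hj1bot : j1 ≠ ⊥ := fun h => hap.1 (le_bot_iff.mp (ha_j1.trans h.le))
      have hj1top : j1 ≠ ⊤ := by
        intro h
        apply helt.ne
        have hb : aᶜ = aᶜ ⊓ j1 := (inf_eq_left.mpr (le_top.trans h.symm.le)).symm
        rw [hb, hj1def, inf_sup_left, inf_comm aᶜ a, inf_compl_eq_bot,
          inf_eq_right.mpr heac, bot_sup_eq]
      have ha_ne_j1 : a ≠ j1 := by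
        intro h
        apply he0
        have h1 : e ≤ a := by rw [h]; exact le_sup_right
        have h2 : e ≤ a ⊓ aᶜ := le_inf h1 heac
        rw [inf_compl_eq_bot] at h2
        exact le_bot_iff.mp h2
      have hj2bot : (eᶜ : B) ≠ ⊥ := by
        intro h
        apply hap.1
        have h1 : e = ⊤ := compl_eq_bot.mp h
        have h2 : (⊤ : B) ≤ aᶜ := h1 ▸ heac
        rw [← compl_compl a, top_le_iff.mp h2, compl_top]
      have hj2top : (eᶜ : B) ≠ ⊤ := fun h => he0 (compl_eq_top.mp h)
      have ha_j2 : a ≤ eᶜ := by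
        have := compl_le_compl heac
        rwa [compl_compl] at this
      have ha_ne_j2 : a ≠ eᶜ := by
        intro h
        apply helt.ne
        rw [h, compl_compl]
      obtain ⟨n1, φ1, hφ1, hsup1⟩ := hloc j1 ⟨hj1bot, hj1top⟩ a ha_j1 hap.1 ha_ne_j1
      obtain ⟨n2, φ2, hφ2, hsup2⟩ := hloc eᶜ ⟨hj2bot, hj2top⟩ a ha_j2 hap.1 ha_ne_j2
      choose g1 hg1pres hg1eq using fun i =>
        glue_full hμ (φ1 i) j1 (hφ1 i).2 (hφ1 i).1
      choose g2 hg2pres hg2eq using fun i =>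
        glue_full hμ (φ2 i) eᶜ (hφ2 i).2 (hφ2 i).1
      refine ⟨n1 + n2, Fin.append g1 g2, ?_, ?_⟩
      · intro i
        refine Fin.addCases ?_ ?_ i
        · intro k
          simp only [Fin.append_left]
          exact hg1pres k
        · intro k
          simp only [Fin.append_right]
          exact hg2pres k
      · apply le_antisymm le_top
        have htop2 : (⊤ : B) ≤ j1 ⊔ eᶜ := by
          rw [← sup_compl_eq_top (x := e)]
          exact sup_le_sup_right le_sup_right eᶜ
        refine htop2.trans (sup_le ?_ ?_)
        · rw [← hsup1]
          apply Finset.sup_le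
          intro i _
          rw [← hg1eq i a ha_j1]
          calc g1 i a = Fin.append g1 g2 (Fin.castAdd n2 i) a := by rw [Fin.append_left]
            _ ≤ _ := Finset.le_sup (f := fun k : Fin (n1 + n2) => (Fin.append g1 g2 k : B ≃o B) a)
              (Finset.mem_univ (Fin.castAdd n2 i))
        · rw [← hsup2]
          apply Finset.sup_le
          intro i _
          rw [← hg2eq i a ha_j2]
          calc g2 i a = Fin.append g1 g2 (Fin.natAdd n1 i) a := by rw [Fin.append_right]
            _ ≤ _ := Finset.le_sup (f := fun k : Fin (n1 + n2) => (Fin.append g1 g2 k : B ≃o B) a)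
              (Finset.mem_univ (Fin.natAdd n1 i))
end

section
/- Let μ be a solid S-valued measure on 𝔹 (homogeneous, with Aut(μ) acting transitively). Then for any two proper elements a, b of 𝔹 there exists φ ∈ Aut(μ) such that each of φ(a)∧b, φ(a)∖b, b∖φ(a), and 1∖(φ(a)∨b) is nonzero. -/
variable {B : Type*} [BooleanAlgebra B] {S : Type*} [AddCommMonoid S]

/-- `μ` is solid: homogeneous and `Aut(μ)` acts transitively. -/
def MeasSolid (μ : B → S) : Prop := MeasHomogeneous μ ∧ ActsTransitively μ


section SolidAux

lemma solidAux_map_compl (φ : B ≃o B) (x : B) : φ xᶜ = (φ x)ᶜ :=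
  ((φ.isCompl isCompl_compl).compl_eq).symm

lemma solidAux_inf_ne_bot {x y t : B} (ht : t ≠ ⊥) (h1 : t ≤ x) (h2 : t ≤ y) : x ⊓ y ≠ ⊥ :=
  fun h => ht (le_bot_iff.mp ((le_inf h1 h2).trans h.le))

lemma solidAux_swap_compl {z u v : B} (hu : u ≤ z) (hv : v ≤ zᶜ) :
    ((z \ u) ⊔ v)ᶜ = (zᶜ \ v) ⊔ u := by
  have hd : ((z \ u) ⊔ v) ⊓ ((zᶜ \ v) ⊔ u) = ⊥ := by
    rw [← disjoint_iff, disjoint_sup_left, disjoint_sup_right, disjoint_sup_right]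
    exact ⟨⟨disjoint_compl_right.mono sdiff_le sdiff_le, disjoint_sdiff_self_left⟩,
      disjoint_sdiff_self_right, disjoint_compl_left.mono hv hu⟩
  have hs : ((z \ u) ⊔ v) ⊔ ((zᶜ \ v) ⊔ u) = ⊤ := by
    apply le_antisymm le_top
    have h1 : z ≤ ((z \ u) ⊔ v) ⊔ ((zᶜ \ v) ⊔ u) := by
      conv_lhs => rw [← sdiff_sup_cancel hu]
      exact sup_le (le_sup_left.trans le_sup_left) (le_sup_right.trans le_sup_right)
    have h2 : zᶜ ≤ ((z \ u) ⊔ v) ⊔ ((zᶜ \ v) ⊔ u) := by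
      conv_lhs => rw [← sdiff_sup_cancel hv]
      exact sup_le (le_sup_left.trans le_sup_right) (le_sup_right.trans le_sup_left)
    calc (⊤ : B) = z ⊔ zᶜ := sup_compl_eq_top.symm
    _ ≤ _ := sup_le h1 h2
  exact (IsCompl.of_eq hd hs).compl_eq

lemma solidAux_swap_meas (μ : B → S) (hμ : IsBAMeasure μ) {z u v : B}
    (hu : u ≤ z) (hv : v ≤ zᶜ) (huv : μ u = μ v) :
    μ ((z \ u) ⊔ v) = μ z ∧ μ (((z \ u) ⊔ v)ᶜ) = μ zᶜ := by
  obtain ⟨-, hadd⟩ := hμ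
  constructor
  · have h1 : μ ((z \ u) ⊔ v) = μ (z \ u) + μ v :=
      hadd _ _ (disjoint_compl_right.mono sdiff_le hv)
    have h2 : μ z = μ (z \ u) + μ u := by
      conv_lhs => rw [← sdiff_sup_cancel hu]
      exact hadd _ _ disjoint_sdiff_self_left
    rw [h1, h2, huv]
  · rw [solidAux_swap_compl hu hv]
    have h1 : μ ((zᶜ \ v) ⊔ u) = μ (zᶜ \ v) + μ u :=
      hadd _ _ (disjoint_compl_left.mono sdiff_le hu)
    have h2 : μ zᶜ = μ (zᶜ \ v) + μ v := by
      conv_lhs => rw [← sdiff_sup_cancel hv]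
      exact hadd _ _ disjoint_sdiff_self_left
    rw [h1, h2, huv]

/-- Core step: if a "swapped" element `(z \ u) ⊔ v` is in general position w.r.t. `b`,
then homogeneity produces the desired automorphism. -/
lemma solidAux_core (μ : B → S) (hμ : IsBAMeasure μ) (hhom : MeasHomogeneous μ)
    {a b z u v : B} (ha : IsProperElem a)
    (hza : μ z = μ a) (hzca : μ zᶜ = μ aᶜ)
    (hu : u ≤ z) (hv : v ≤ zᶜ) (huv : μ u = μ v)
    (h1 : ((z \ u) ⊔ v) ⊓ b ≠ ⊥) (h2 : ((z \ u) ⊔ v) ⊓ bᶜ ≠ ⊥)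
    (h3 : ((z \ u) ⊔ v)ᶜ ⊓ b ≠ ⊥) (h4 : ((z \ u) ⊔ v)ᶜ ⊓ bᶜ ≠ ⊥) :
    ∃ φ : B ≃o B, PreservesMeas μ φ ∧ φ a ⊓ b ≠ ⊥ ∧ φ a ⊓ bᶜ ≠ ⊥ ∧
      (φ a)ᶜ ⊓ b ≠ ⊥ ∧ (φ a)ᶜ ⊓ bᶜ ≠ ⊥ := by
  have hwb : (z \ u) ⊔ v ≠ ⊥ := fun h => h1 (by rw [h, bot_inf_eq])
  have hwt : (z \ u) ⊔ v ≠ ⊤ := fun h => h3 (by rw [h, compl_top, bot_inf_eq])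
  obtain ⟨hm, hmc⟩ := solidAux_swap_meas μ hμ hu hv huv
  obtain ⟨φ, hφ, hφa⟩ := hhom a ((z \ u) ⊔ v) ha ⟨hwb, hwt⟩
    ((hm.trans hza).symm) ((hmc.trans hzca).symm)
  refine ⟨φ, hφ, ?_, ?_, ?_, ?_⟩ <;> rw [hφa]
  exacts [h1, h2, h3, h4]

/-- Fixing the case where `z` straddles `b` but `b ≤ z`. -/
lemma solidAux_fix (hatomless : ∀ a : B, a ≠ ⊥ → ∃ b : B, b ≠ ⊥ ∧ b < a)
    (μ : B → S) (hμ : IsBAMeasure μ) (hhom : MeasHomogeneous μ)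
    (htrans : ActsTransitively μ)
    {a b z : B} (ha : IsProperElem a) (hb : IsProperElem b) (hz : IsProperElem z)
    (hza : μ z = μ a) (hzca : μ zᶜ = μ aᶜ) (hble : b ≤ z) (hzbc : z ⊓ bᶜ ≠ ⊥) :
    ∃ φ : B ≃o B, PreservesMeas μ φ ∧ φ a ⊓ b ≠ ⊥ ∧ φ a ⊓ bᶜ ≠ ⊥ ∧
      (φ a)ᶜ ⊓ b ≠ ⊥ ∧ (φ a)ᶜ ⊓ bᶜ ≠ ⊥ := by
  have hzc : IsProperElem zᶜ :=
    ⟨fun h => hz.2 (compl_eq_bot.mp h), fun h => hz.1 (compl_eq_top.mp h)⟩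
  obtain ⟨θ, hθ, hθb⟩ := htrans b zᶜ hb hzc
  obtain ⟨v, hvne, hvlt⟩ := hatomless (θ b ⊓ zᶜ) hθb
  have hθu : θ (θ.symm v) = v := θ.apply_symm_apply v
  set u := θ.symm v with hudef
  have hvltb : v < θ b := hvlt.trans_le inf_le_left
  have hub : u ≤ b := by
    have h := θ.symm.monotone hvltb.le
    rwa [θ.symm_apply_apply] at h
  have hune : u ≠ ⊥ := fun h => hvne (by rw [← hθu, h, map_bot])
  have hunb : u ≠ b := by
    intro h
    rw [← hθu, h] at hvltb
    exact lt_irrefl _ hvltb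
  have huz : u ≤ z := hub.trans hble
  have hvzc : v ≤ zᶜ := hvlt.le.trans inf_le_right
  have huv : μ u = μ v := by rw [← hθu]; exact (hθ u).symm
  apply solidAux_core μ hμ hhom ha hza hzca huz hvzc huv
  · -- witness b \ u
    refine solidAux_inf_ne_bot (t := b \ u) ?_ ?_ sdiff_le
    · exact fun h => hunb (le_antisymm hub (sdiff_eq_bot_iff.mp h))
    · exact (sdiff_le_sdiff_right hble).trans le_sup_left
  · -- witness z ⊓ bᶜ
    refine solidAux_inf_ne_bot (t := z ⊓ bᶜ) hzbc ?_ inf_le_right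
    refine le_trans ?_ le_sup_left
    rw [sdiff_eq]
    exact le_inf inf_le_left (inf_le_right.trans (compl_le_compl hub))
  · -- witness u
    refine solidAux_inf_ne_bot (t := u) hune ?_ hub
    rw [solidAux_swap_compl huz hvzc]
    exact le_sup_right
  · -- witness (θ b ⊓ zᶜ) \ v
    refine solidAux_inf_ne_bot (t := (θ b ⊓ zᶜ) \ v) ?_ ?_ ?_
    · exact fun h => hvlt.not_ge (sdiff_eq_bot_iff.mp h)
    · rw [solidAux_swap_compl huz hvzc]
      exact (sdiff_le_sdiff_right inf_le_right).trans le_sup_left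
    · exact sdiff_le.trans (inf_le_right.trans (compl_le_compl hble))

/-- Handling an orbit element `z` that straddles `b`. -/
lemma solidAux_straddle (hatomless : ∀ a : B, a ≠ ⊥ → ∃ b : B, b ≠ ⊥ ∧ b < a)
    (μ : B → S) (hμ : IsBAMeasure μ) (hhom : MeasHomogeneous μ)
    (htrans : ActsTransitively μ)
    {a b z : B} (ha : IsProperElem a) (hb : IsProperElem b) (hz : IsProperElem z)
    (hza : μ z = μ a) (hzca : μ zᶜ = μ aᶜ) (hzb : z ⊓ b ≠ ⊥) (hzbc : z ⊓ bᶜ ≠ ⊥) :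
    ∃ φ : B ≃o B, PreservesMeas μ φ ∧ φ a ⊓ b ≠ ⊥ ∧ φ a ⊓ bᶜ ≠ ⊥ ∧
      (φ a)ᶜ ⊓ b ≠ ⊥ ∧ (φ a)ᶜ ⊓ bᶜ ≠ ⊥ := by
  have hbc : IsProperElem bᶜ :=
    ⟨fun h => hb.2 (compl_eq_bot.mp h), fun h => hb.1 (compl_eq_top.mp h)⟩
  by_cases h3 : zᶜ ⊓ b = ⊥
  · have hble : b ≤ z := by
      have : b ⊓ zᶜ = ⊥ := by rwa [inf_comm] at h3
      rwa [← sdiff_eq, sdiff_eq_bot_iff] at this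
    exact solidAux_fix hatomless μ hμ hhom htrans ha hb hz hza hzca hble hzbc
  · by_cases h4 : zᶜ ⊓ bᶜ = ⊥
    · have hble : bᶜ ≤ z := by
        have : bᶜ ⊓ zᶜ = ⊥ := by rwa [inf_comm] at h4
        rwa [← sdiff_eq, sdiff_eq_bot_iff] at this
      obtain ⟨φ, hφ, c1, c2, c3, c4⟩ :=
        solidAux_fix hatomless μ hμ hhom htrans ha hbc hz hza hzca hble
          (by rwa [compl_compl])
      rw [compl_compl] at c2 c4
      exact ⟨φ, hφ, c2, c1, c4, c3⟩
    · obtain ⟨φ, hφ, hφa⟩ := hhom a z ha hz hza.symm hzca.symm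
      refine ⟨φ, hφ, ?_, ?_, ?_, ?_⟩ <;> rw [hφa]
      exacts [hzb, hzbc, h3, h4]

end SolidAux

/-- if `μ` is solid, then for any two proper `a`, `b` there is a
`μ`-automorphism `φ` such that `φ a ⊓ b`, `φ a \ b`, `b \ φ a` and
`(φ a ⊔ b)ᶜ` are all nonzero. -/
theorem solid_four_nonzero_pieces [Countable B] [Nontrivial B]
    (hatomless : ∀ a : B, a ≠ ⊥ → ∃ b : B, b ≠ ⊥ ∧ b < a)
    (μ : B → S) (hμ : IsBAMeasure μ) (hsolid : MeasSolid μ) :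
    ∀ a b : B, IsProperElem a → IsProperElem b →
      ∃ φ : B ≃o B, PreservesMeas μ φ ∧
        φ a ⊓ b ≠ ⊥ ∧ φ a \ b ≠ ⊥ ∧ b \ φ a ≠ ⊥ ∧ (φ a ⊔ b)ᶜ ≠ ⊥ := by
  intro a b ha hb
  obtain ⟨hhom, htrans⟩ := hsolid
  have hbc : IsProperElem bᶜ :=
    ⟨fun h => hb.2 (compl_eq_bot.mp h), fun h => hb.1 (compl_eq_top.mp h)⟩
  suffices h : ∃ φ : B ≃o B, PreservesMeas μ φ ∧ φ a ⊓ b ≠ ⊥ ∧ φ a ⊓ bᶜ ≠ ⊥ ∧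
      (φ a)ᶜ ⊓ b ≠ ⊥ ∧ (φ a)ᶜ ⊓ bᶜ ≠ ⊥ by
    obtain ⟨φ, hφ, c1, c2, c3, c4⟩ := h
    refine ⟨φ, hφ, c1, ?_, ?_, ?_⟩
    · rwa [sdiff_eq]
    · rwa [sdiff_eq, inf_comm]
    · rwa [compl_sup]
  obtain ⟨φ₁, hφ₁, hx⟩ := htrans a b ha hb
  have hμx : μ (φ₁ a) = μ a := hφ₁ a
  have hμxc : μ (φ₁ a)ᶜ = μ aᶜ := by rw [← solidAux_map_compl]; exact hφ₁ aᶜ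
  have hxprop : IsProperElem (φ₁ a) := by
    constructor
    · intro h; rw [h, bot_inf_eq] at hx; exact hx rfl
    · exact fun h => ha.2 (φ₁.injective (h.trans (OrderIso.map_top φ₁).symm))
  by_cases hxbc : φ₁ a ⊓ bᶜ = ⊥
  · -- φ₁ a ≤ b
    have hxb : φ₁ a ≤ b := by rwa [← sdiff_eq, sdiff_eq_bot_iff] at hxbc
    obtain ⟨φ₂, hφ₂, hy⟩ := htrans a bᶜ ha hbc
    by_cases hyb : φ₂ a ⊓ b = ⊥
    · -- φ₂ a ≤ bᶜ : double swap construction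
      have hybc : φ₂ a ≤ bᶜ := (disjoint_iff.mpr hyb).le_compl_right
      set θ : B ≃o B := φ₁.symm.trans φ₂ with hθdef
      have hθx : θ (φ₁ a) = φ₂ a := by
        simp [hθdef, OrderIso.trans_apply]
      have hθpres : ∀ t, μ (θ t) = μ t := by
        intro t
        have h2 : μ (φ₁ (φ₁.symm t)) = μ (φ₁.symm t) := hφ₁ _
        rw [φ₁.apply_symm_apply] at h2
        have h1 : μ (φ₂ (φ₁.symm t)) = μ (φ₁.symm t) := hφ₂ _
        simpa [hθdef, OrderIso.trans_apply] using h1.trans h2.symm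
      obtain ⟨u, hune, hult⟩ := hatomless (φ₁ a) hxprop.1
      have huz : u ≤ φ₁ a := hult.le
      have hvy : θ u < φ₂ a := by rw [← hθx]; exact θ.strictMono hult
      have hvzc : θ u ≤ (φ₁ a)ᶜ := (hvy.le.trans hybc).trans (compl_le_compl hxb)
      have huv : μ u = μ (θ u) := (hθpres u).symm
      apply solidAux_core μ hμ hhom ha hμx hμxc huz hvzc huv
      · refine solidAux_inf_ne_bot (t := φ₁ a \ u) ?_ le_sup_left (sdiff_le.trans hxb)
        exact fun h => hult.not_ge (sdiff_eq_bot_iff.mp h)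
      · have hvne : θ u ≠ ⊥ := fun h => hune (by
          have := congrArg θ.symm h
          rwa [θ.symm_apply_apply, map_bot] at this)
        exact solidAux_inf_ne_bot hvne le_sup_right (hvy.le.trans hybc)
      · refine solidAux_inf_ne_bot (t := u) hune ?_ (huz.trans hxb)
        rw [solidAux_swap_compl huz hvzc]
        exact le_sup_right
      · refine solidAux_inf_ne_bot (t := φ₂ a \ θ u) ?_ ?_ (sdiff_le.trans hybc)
        · exact fun h => hvy.not_ge (sdiff_eq_bot_iff.mp h)
        · rw [solidAux_swap_compl huz hvzc]
          exact (sdiff_le_sdiff_right (hybc.trans (compl_le_compl hxb))).trans le_sup_left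
    · -- φ₂ a straddles b
      have hμy : μ (φ₂ a) = μ a := hφ₂ a
      have hμyc : μ (φ₂ a)ᶜ = μ aᶜ := by rw [← solidAux_map_compl]; exact hφ₂ aᶜ
      have hyprop : IsProperElem (φ₂ a) := by
        constructor
        · intro h; rw [h, bot_inf_eq] at hy; exact hy rfl
        · exact fun h => ha.2 (φ₂.injective (h.trans (OrderIso.map_top φ₂).symm))
      exact solidAux_straddle hatomless μ hμ hhom htrans ha hb hyprop hμy hμyc hyb hy
  · -- φ₁ a straddles b
    exact solidAux_straddle hatomless μ hμ hhom htrans ha hb hxprop hμx hμxc hx hxbc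
end
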